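/- arXiv:1510.01844 — 4 statements merged into one kernel-verified Lean document; each statement's English description precedes it below -/
import Mathlib

section
/- Let P_X be a pmf on 𝒳 with P_X(x)>0 for all x, let W be a channel from 𝒳 to 𝒴 such that the output pmf P_Y = W P_X satisfies P_Y(y)>0 for all y, and let f:(0,∞)→ℝ be a convex function with f(1)=0 that is strictly convex at 1 and twice differentiable at 1 with f''(1)>0. Then the contraction coefficient for χ²-divergence is obtained from the contraction coefficient for the f-divergence by driving the input divergence to zero: η_{χ²}(P_X,W) = lim_{δ→0⁺} sup{ D_f(W R || W P_X) / D_f(R || P_X) : R ∈ 𝒫_𝒳, 0 < D_f(R || P_X) ≤ δ }. (The supremum is non-increasing in δ, so the limit exists and equals the infimum over δ>0 of these suprema.) -/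
/-- A probability mass function on a finite set. -/
def IsPmf {𝒳 : Type*} [Fintype 𝒳] (P : 𝒳 → ℝ) : Prop :=
  (∀ x, 0 ≤ P x) ∧ ∑ x, P x = 1

/-- A channel (column-stochastic matrix) from `𝒳` to `𝒴`: each column `W · x` is a pmf. -/
def IsChannel {𝒳 𝒴 : Type*} [Fintype 𝒳] [Fintype 𝒴] (W : 𝒴 → 𝒳 → ℝ) : Prop :=
  (∀ y x, 0 ≤ W y x) ∧ ∀ x, ∑ y, W y x = 1

/-- Action of a channel on a pmf: `(W P)(y) = ∑ₓ W(y|x) P(x)`. -/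
def chanApply {𝒳 𝒴 : Type*} [Fintype 𝒳] (W : 𝒴 → 𝒳 → ℝ) (P : 𝒳 → ℝ) : 𝒴 → ℝ :=
  fun y => ∑ x, W y x * P x

/-- `f` is strictly convex at `1`. -/
def StrictlyConvexAtOne (f : ℝ → ℝ) : Prop :=
  ∀ x y : ℝ, 0 < x → 0 < y → x ≠ y → ∀ l : ℝ, 0 < l → l < 1 →
    l * x + (1 - l) * y = 1 → f 1 < l * f x + (1 - l) * f y

/-- `f(0) := lim_{t→0⁺} f(t)`, as an extended real. -/
noncomputable def fZero (f : ℝ → ℝ) : EReal :=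
  Filter.limsup (fun t : ℝ => ((f t : ℝ) : EReal)) (nhdsWithin 0 (Set.Ioi (0 : ℝ)))

/-- `lim_{p→0⁺} p f(1/p)`, as an extended real. -/
noncomputable def fInftySlope (f : ℝ → ℝ) : EReal :=
  Filter.limsup (fun p : ℝ => ((p * f (1 / p) : ℝ) : EReal))
    (nhdsWithin 0 (Set.Ioi (0 : ℝ)))

/-- Extended-real-valued f-divergence
`D_f(R‖P) = ∑ₓ P(x) f(R(x)/P(x))`, with the conventions `f(0) = lim_{t→0⁺} f(t)`,
`0·f(0/0) = 0`, and `0·f(r/0) = r·lim_{p→0⁺} p f(1/p)`. -/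
noncomputable def fDivE {𝒳 : Type*} [Fintype 𝒳] (f : ℝ → ℝ) (R P : 𝒳 → ℝ) : EReal :=
  ∑ x, if P x = 0 then ((R x : ℝ) : EReal) * fInftySlope f
       else if R x = 0 then ((P x : ℝ) : EReal) * fZero f
       else ((P x * f (R x / P x) : ℝ) : EReal)

/-- χ²-divergence `χ²(R‖P) = ∑ₓ (R(x) − P(x))²/P(x)`. -/
noncomputable def chiSq {𝒳 : Type*} [Fintype 𝒳] (R P : 𝒳 → ℝ) : ℝ :=
  ∑ x, (R x - P x) ^ 2 / P x

/-- Contraction coefficient for χ²-divergence. -/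
noncomputable def etaChi {𝒳 𝒴 : Type*} [Fintype 𝒳] [Fintype 𝒴]
    (P : 𝒳 → ℝ) (W : 𝒴 → 𝒳 → ℝ) : ℝ :=
  sSup {r : ℝ | ∃ R : 𝒳 → ℝ, IsPmf R ∧ 0 < chiSq R P ∧
    r = chiSq (chanApply W R) (chanApply W P) / chiSq R P}

open Filter Topology Set

set_option maxHeartbeats 2000000

namespace LocApprox
section A


lemma coe_fsum {ι : Type*} (s : Finset ι) (v : ι → ℝ) :
    ((∑ i ∈ s, v i : ℝ) : EReal) = ∑ i ∈ s, ((v i : ℝ) : EReal) :=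
  map_sum (⟨⟨Real.toEReal, EReal.coe_zero⟩, EReal.coe_add⟩ : ℝ →+ EReal) v s

variable {f : ℝ → ℝ}

lemma eventually_diff (hd2 : DifferentiableAt ℝ (deriv f) 1)
    (hf2pos : 0 < deriv (deriv f) 1) :
    ∀ᶠ x in 𝓝[≠] (1:ℝ), DifferentiableAt ℝ f x := by
  set c := deriv (deriv f) 1 with hc
  set d := deriv f 1 with hd
  have hslope : Tendsto (slope (deriv f) 1) (𝓝[≠] 1) (𝓝 c) :=
    hasDerivAt_iff_tendsto_slope.1 hd2.hasDerivAt
  have h1 : ∀ᶠ x in 𝓝[≠] (1:ℝ), c/2 < slope (deriv f) 1 x :=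
    hslope.eventually (eventually_gt_nhds (by linarith))
  have h2 : ∀ᶠ x in 𝓝[≠] (1:ℝ), slope (deriv f) 1 x < 3*c/2 :=
    hslope.eventually (eventually_lt_nhds (by linarith))
  have h3 : ∀ᶠ x in 𝓝[≠] (1:ℝ), d ≠ 0 → |x - 1| < (2/3)*|d|/c := by
    rcases eq_or_ne d 0 with h | h
    · filter_upwards with x hx; exact absurd h hx
    · have : (0:ℝ) < (2/3)*|d|/c := by positivity
      filter_upwards [eventually_nhdsWithin_of_eventually_nhds
        (eventually_abs_sub_lt 1 this)] with x hx _; exact hx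
  filter_upwards [h1, h2, h3, self_mem_nhdsWithin] with x hx1 hx2 hx3 hxne
  by_contra hnd
  have hz : deriv f x = 0 := deriv_zero_of_not_differentiableAt hnd
  have hsl : slope (deriv f) 1 x = -d / (x - 1) := by
    rw [slope_def_field, hz, ← hd]; ring
  have hne : x - 1 ≠ 0 := sub_ne_zero.2 (by simpa [Set.mem_compl_iff] using hxne)
  rcases eq_or_ne d 0 with h0 | h0
  · rw [hsl, h0] at hx1; simp at hx1; linarith
  · have habs : (3:ℝ)/2*c < |slope (deriv f) 1 x| := by
      rw [hsl, abs_div, abs_neg]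
      rw [lt_div_iff₀ (abs_pos.2 hne)]
      have := hx3 h0
      have hc2 : (0:ℝ) < c := hf2pos
      calc 3/2*c*|x-1| < 3/2*c*((2/3)*|d|/c) := by
            apply mul_lt_mul_of_pos_left this (by positivity)
        _ = |d| := by field_simp
    have hpos : 0 < slope (deriv f) 1 x := lt_trans (by linarith [hf2pos]) hx1
    rw [abs_of_pos hpos] at habs
    linarith

lemma taylor_tendsto (hd1 : DifferentiableAt ℝ f 1)
    (hd2 : DifferentiableAt ℝ (deriv f) 1) (hf2pos : 0 < deriv (deriv f) 1) :
    Tendsto (fun t => (f t - f 1 - deriv f 1 * (t-1)) / (t-1)^2) (𝓝[≠] 1)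
      (𝓝 (deriv (deriv f) 1 / 2)) := by
  have hev := eventually_diff hd2 hf2pos
  apply HasDerivAt.lhopital_zero_nhdsNE (f' := fun x => deriv f x - deriv f 1)
      (g' := fun x => 2*(x-1))
  · filter_upwards [hev] with x hx
    have h1 : HasDerivAt (fun t => f t - f 1 - deriv f 1 * (t-1))
        (deriv f x - 0 - deriv f 1 * 1) x := by
      exact ((hx.hasDerivAt.sub (hasDerivAt_const x (f 1))).sub
        (((hasDerivAt_id x).sub_const 1).const_mul (deriv f 1)))
    simpa using h1
  · filter_upwards with x
    have h1 : HasDerivAt (fun t : ℝ => (t-1)^2) (2*(x-1)^1*1) x :=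
      (((hasDerivAt_id x).sub_const 1).pow 2)
    simpa using h1
  · filter_upwards [self_mem_nhdsWithin] with x hx
    have : x - 1 ≠ 0 := sub_ne_zero.2 (by simpa [Set.mem_compl_iff] using hx)
    positivity
  · have hcont : Tendsto (fun t => f t - f 1 - deriv f 1 * (t-1)) (𝓝 1) (𝓝 0) := by
      have := hd1.continuousAt.tendsto
      have h2 : Tendsto (fun t => f t - f 1 - deriv f 1 * (t-1)) (𝓝 1)
          (𝓝 (f 1 - f 1 - deriv f 1 * (1-1))) :=
        (this.sub tendsto_const_nhds).sub
          ((tendsto_id.sub_const 1).const_mul (deriv f 1))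
      simpa using h2
    exact hcont.mono_left nhdsWithin_le_nhds
  · have : Tendsto (fun t : ℝ => (t-1)^2) (𝓝 1) (𝓝 ((1-1)^2)) :=
      ((tendsto_id.sub_const 1).pow 2)
    simpa using this.mono_left nhdsWithin_le_nhds
  · have hslope : Tendsto (slope (deriv f) 1) (𝓝[≠] 1) (𝓝 (deriv (deriv f) 1)) :=
      hasDerivAt_iff_tendsto_slope.1 hd2.hasDerivAt
    have := hslope.div_const 2
    apply this.congr'
    filter_upwards [self_mem_nhdsWithin] with x hx
    have hne : x - 1 ≠ 0 := sub_ne_zero.2 (by simpa [Set.mem_compl_iff] using hx)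
    rw [slope_def_field, div_div, mul_comm]


variable {f : ℝ → ℝ}

lemma tangent (hconv : ConvexOn ℝ (Ioi 0) f) (hd1 : DifferentiableAt ℝ f 1) :
    ∀ t : ℝ, 0 < t → f 1 + deriv f 1 * (t - 1) ≤ f t := by
  intro t ht
  rcases lt_trichotomy t 1 with h | h | h
  · have hs := hconv.slope_le_deriv (mem_Ioi.2 ht) (mem_Ioi.2 one_pos) h hd1
    rw [slope_def_field] at hs
    have h1t : 0 < 1 - t := by linarith
    have := (div_le_iff₀ h1t).1 hs
    nlinarith
  · simp [h]
  · have hs := hconv.deriv_le_slope (mem_Ioi.2 one_pos) (mem_Ioi.2 ht) h hd1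
    rw [slope_def_field] at hs
    have h1t : 0 < t - 1 := by linarith
    have := (le_div_iff₀ h1t).1 hs
    nlinarith

/-- Taylor sandwich: for any `e > 0` there is `ρ ∈ (0,1/2]` such that
`|f t - d (t-1) - (c/2)(t-1)²| ≤ e (t-1)²` whenever `|t-1| ≤ ρ`. -/
lemma taylor_bound (hf1 : f 1 = 0) (hd1 : DifferentiableAt ℝ f 1)
    (hd2 : DifferentiableAt ℝ (deriv f) 1) (hf2pos : 0 < deriv (deriv f) 1)
    {e : ℝ} (he : 0 < e) :
    ∃ ρ : ℝ, 0 < ρ ∧ ρ ≤ 1/2 ∧ ∀ t : ℝ, |t - 1| ≤ ρ →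
      |f t - deriv f 1 * (t-1) - deriv (deriv f) 1/2 * (t-1)^2| ≤ e * (t-1)^2 := by
  have ht := taylor_tendsto hd1 hd2 hf2pos
  rw [Metric.tendsto_nhds] at ht
  have h2 := ht e he
  rw [Filter.eventually_iff, Metric.mem_nhdsWithin_iff] at h2
  obtain ⟨ρ₀, hρ₀, hball⟩ := h2
  refine ⟨min (ρ₀/2) (1/2), by positivity, min_le_right _ _, ?_⟩
  intro t hts
  rcases eq_or_ne t 1 with rfl | hne
  · simpa [hf1] using (by positivity : (0:ℝ) ≤ e * (1-1)^2)
  · have htd : dist t 1 < ρ₀ := by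
      rw [Real.dist_eq]
      calc |t - 1| ≤ min (ρ₀/2) (1/2) := hts
        _ ≤ ρ₀/2 := min_le_left _ _
        _ < ρ₀ := by linarith
    have := hball ⟨Metric.mem_ball.2 htd, (by simpa using hne : t ∈ ({1}ᶜ : Set ℝ))⟩
    simp only [Set.mem_setOf_eq] at this
    have hne2 : (t-1)^2 ≠ 0 := pow_ne_zero 2 (sub_ne_zero.2 hne)
    have hpos : (0:ℝ) < (t-1)^2 := lt_of_le_of_ne (sq_nonneg _) (Ne.symm hne2)
    have key : |(f t - f 1 - deriv f 1 * (t-1)) / (t-1)^2 - deriv (deriv f) 1 / 2| ≤ e :=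
      le_of_lt this
    have : |(f t - f 1 - deriv f 1 * (t-1)) / (t-1)^2 - deriv (deriv f) 1 / 2| * (t-1)^2
        ≤ e * (t-1)^2 := by
      apply mul_le_mul_of_nonneg_right key (le_of_lt hpos)
    calc |f t - deriv f 1 * (t-1) - deriv (deriv f) 1/2 * (t-1)^2|
        = |(f t - f 1 - deriv f 1 * (t-1)) / (t-1)^2 - deriv (deriv f) 1 / 2| * (t-1)^2 := by
          have hid : f t - deriv f 1 * (t-1) - deriv (deriv f) 1/2 * (t-1)^2
              = ((f t - f 1 - deriv f 1 * (t-1)) / (t-1)^2 - deriv (deriv f) 1 / 2) * (t-1)^2 := by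
            rw [sub_mul, div_mul_cancel₀ _ hne2, hf1]; ring
          rw [hid, abs_mul, abs_of_pos hpos]
      _ ≤ e * (t-1)^2 := this


lemma g_mono_right (hconv : ConvexOn ℝ (Ioi 0) f) (hf1 : f 1 = 0) {v t : ℝ}
    (h1v : 1 < v) (hvt : v ≤ t) (hgv0 : 0 ≤ f v - deriv f 1 * (v-1)) :
    f v - deriv f 1 * (v-1) ≤ f t - deriv f 1 * (t-1) := by
  rcases eq_or_lt_of_le hvt with rfl | hlt
  · exact le_rfl
  · have hv0 : (0:ℝ) < v := by linarith
    have ht0 : (0:ℝ) < t := by linarith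
    have hmono := hconv.slope_mono (mem_Ioi.2 one_pos)
    have h1 : slope f 1 v ≤ slope f 1 t :=
      hmono (⟨mem_Ioi.2 hv0, by simp; linarith⟩ : v ∈ Ioi 0 \ {1})
        (⟨mem_Ioi.2 ht0, by simp; linarith⟩ : t ∈ Ioi 0 \ {1}) (le_of_lt hlt)
    rw [slope_def_field, slope_def_field, hf1, sub_zero, sub_zero] at h1
    have hp : (0:ℝ) < v - 1 := by linarith
    have hq : (0:ℝ) < t - 1 := by linarith
    have key := (div_le_div_iff₀ hp hq).1 h1
    nlinarith [mul_nonneg hgv0 (by linarith : (0:ℝ) ≤ (t-1)-(v-1))]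

lemma g_mono_left (hconv : ConvexOn ℝ (Ioi 0) f) (hf1 : f 1 = 0) {v t : ℝ}
    (ht0 : 0 < t) (htv : t ≤ v) (hv1 : v < 1)
    (hgv0 : 0 ≤ f v - deriv f 1 * (v-1)) :
    f v - deriv f 1 * (v-1) ≤ f t - deriv f 1 * (t-1) := by
  rcases eq_or_lt_of_le htv with rfl | hlt
  · exact le_rfl
  · have hv0 : (0:ℝ) < v := by linarith
    have hmono := hconv.slope_mono (mem_Ioi.2 one_pos)
    have h1 : slope f 1 t ≤ slope f 1 v :=
      hmono (⟨mem_Ioi.2 ht0, by simp; linarith⟩ : t ∈ Ioi 0 \ {1})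
        (⟨mem_Ioi.2 hv0, by simp; linarith⟩ : v ∈ Ioi 0 \ {1}) (le_of_lt hlt)
    rw [slope_def_field, slope_def_field, hf1, sub_zero, sub_zero] at h1
    have hp : (0:ℝ) < 1 - v := by linarith
    have hq : (0:ℝ) < 1 - t := by linarith
    -- f t/(t-1) ≤ f v/(v-1), both denominators negative
    have key : f v * (1 - t) ≤ f t * (1 - v) := by
      have h2 : f t / (t-1) = -(f t / (1 - t)) := by
        rw [show t-1 = -(1-t) by ring, div_neg]
      have h3 : f v / (v-1) = -(f v / (1 - v)) := by
        rw [show v-1 = -(1-v) by ring, div_neg]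
      rw [h2, h3, neg_le_neg_iff] at h1
      exact (div_le_div_iff₀ hp hq).1 h1
    nlinarith [mul_nonneg hgv0 (by linarith : (0:ℝ) ≤ (1-t)-(1-v))]

/-- Away bound: under the sandwich on `[1-ρ,1+ρ]`,
`g t ≥ (c/2 - e) ρ'²` whenever `0 < t`, `ρ' ≤ |t-1|`, `0 < ρ' ≤ ρ`. -/
lemma away_bound (hconv : ConvexOn ℝ (Ioi 0) f) (hf1 : f 1 = 0)
    (hd1 : DifferentiableAt ℝ f 1)
    {c2 e ρ : ℝ} (hc2 : 0 < c2) (he : 0 < e) (hec : e < c2) (hρ : 0 < ρ) (hρ2 : ρ ≤ 1/2)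
    (hsand : ∀ t : ℝ, |t - 1| ≤ ρ →
      |f t - deriv f 1 * (t-1) - c2 * (t-1)^2| ≤ e * (t-1)^2)
    {ρ' : ℝ} (hρ' : 0 < ρ') (hρ'ρ : ρ' ≤ ρ) :
    ∀ t : ℝ, 0 < t → ρ' ≤ |t - 1| → (c2 - e) * ρ'^2 ≤ f t - deriv f 1 * (t-1) := by
  intro t ht hdev
  set d := deriv f 1
  set g : ℝ → ℝ := fun u => f u - d * (u - 1) with hg
  have hglb : ∀ u : ℝ, |u - 1| ≤ ρ → (c2 - e) * (u-1)^2 ≤ g u := by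
    intro u hu
    have := abs_le.1 (hsand u hu)
    simp only [hg]
    nlinarith
  have hge0 : (0:ℝ) ≤ (c2 - e) := by linarith
  rcases le_or_gt (|t-1|) ρ with hin | hout
  · calc (c2 - e) * ρ'^2 ≤ (c2 - e) * (t-1)^2 := by
          apply mul_le_mul_of_nonneg_left _ hge0
          calc ρ'^2 = |ρ'|^2 := by rw [abs_of_pos hρ']
            _ ≤ |t-1|^2 := by apply pow_le_pow_left₀ (abs_nonneg _) _ 2; rwa [abs_of_pos hρ']
            _ = (t-1)^2 := sq_abs _
      _ ≤ f t - d * (t-1) := hglb t hin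
  · have hρ'2 : (c2 - e) * ρ'^2 ≤ (c2 - e) * ρ^2 := by
      apply mul_le_mul_of_nonneg_left _ hge0
      exact pow_le_pow_left₀ (le_of_lt hρ') hρ'ρ 2
    rcases le_or_gt t 1 with hle | hgt
    · have htlt : t < 1 - ρ := by
        rw [abs_sub_comm, abs_of_nonneg (by linarith)] at hout; linarith
      have hv1 : 1 - ρ < 1 := by linarith
      have hgv : (c2 - e) * ρ^2 ≤ f (1-ρ) - d * ((1-ρ)-1) := by
        have := hglb (1-ρ) (by rw [show (1-ρ)-1 = -ρ by ring, abs_neg, abs_of_pos hρ])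
        calc (c2-e)*ρ^2 = (c2-e)*((1-ρ)-1)^2 := by ring_nf
          _ ≤ _ := this
      have := g_mono_left hconv hf1 ht (le_of_lt htlt) hv1
        (le_trans (by positivity) hgv)
      linarith
    · have htgt : 1 + ρ < t := by
        rw [abs_of_pos (by linarith)] at hout; linarith
      have hgv : (c2 - e) * ρ^2 ≤ f (1+ρ) - d * ((1+ρ)-1) := by
        have := hglb (1+ρ) (by rw [show (1+ρ)-1 = ρ by ring, abs_of_pos hρ])
        calc (c2-e)*ρ^2 = (c2-e)*((1+ρ)-1)^2 := by ring_nf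
          _ ≤ _ := this
      have := g_mono_right hconv hf1 (by linarith : (1:ℝ) < 1+ρ) (le_of_lt htgt)
        (le_trans (by positivity) hgv)
      linarith

end A
section B


variable {𝒳 𝒴 : Type*} [Fintype 𝒳] [Fintype 𝒴]

lemma chiSq_nonneg (R P : 𝒳 → ℝ) (hP : ∀ x, 0 < P x) : 0 ≤ chiSq R P :=
  Finset.sum_nonneg fun x _ => div_nonneg (sq_nonneg _) (hP x).le

lemma chiSq_eq (R P : 𝒳 → ℝ) (hP : ∀ x, 0 < P x) :
    chiSq R P = ∑ x, P x * (R x / P x - 1)^2 := by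
  apply Finset.sum_congr rfl
  intro x _
  have := (hP x).ne'
  field_simp

lemma chiSq_pos (R P : 𝒳 → ℝ) (hP : ∀ x, 0 < P x) (h : R ≠ P) : 0 < chiSq R P := by
  obtain ⟨x₀, hx₀⟩ := Function.ne_iff.1 h
  apply Finset.sum_pos' (fun x _ => div_nonneg (sq_nonneg _) (hP x).le)
  have h2 : (0:ℝ) < (R x₀ - P x₀)^2 := by
    have := sub_ne_zero.2 hx₀
    positivity
  exact ⟨x₀, Finset.mem_univ _, div_pos h2 (hP x₀)⟩

lemma chanApply_isPmf {W : 𝒴 → 𝒳 → ℝ} (hW : IsChannel W) {R : 𝒳 → ℝ} (hR : IsPmf R) :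
    IsPmf (chanApply W R) := by
  constructor
  · intro y
    exact Finset.sum_nonneg fun x _ => mul_nonneg (hW.1 y x) (hR.1 x)
  · calc (∑ y, ∑ x, W y x * R x) = ∑ x, ∑ y, W y x * R x := Finset.sum_comm
      _ = ∑ x, R x := Finset.sum_congr rfl fun x _ => by rw [← Finset.sum_mul, hW.2, one_mul]
      _ = 1 := hR.2

lemma chanApply_pos {W : 𝒴 → 𝒳 → ℝ} (hW : IsChannel W) {R : 𝒳 → ℝ} (hR : ∀ x, 0 < R x)
    {P : 𝒳 → ℝ} (hP : ∀ x, 0 ≤ P x) {y : 𝒴} (hy : 0 < chanApply W P y) :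
    0 < chanApply W R y := by
  have hex : ∃ x, 0 < W y x * P x := by
    by_contra h
    push_neg at h
    exact absurd (Finset.sum_nonpos fun x _ => h x) (not_le.2 hy)
  obtain ⟨x₀, hx₀⟩ := hex
  have hW0 : 0 < W y x₀ := by
    rcases (hW.1 y x₀).lt_or_eq with h | h
    · exact h
    · rw [← h] at hx₀; simp at hx₀
  apply Finset.sum_pos' (fun x _ => mul_nonneg (hW.1 y x) (hR x).le)
  exact ⟨x₀, Finset.mem_univ _, mul_pos hW0 (hR x₀)⟩

lemma W_le_one {W : 𝒴 → 𝒳 → ℝ} (hW : IsChannel W) (y : 𝒴) (x : 𝒳) : W y x ≤ 1 := by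
  rw [← hW.2 x]
  exact Finset.single_le_sum (fun y' _ => hW.1 y' x) (Finset.mem_univ y)

/-- Data processing inequality for χ². -/
lemma chi_dpi {W : 𝒴 → 𝒳 → ℝ} (hW : IsChannel W) {R P : 𝒳 → ℝ} (hP : ∀ x, 0 < P x) :
    chiSq (chanApply W R) (chanApply W P) ≤ chiSq R P := by
  have key : ∀ y, (chanApply W R y - chanApply W P y)^2 / chanApply W P y
      ≤ ∑ x, W y x * ((R x - P x)^2 / P x) := by
    intro y
    set T := Finset.univ.filter (fun x => W y x ≠ 0) with hT
    have hzero : ∀ x ∈ Finset.univ, x ∉ T → W y x * (R x - P x) = 0 := by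
      intro x _ hx
      simp only [hT, Finset.mem_filter, Finset.mem_univ, true_and, not_not] at hx
      rw [hx, zero_mul]
    have hzeroP : ∀ x ∈ Finset.univ, x ∉ T → W y x * P x = 0 := by
      intro x _ hx
      simp only [hT, Finset.mem_filter, Finset.mem_univ, true_and, not_not] at hx
      rw [hx, zero_mul]
    have hnum : chanApply W R y - chanApply W P y = ∑ x ∈ T, W y x * (R x - P x) := by
      have h0 : chanApply W R y - chanApply W P y = ∑ x, W y x * (R x - P x) := by
        simp only [chanApply, ← Finset.sum_sub_distrib]
        exact Finset.sum_congr rfl fun x _ => by ring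
      rw [h0]
      exact (Finset.sum_subset (Finset.subset_univ T) hzero).symm
    have hden : chanApply W P y = ∑ x ∈ T, W y x * P x :=
      (Finset.sum_subset (Finset.subset_univ T) hzeroP).symm
    have hsed := Finset.sq_sum_div_le_sum_sq_div T (fun x => W y x * (R x - P x))
      (g := fun x => W y x * P x) (fun x hx => by
        have hw : W y x ≠ 0 := by
          simpa only [hT, Finset.mem_filter, Finset.mem_univ, true_and] using hx
        exact mul_pos (lt_of_le_of_ne (hW.1 y x) (Ne.symm hw)) (hP x))
    rw [hnum, hden]
    refine le_trans hsed ?_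
    have heq : ∀ x ∈ T, (W y x * (R x - P x))^2/(W y x * P x)
        = W y x * ((R x - P x)^2/P x) := by
      intro x hx
      have hw : W y x ≠ 0 := by
        simpa only [hT, Finset.mem_filter, Finset.mem_univ, true_and] using hx
      have hp := (hP x).ne'
      field_simp
    rw [Finset.sum_congr rfl heq]
    exact Finset.sum_le_sum_of_subset_of_nonneg (Finset.subset_univ T)
      (fun x _ _ => mul_nonneg (hW.1 y x) (div_nonneg (sq_nonneg _) (hP x).le))

  unfold chiSq
  calc (∑ y, (chanApply W R y - chanApply W P y)^2 / chanApply W P y)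
      ≤ ∑ y, ∑ x, W y x * ((R x - P x)^2 / P x) :=
        Finset.sum_le_sum fun y _ => key y
    _ = ∑ x, (∑ y, W y x) * ((R x - P x)^2 / P x) := by
        rw [Finset.sum_comm]
        exact Finset.sum_congr rfl fun x _ => by rw [Finset.sum_mul]
    _ = ∑ x, (R x - P x)^2 / P x := by simp only [hW.2, one_mul]

end B
section C



variable {𝒳 : Type*} [Fintype 𝒳] {f : ℝ → ℝ}

lemma fDivE_regime {R P : 𝒳 → ℝ} (hP : ∀ i, 0 < P i) (hR : ∀ i, 0 < R i) :
    fDivE f R P = ((∑ i, P i * f (R i / P i) : ℝ) : EReal) := by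
  rw [fDivE, coe_fsum]
  exact Finset.sum_congr rfl fun i _ => by rw [if_neg (hP i).ne', if_neg (hR i).ne']

lemma sum_PF_eq {R P : 𝒳 → ℝ} (hP : ∀ i, 0 < P i)
    (hRsum : ∑ i, R i = 1) (hPsum : ∑ i, P i = 1) (d : ℝ) :
    ∑ i, P i * f (R i / P i) = ∑ i, P i * (f (R i / P i) - d * (R i / P i - 1)) := by
  have h1 : ∑ i, P i * (d * (R i / P i - 1)) = d * ((∑ i, R i) - ∑ i, P i) := by
    rw [← Finset.sum_sub_distrib, Finset.mul_sum]
    apply Finset.sum_congr rfl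
    intro i _
    have := (hP i).ne'
    field_simp
  have h2 : ∑ i, P i * (f (R i / P i) - d * (R i / P i - 1))
      = (∑ i, P i * f (R i / P i)) - ∑ i, P i * (d * (R i / P i - 1)) := by
    rw [← Finset.sum_sub_distrib]
    exact Finset.sum_congr rfl fun i _ => by ring
  rw [h2, h1, hRsum, hPsum]
  ring

/-- `fZero f ≥ m - d` given the lower bound on `(0,1/2]`. -/
lemma fZero_ge {m d : ℝ} (hbound : ∀ t : ℝ, 0 < t → t ≤ 1/2 → m + d * (t - 1) ≤ f t) :
    ((m - d : ℝ) : EReal) ≤ fZero f := by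
  have h1 : Tendsto (fun t : ℝ => ((m + d*(t-1) : ℝ) : EReal)) (𝓝[>] (0:ℝ)) (𝓝 ↑(m - d)) := by
    rw [EReal.tendsto_coe]
    have : Tendsto (fun t : ℝ => m + d*(t-1)) (𝓝 (0:ℝ)) (𝓝 (m + d*((0:ℝ)-1))) :=
      tendsto_const_nhds.add ((tendsto_id.sub_const 1).const_mul d)
    have h2 := this.mono_left (nhdsWithin_le_nhds (s := Set.Ioi (0:ℝ)))
    convert h2 using 2
    ring
  have h2 : ∀ᶠ t in 𝓝[>] (0:ℝ), ((m + d*(t-1) : ℝ) : EReal) ≤ ((f t : ℝ) : EReal) := by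
    filter_upwards [Ioc_mem_nhdsGT (by norm_num : (0:ℝ) < 1/2)] with t ht
    exact EReal.coe_le_coe_iff.2 (hbound t ht.1 ht.2)
  calc ((m - d : ℝ) : EReal) = Filter.limsup (fun t : ℝ => ((m + d*(t-1) : ℝ) : EReal))
        (𝓝[>] (0:ℝ)) := (h1.limsup_eq).symm
    _ ≤ fZero f := Filter.limsup_le_limsup h2

/-- Key lower bound: if some coordinate deviates, `fDivE` is at least `pm * m`. -/
lemma fDivE_ge_of_deviant {R P : 𝒳 → ℝ} (hP : ∀ i, 0 < P i) (hR : ∀ i, 0 ≤ R i)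
    (hRsum : ∑ i, R i = 1) (hPsum : ∑ i, P i = 1)
    {pm : ℝ} (hpm : 0 < pm) (hpmle : ∀ i, pm ≤ P i)
    {d m ρ : ℝ} (hm : 0 ≤ m) (hρ : 0 < ρ) (hρ2 : ρ ≤ 1/2)
    (htan : ∀ t : ℝ, 0 < t → d * (t - 1) ≤ f t)
    (haway : ∀ t : ℝ, 0 < t → ρ ≤ |t - 1| → m + d * (t - 1) ≤ f t)
    {x₀ : 𝒳} (hdev : R x₀ = 0 ∨ ρ ≤ |R x₀ / P x₀ - 1|) :
    ((pm * m : ℝ) : EReal) ≤ fDivE f R P := by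
  classical
  have hfz : ((m - d : ℝ) : EReal) ≤ fZero f := by
    apply fZero_ge
    intro t ht ht2
    apply haway t ht
    rw [abs_of_nonpos (by linarith)]
    linarith
  set L : 𝒳 → ℝ := fun x => d * (R x - P x) + (if x = x₀ then pm * m else 0) with hL
  have hterm : ∀ x : 𝒳, ((L x : ℝ) : EReal) ≤
      (if P x = 0 then ((R x : ℝ) : EReal) * fInftySlope f
       else if R x = 0 then ((P x : ℝ) : EReal) * fZero f
       else ((P x * f (R x / P x) : ℝ) : EReal)) := by
    intro x
    rw [if_neg (hP x).ne']
    rcases eq_or_ne (R x) 0 with hzero | hnz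
    · rw [if_pos hzero]
      have step1 : ((L x : ℝ) : EReal) ≤ ((P x * (m - d) : ℝ) : EReal) := by
        apply EReal.coe_le_coe_iff.2
        rw [hL]
        simp only [hzero]
        have h1 : pm * m ≤ P x * m := mul_le_mul_of_nonneg_right (hpmle x) hm
        rcases eq_or_ne x x₀ with rfl | hne
        · rw [if_pos rfl]; nlinarith
        · rw [if_neg hne]; nlinarith
      refine le_trans step1 ?_
      rw [EReal.coe_mul]
      exact mul_le_mul_of_nonneg_left hfz (EReal.coe_nonneg.2 (hP x).le)
    · rw [if_neg hnz]
      apply EReal.coe_le_coe_iff.2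
      have hRx : 0 < R x := lt_of_le_of_ne (hR x) (Ne.symm hnz)
      have hr : 0 < R x / P x := div_pos hRx (hP x)
      have hPx := (hP x).ne'
      rcases eq_or_ne x x₀ with rfl | hne
      · rcases hdev with h0 | hdev2
        · exact absurd h0 hnz
        · have := haway _ hr hdev2
          have h2 : P x * (m + d * (R x / P x - 1)) ≤ P x * f (R x / P x) :=
            mul_le_mul_of_nonneg_left this (hP x).le
          rw [hL]
          simp only [if_pos rfl, ite_true]
          have h3 : P x * (m + d * (R x / P x - 1)) = P x * m + d * (R x - P x) := by
            field_simp
          have h4 : pm * m ≤ P x * m := mul_le_mul_of_nonneg_right (hpmle x) hm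
          linarith
      · have := htan _ hr
        have h2 : P x * (d * (R x / P x - 1)) ≤ P x * f (R x / P x) :=
          mul_le_mul_of_nonneg_left this (hP x).le
        rw [hL]
        simp only [if_neg hne]
        have h3 : P x * (d * (R x / P x - 1)) = d * (R x - P x) := by
          field_simp
        linarith
  calc ((pm * m : ℝ) : EReal) = ((∑ x, L x : ℝ) : EReal) := by
        congr 1
        rw [hL, Finset.sum_add_distrib]
        rw [← Finset.mul_sum, Finset.sum_sub_distrib, hRsum, hPsum, Finset.sum_ite_eq']
        simp
    _ = ∑ x, ((L x : ℝ) : EReal) := coe_fsum _ _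
    _ ≤ fDivE f R P := Finset.sum_le_sum fun x _ => hterm x

end C
section D


lemma chiSq_eq' {𝒳 : Type*} [Fintype 𝒳] (R P : 𝒳 → ℝ) (hP : ∀ x, 0 < P x) :
    chiSq R P = ∑ x, P x * (R x / P x - 1)^2 := by
  apply Finset.sum_congr rfl
  intro x _
  have := (hP x).ne'
  field_simp

lemma sum_PF_eq' {𝒳 : Type*} [Fintype 𝒳] {f : ℝ → ℝ} {R P : 𝒳 → ℝ} (hP : ∀ i, 0 < P i)
    (hRsum : ∑ i, R i = 1) (hPsum : ∑ i, P i = 1) (d : ℝ) :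
    ∑ i, P i * f (R i / P i) = ∑ i, P i * (f (R i / P i) - d * (R i / P i - 1)) := by
  have h1 : ∑ i, P i * (d * (R i / P i - 1)) = d * ((∑ i, R i) - ∑ i, P i) := by
    rw [← Finset.sum_sub_distrib, Finset.mul_sum]
    apply Finset.sum_congr rfl
    intro i _
    have := (hP i).ne'
    field_simp
  have h2 : ∑ i, P i * (f (R i / P i) - d * (R i / P i - 1))
      = (∑ i, P i * f (R i / P i)) - ∑ i, P i * (d * (R i / P i - 1)) := by
    rw [← Finset.sum_sub_distrib]
    exact Finset.sum_congr rfl fun i _ => by ring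
  rw [h2, h1, hRsum, hPsum]
  ring

lemma sandwich {𝒳 : Type*} [Fintype 𝒳] {f : ℝ → ℝ} {R P : 𝒳 → ℝ} (hP : ∀ i, 0 < P i)
    (hRsum : ∑ i, R i = 1) (hPsum : ∑ i, P i = 1)
    {d c2 e ρ : ℝ}
    (hsand : ∀ t : ℝ, |t - 1| ≤ ρ → |f t - d * (t-1) - c2 * (t-1)^2| ≤ e * (t-1)^2)
    (hdev : ∀ i, |R i / P i - 1| ≤ ρ) :
    (c2 - e) * chiSq R P ≤ ∑ i, P i * f (R i / P i) ∧
    ∑ i, P i * f (R i / P i) ≤ (c2 + e) * chiSq R P := by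
  rw [sum_PF_eq' hP hRsum hPsum d, chiSq_eq' R P hP]
  constructor
  · rw [Finset.mul_sum]
    apply Finset.sum_le_sum
    intro i _
    have h := abs_le.1 (hsand _ (hdev i))
    have hPi := (hP i).le
    nlinarith [h.1, h.2]
  · rw [Finset.mul_sum]
    apply Finset.sum_le_sum
    intro i _
    have h := abs_le.1 (hsand _ (hdev i))
    have hPi := (hP i).le
    nlinarith [h.1, h.2]

lemma output_dev {𝒳 𝒴 : Type*} [Fintype 𝒳] [Fintype 𝒴] {W : 𝒴 → 𝒳 → ℝ}
    (hW : IsChannel W) {R P : 𝒳 → ℝ} (hP : ∀ x, 0 < P x) (hPsum : ∑ x, P x = 1)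
    {ρ : ℝ} (hρnn : 0 ≤ ρ) (hdev : ∀ x, |R x / P x - 1| ≤ ρ)
    {qm : ℝ} (hqm : 0 < qm) (hqmle : ∀ y, qm ≤ chanApply W P y) :
    ∀ y, |chanApply W R y / chanApply W P y - 1| ≤ ρ / qm := by
  intro y
  have hWPy : 0 < chanApply W P y := lt_of_lt_of_le hqm (hqmle y)
  have h1 : |chanApply W R y - chanApply W P y| ≤ ρ := by
    have h0 : chanApply W R y - chanApply W P y = ∑ x, W y x * (R x - P x) := by
      simp only [chanApply, ← Finset.sum_sub_distrib]
      exact Finset.sum_congr rfl fun x _ => by ring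
    rw [h0]
    calc |∑ x, W y x * (R x - P x)| ≤ ∑ x, |W y x * (R x - P x)| :=
          Finset.abs_sum_le_sum_abs _ _
      _ ≤ ∑ x, ρ * P x := by
          apply Finset.sum_le_sum
          intro x _
          rw [abs_mul, abs_of_nonneg (hW.1 y x)]
          have hW1 : W y x ≤ 1 := by
            rw [← hW.2 x]
            exact Finset.single_le_sum (fun y' _ => hW.1 y' x) (Finset.mem_univ y)
          have habs : |R x - P x| ≤ ρ * P x := by
            have h2 := hdev x
            have hPx := (hP x).ne'
            have h3 : R x - P x = P x * (R x / P x - 1) := by field_simp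
            rw [h3, abs_mul, abs_of_pos (hP x)]
            calc P x * |R x / P x - 1| ≤ P x * ρ := by
                  exact mul_le_mul_of_nonneg_left h2 (hP x).le
              _ = ρ * P x := mul_comm _ _
          calc W y x * |R x - P x| ≤ 1 * |R x - P x| :=
                mul_le_mul_of_nonneg_right hW1 (abs_nonneg _)
            _ = |R x - P x| := one_mul _
            _ ≤ ρ * P x := habs
      _ = ρ := by rw [← Finset.mul_sum, hPsum, mul_one]
  have h2 : |chanApply W R y / chanApply W P y - 1|
      = |chanApply W R y - chanApply W P y| / chanApply W P y := by
    rw [div_sub_one hWPy.ne', abs_div, abs_of_pos hWPy]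
  rw [h2]
  calc |chanApply W R y - chanApply W P y| / chanApply W P y
      ≤ ρ / chanApply W P y := div_le_div_of_nonneg_right h1 hWPy.le
    _ ≤ ρ / qm := div_le_div_of_nonneg_left hρnn hqm (hqmle y)

lemma pmf_le_one {𝒳 : Type*} [Fintype 𝒳] {R : 𝒳 → ℝ} (hR : IsPmf R) (x : 𝒳) : R x ≤ 1 :=
  hR.2 ▸ Finset.single_le_sum (fun i _ => hR.1 i) (Finset.mem_univ x)

end D

lemma coef_le {c2 e η ε : ℝ} (he : 0 < e) (h4 : ε * c2 = 4 * e)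
    (hη1 : η ≤ 1) (hε1 : ε ≤ 1) :
    (c2 + e) * η ≤ (η + ε) * (c2 - e) := by
  nlinarith [mul_le_mul_of_nonneg_right hη1 he.le, mul_le_mul_of_nonneg_right hε1 he.le]

lemma lower_coef {c2 e η ε rs : ℝ} (hc2 : 0 < c2) (he : 0 < e) (h4 : ε * c2 = 4 * e)
    (hrs1 : rs ≤ 1) (hrsgt : η - ε/2 < rs) (hε : 0 < ε) (hη1 : η ≤ 1) :
    (η - ε) * (c2 + e) ≤ rs * (c2 - e) := by
  nlinarith [mul_lt_mul_of_pos_right hrsgt hc2, mul_le_mul_of_nonneg_right hrs1 he.le,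
    mul_le_mul_of_nonneg_right hη1 he.le, mul_nonneg hε.le he.le]

end LocApprox

/-- **Theorem 1 (Local Approximation of Contraction Coefficients).**
`η_{χ²}(P_X,W) = lim_{δ→0⁺} sup { D_f(WR‖WP_X)/D_f(R‖P_X) : 0 < D_f(R‖P_X) ≤ δ }`. -/
theorem local_approximation_of_contraction_coefficients
    {𝒳 𝒴 : Type*} [Fintype 𝒳] [Fintype 𝒴]
    (hcardX : 2 ≤ Fintype.card 𝒳) (hcardY : 2 ≤ Fintype.card 𝒴)
    (f : ℝ → ℝ)
    (hconv : ConvexOn ℝ (Set.Ioi (0 : ℝ)) f)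
    (hstrict : StrictlyConvexAtOne f)
    (hf1 : f 1 = 0)
    (hd1 : DifferentiableAt ℝ f 1)
    (hd2 : DifferentiableAt ℝ (deriv f) 1)
    (hf2pos : 0 < deriv (deriv f) 1)
    (PX : 𝒳 → ℝ) (W : 𝒴 → 𝒳 → ℝ)
    (hPX : IsPmf PX) (hPXpos : ∀ x, 0 < PX x)
    (hW : IsChannel W) (hPY : ∀ y, 0 < chanApply W PX y) :
    Filter.Tendsto
      (fun δ : ℝ => sSup {q : EReal | ∃ R : 𝒳 → ℝ, IsPmf R ∧
        0 < fDivE f R PX ∧ fDivE f R PX ≤ ((δ : ℝ) : EReal) ∧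
        q = fDivE f (chanApply W R) (chanApply W PX) / fDivE f R PX})
      (nhdsWithin 0 (Set.Ioi (0 : ℝ)))
      (nhds ((etaChi PX W : ℝ) : EReal)) := by
  classical
  have hc2 : 0 < deriv (deriv f) 1 / 2 := half_pos hf2pos
  have htan' : ∀ t : ℝ, 0 < t → deriv f 1 * (t - 1) ≤ f t := by
    intro t ht
    have := LocApprox.tangent hconv hd1 t ht
    rw [hf1] at this
    linarith
  have hXne : Nonempty 𝒳 := Fintype.card_pos_iff.1 (by omega)
  have hYne : Nonempty 𝒴 := Fintype.card_pos_iff.1 (by omega)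
  obtain ⟨x₀, x₁, hx01⟩ : ∃ a b : 𝒳, a ≠ b := Fintype.exists_pair_of_one_lt_card (by omega)
  obtain ⟨xm, -, hxm⟩ := Finset.exists_min_image (Finset.univ : Finset 𝒳) PX
    ⟨x₀, Finset.mem_univ _⟩
  have hpm : 0 < PX xm := hPXpos xm
  have hpmle : ∀ x, PX xm ≤ PX x := fun x => hxm x (Finset.mem_univ x)
  have hpm1 : PX xm ≤ 1 := le_trans (hpmle x₀) (LocApprox.pmf_le_one hPX x₀)
  obtain ⟨y₀⟩ := hYne
  obtain ⟨ym, -, hym⟩ := Finset.exists_min_image (Finset.univ : Finset 𝒴) (chanApply W PX)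
    ⟨y₀, Finset.mem_univ _⟩
  have hqm : 0 < chanApply W PX ym := hPY ym
  have hqmle : ∀ y, chanApply W PX ym ≤ chanApply W PX y := fun y => hym y (Finset.mem_univ y)
  have hWPXpmf : IsPmf (chanApply W PX) := LocApprox.chanApply_isPmf hW hPX
  set S : Set ℝ := {r : ℝ | ∃ R : 𝒳 → ℝ, IsPmf R ∧ 0 < chiSq R PX ∧
      r = chiSq (chanApply W R) (chanApply W PX) / chiSq R PX} with hSdef
  have hηS : etaChi PX W = sSup S := rfl
  have hSsub : ∀ r ∈ S, 0 ≤ r ∧ r ≤ 1 := by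
    rintro r ⟨R, hR, hchi, rfl⟩
    constructor
    · exact div_nonneg (LocApprox.chiSq_nonneg _ _ hPY) hchi.le
    · rw [div_le_one hchi]
      exact LocApprox.chi_dpi hW hPXpos
  have hSne : S.Nonempty := by
    refine ⟨_, ⟨fun x => if x = x₀ then 1 else 0, ⟨fun x => by positivity, by simp⟩, ?_, rfl⟩⟩
    apply LocApprox.chiSq_pos _ _ hPXpos
    intro h
    have h1 := congrFun h x₁
    rw [if_neg (Ne.symm hx01)] at h1
    exact absurd h1.symm (hPXpos x₁).ne'
  have hSbdd : BddAbove S := ⟨1, fun r hr => (hSsub r hr).2⟩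
  have hη0 : 0 ≤ etaChi PX W := by
    obtain ⟨r, hr⟩ := hSne
    exact le_trans (hSsub r hr).1 (le_csSup hSbdd hr)
  have hη1 : etaChi PX W ≤ 1 := by
    rw [hηS]
    exact csSup_le hSne fun r hr => (hSsub r hr).2
  have hmem : ∀ R : 𝒳 → ℝ, IsPmf R → 0 < chiSq R PX →
      chiSq (chanApply W R) (chanApply W PX) ≤ etaChi PX W * chiSq R PX := by
    intro R hR hchi
    have h := le_csSup hSbdd (show _ ∈ S from ⟨R, hR, hchi, rfl⟩)
    rw [div_le_iff₀ hchi] at h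
    exact h
  obtain ⟨η, hηeq⟩ : ∃ η : ℝ, etaChi PX W = η := ⟨_, rfl⟩
  rw [hηeq] at hη0 hη1 hmem hηS ⊢
  set SE : ℝ → Set EReal := fun δ => {q : EReal | ∃ R : 𝒳 → ℝ, IsPmf R ∧
      0 < fDivE f R PX ∧ fDivE f R PX ≤ ((δ : ℝ) : EReal) ∧
      q = fDivE f (chanApply W R) (chanApply W PX) / fDivE f R PX} with hSEdef
  have key : ∀ ε : ℝ, 0 < ε → ε ≤ 1 → ∃ δ₀ : ℝ, 0 < δ₀ ∧ ∀ δ : ℝ, 0 < δ → δ ≤ δ₀ →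
      (∀ q ∈ SE δ, q ≤ ((η + ε : ℝ) : EReal)) ∧
      (∃ q ∈ SE δ, ((η - ε : ℝ) : EReal) ≤ q) := by
    intro ε hε hε1
    have he : 0 < deriv (deriv f) 1 / 2 * ε / 4 := by positivity
    set e : ℝ := deriv (deriv f) 1 / 2 * ε / 4 with hedef
    have hec : e < deriv (deriv f) 1 / 2 := by rw [hedef]; nlinarith
    obtain ⟨ρ, hρ, hρ2, hsand⟩ := LocApprox.taylor_bound hf1 hd1 hd2 hf2pos he
    set ρ'' : ℝ := min ρ (ρ * chanApply W PX ym) with hρ''def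
    have hρ''pos : 0 < ρ'' := lt_min hρ (by positivity)
    have hρ''ρ : ρ'' ≤ ρ := min_le_left _ _
    have hρ''half : ρ'' ≤ 1/2 := le_trans hρ''ρ hρ2
    have haway := LocApprox.away_bound hconv hf1 hd1 hc2 he hec hρ hρ2 hsand hρ''pos hρ''ρ
    have hm : 0 < (deriv (deriv f) 1 / 2 - e) * ρ''^2 := by
      have h1 : (0:ℝ) < deriv (deriv f) 1 / 2 - e := by linarith
      positivity
    have haway' : ∀ t : ℝ, 0 < t → ρ'' ≤ |t - 1| →
        (deriv (deriv f) 1 / 2 - e) * ρ''^2 + deriv f 1 * (t-1) ≤ f t := by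
      intro t ht hdev
      have := haway t ht hdev
      linarith
    refine ⟨PX xm * ((deriv (deriv f) 1 / 2 - e) * ρ''^2) / 2, by positivity, ?_⟩
    intro δ hδ hδ₀
    have hregime : ∀ R : 𝒳 → ℝ, IsPmf R → fDivE f R PX ≤ ((δ : ℝ) : EReal) →
        ∀ x, 0 < R x ∧ |R x / PX x - 1| < ρ'' := by
      intro R hRpmf hDle x
      by_contra hcon
      have hdev : R x = 0 ∨ ρ'' ≤ |R x / PX x - 1| := by
        rcases (hRpmf.1 x).eq_or_lt with h | h
        · exact Or.inl h.symm
        · rcases not_and_or.1 hcon with h1 | h2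
          · exact absurd h h1
          · exact Or.inr (not_lt.1 h2)
      have hge := LocApprox.fDivE_ge_of_deviant (f := f) hPXpos hRpmf.1 hRpmf.2 hPX.2
        hpm hpmle hm.le hρ''pos hρ''half htan' haway' hdev
      have hfin := le_trans hge hDle
      rw [EReal.coe_le_coe_iff] at hfin
      have hmm : 0 < PX xm * ((deriv (deriv f) 1 / 2 - e) * ρ''^2) := mul_pos hpm hm
      linarith
    constructor
    · rintro q ⟨R, hRpmf, hDpos, hDle, rfl⟩
      have hreg := hregime R hRpmf hDle
      have hRpos : ∀ x, 0 < R x := fun x => (hreg x).1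
      have hdevx : ∀ x, |R x / PX x - 1| ≤ ρ := fun x => le_trans (le_of_lt (hreg x).2) hρ''ρ
      have hDrep := LocApprox.fDivE_regime (f := f) hPXpos hRpos
      have hBb := LocApprox.sandwich hPXpos hRpmf.2 hPX.2 hsand hdevx
      have hBpos : 0 < ∑ x, PX x * f (R x / PX x) := by
        rw [hDrep] at hDpos
        exact EReal.coe_pos.1 hDpos
      have hχnn := LocApprox.chiSq_nonneg R PX hPXpos
      have hχpos : 0 < chiSq R PX := by
        rcases hχnn.eq_or_lt with h0 | h0
        · exfalso
          have h1 := hBb.2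
          rw [← h0, mul_zero] at h1
          linarith
        · exact h0
      have hWRpos : ∀ y, 0 < chanApply W R y :=
        fun y => LocApprox.chanApply_pos hW hRpos hPX.1 (hPY y)
      have hWRpmf := LocApprox.chanApply_isPmf hW hRpmf
      have hodev : ∀ y, |chanApply W R y / chanApply W PX y - 1| ≤ ρ := by
        intro y
        have h1 := LocApprox.output_dev hW hPXpos hPX.2 hρ''pos.le
          (fun x => le_of_lt (hreg x).2) hqm hqmle y
        refine le_trans h1 ?_
        rw [div_le_iff₀ hqm]
        exact min_le_right _ _
      have hNrep := LocApprox.fDivE_regime (f := f) hPY hWRpos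
      have hNb := LocApprox.sandwich hPY hWRpmf.2 hWPXpmf.2 hsand hodev
      rw [hDrep, hNrep, ← EReal.coe_div]
      apply EReal.coe_le_coe_iff.2
      rw [div_le_iff₀ hBpos]
      have hχout := hmem R hRpmf hχpos
      have hχoutnn : 0 ≤ chiSq (chanApply W R) (chanApply W PX) :=
        LocApprox.chiSq_nonneg _ _ hPY
      have step1 : ∑ y, chanApply W PX y * f (chanApply W R y / chanApply W PX y)
          ≤ (deriv (deriv f) 1 / 2 + e) * (η * chiSq R PX) :=
        le_trans hNb.2 (mul_le_mul_of_nonneg_left hχout (by linarith))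
      have hcoef : (deriv (deriv f) 1 / 2 + e) * η
          ≤ (η + ε) * (deriv (deriv f) 1 / 2 - e) := by
        exact LocApprox.coef_le he (by rw [hedef]; ring) hη1 hε1
      have step2 : (deriv (deriv f) 1 / 2 + e) * (η * chiSq R PX)
          ≤ (η + ε) * ((deriv (deriv f) 1 / 2 - e) * chiSq R PX) := by
        calc (deriv (deriv f) 1 / 2 + e) * (η * chiSq R PX)
            = ((deriv (deriv f) 1 / 2 + e) * η) * chiSq R PX := by ring
          _ ≤ ((η + ε) * (deriv (deriv f) 1 / 2 - e)) * chiSq R PX :=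
              mul_le_mul_of_nonneg_right hcoef hχpos.le
          _ = (η + ε) * ((deriv (deriv f) 1 / 2 - e) * chiSq R PX) := by ring
      have step3 : (η + ε) * ((deriv (deriv f) 1 / 2 - e) * chiSq R PX)
          ≤ (η + ε) * (∑ x, PX x * f (R x / PX x)) :=
        mul_le_mul_of_nonneg_left hBb.1 (by linarith)
      exact le_trans step1 (le_trans step2 step3)
    · have hlt : η - ε/2 < sSup S := by rw [← hηS]; linarith
      obtain ⟨rs, hrsS, hrsgt⟩ := exists_lt_of_lt_csSup hSne hlt
      have hrs01 := hSsub rs hrsS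
      obtain ⟨Rst, hRstpmf, hχstpos, hrseq⟩ := hrsS
      have hχoeq : chiSq (chanApply W Rst) (chanApply W PX) = rs * chiSq Rst PX := by
        rw [hrseq, div_mul_cancel₀ _ hχstpos.ne']
      set s : ℝ := min (ρ'' * PX xm / 2)
        (Real.sqrt (δ / ((deriv (deriv f) 1 / 2 + e) * chiSq Rst PX))) with hsdef
      have hs0 : 0 < s := by
        apply lt_min (by positivity)
        apply Real.sqrt_pos.2
        have : (0:ℝ) < deriv (deriv f) 1 / 2 + e := by linarith
        positivity
      have hs1 : s < 1 := by
        apply lt_of_le_of_lt (min_le_left _ _)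
        have h1 : ρ'' * PX xm ≤ (1/2) * 1 :=
          mul_le_mul hρ''half hpm1 hpm.le (by norm_num)
        linarith
      have hssq : (deriv (deriv f) 1 / 2 + e) * chiSq Rst PX * s^2 ≤ δ := by
        have hden : (0:ℝ) < (deriv (deriv f) 1 / 2 + e) * chiSq Rst PX := by
          have : (0:ℝ) < deriv (deriv f) 1 / 2 + e := by linarith
          positivity
        have h1 : s ≤ Real.sqrt (δ / ((deriv (deriv f) 1 / 2 + e) * chiSq Rst PX)) :=
          min_le_right _ _
        have h2 : s^2 ≤ δ / ((deriv (deriv f) 1 / 2 + e) * chiSq Rst PX) := by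
          rw [← Real.sq_sqrt (le_of_lt (div_pos hδ hden))]
          exact pow_le_pow_left₀ hs0.le h1 2
        have h3 := (le_div_iff₀ hden).1 h2
        linarith [h3, (by ring : s^2 * ((deriv (deriv f) 1 / 2 + e) * chiSq Rst PX)
          = (deriv (deriv f) 1 / 2 + e) * chiSq Rst PX * s^2)]
      set Rs : 𝒳 → ℝ := fun x => PX x + s * (Rst x - PX x) with hRsdef
      have hRspos : ∀ x, 0 < Rs x := by
        intro x
        have h1 : Rs x = (1-s) * PX x + s * Rst x := by rw [hRsdef]; ring
        rw [h1]
        have h2 := mul_nonneg hs0.le (hRstpmf.1 x)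
        have h3 : 0 < (1 - s) * PX x := mul_pos (by linarith) (hPXpos x)
        linarith
      have hRssum : ∑ x, Rs x = 1 := by
        simp only [hRsdef]
        rw [Finset.sum_add_distrib, ← Finset.mul_sum, Finset.sum_sub_distrib,
          hRstpmf.2, hPX.2]
        ring
      have hRspmf : IsPmf Rs := ⟨fun x => (hRspos x).le, hRssum⟩
      have hdevs : ∀ x, |Rs x / PX x - 1| ≤ ρ'' := by
        intro x
        have hPx := (hPXpos x).ne'
        have h1 : Rs x / PX x - 1 = s * ((Rst x - PX x)/PX x) := by
          rw [hRsdef]; field_simp; ring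
        rw [h1, abs_mul, abs_of_pos hs0]
        have h2 : |(Rst x - PX x)/PX x| ≤ 2/PX xm := by
          rw [abs_div, abs_of_pos (hPXpos x)]
          apply div_le_div₀ (by norm_num) ?_ hpm (hpmle x)
          rw [abs_le]
          constructor
          · linarith [LocApprox.pmf_le_one hRstpmf x, LocApprox.pmf_le_one hPX x,
              hRstpmf.1 x, (hPXpos x).le]
          · linarith [LocApprox.pmf_le_one hRstpmf x, LocApprox.pmf_le_one hPX x,
              hRstpmf.1 x, (hPXpos x).le]
        calc s * |(Rst x - PX x)/PX x| ≤ s * (2/PX xm) :=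
              mul_le_mul_of_nonneg_left h2 hs0.le
          _ ≤ (ρ'' * PX xm / 2) * (2/PX xm) :=
              mul_le_mul_of_nonneg_right (min_le_left _ _) (by positivity)
          _ = ρ'' := by field_simp
      have hχs_in : chiSq Rs PX = s^2 * chiSq Rst PX := by
        unfold chiSq
        rw [Finset.mul_sum]
        apply Finset.sum_congr rfl
        intro x _
        have hPx := (hPXpos x).ne'
        simp only [hRsdef]
        field_simp
        ring
      have hWRs : ∀ y, chanApply W Rs y
          = chanApply W PX y + s * (chanApply W Rst y - chanApply W PX y) := by
        intro y
        simp only [chanApply, hRsdef]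
        calc ∑ x, W y x * (PX x + s * (Rst x - PX x))
            = ∑ x, (W y x * PX x + s * (W y x * Rst x - W y x * PX x)) :=
              Finset.sum_congr rfl (fun x _ => by ring)
          _ = (∑ x, W y x * PX x) + s * ((∑ x, W y x * Rst x) - ∑ x, W y x * PX x) := by
              rw [Finset.sum_add_distrib, ← Finset.mul_sum, Finset.sum_sub_distrib]
      have hχs_out : chiSq (chanApply W Rs) (chanApply W PX)
          = s^2 * chiSq (chanApply W Rst) (chanApply W PX) := by
        unfold chiSq
        rw [Finset.mul_sum]
        apply Finset.sum_congr rfl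
        intro y _
        rw [hWRs y]
        have hy := (hPY y).ne'
        field_simp
        ring
      have hBb := LocApprox.sandwich hPXpos hRssum hPX.2 hsand
        (fun x => le_trans (hdevs x) hρ''ρ)
      have hBspos : 0 < ∑ x, PX x * f (Rs x / PX x) := by
        apply lt_of_lt_of_le ?_ hBb.1
        rw [hχs_in]
        have h1 : (0:ℝ) < deriv (deriv f) 1 / 2 - e := by linarith
        positivity
      have hBsle : (∑ x, PX x * f (Rs x / PX x)) ≤ δ := by
        refine le_trans hBb.2 ?_
        rw [hχs_in]
        calc (deriv (deriv f) 1 / 2 + e) * (s^2 * chiSq Rst PX)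
            = (deriv (deriv f) 1 / 2 + e) * chiSq Rst PX * s^2 := by ring
          _ ≤ δ := hssq
      have hWRspos : ∀ y, 0 < chanApply W Rs y :=
        fun y => LocApprox.chanApply_pos hW hRspos hPX.1 (hPY y)
      have hWRspmf := LocApprox.chanApply_isPmf hW hRspmf
      have hodevs : ∀ y, |chanApply W Rs y / chanApply W PX y - 1| ≤ ρ := by
        intro y
        have h1 := LocApprox.output_dev hW hPXpos hPX.2 hρ''pos.le hdevs hqm hqmle y
        refine le_trans h1 ?_
        rw [div_le_iff₀ hqm]
        exact min_le_right _ _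
      have hNb := LocApprox.sandwich hPY hWRspmf.2 hWPXpmf.2 hsand hodevs
      refine ⟨_, ⟨Rs, hRspmf, ?_, ?_, rfl⟩, ?_⟩
      · rw [LocApprox.fDivE_regime hPXpos hRspos]
        exact EReal.coe_pos.2 hBspos
      · rw [LocApprox.fDivE_regime hPXpos hRspos]
        exact EReal.coe_le_coe_iff.2 hBsle
      · rw [LocApprox.fDivE_regime hPXpos hRspos, LocApprox.fDivE_regime hPY hWRspos,
          ← EReal.coe_div]
        apply EReal.coe_le_coe_iff.2
        have hNs_ge : (deriv (deriv f) 1 / 2 - e)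
            * (s^2 * chiSq (chanApply W Rst) (chanApply W PX))
            ≤ ∑ y, chanApply W PX y * f (chanApply W Rs y / chanApply W PX y) := by
          rw [← hχs_out]
          exact hNb.1
        have hYge : (∑ x, PX x * f (Rs x / PX x))
            ≤ (deriv (deriv f) 1 / 2 + e) * (s^2 * chiSq Rst PX) := by
          rw [← hχs_in]
          exact hBb.2
        have hχonn : 0 ≤ chiSq (chanApply W Rst) (chanApply W PX) :=
          LocApprox.chiSq_nonneg _ _ hPY
        have hXnn : 0 ≤ (deriv (deriv f) 1 / 2 - e)
            * (s^2 * chiSq (chanApply W Rst) (chanApply W PX)) := by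
          apply mul_nonneg (by linarith)
          exact mul_nonneg (sq_nonneg _) hχonn
        have hkey2 : η - ε
            ≤ ((deriv (deriv f) 1 / 2 - e) * (s^2 * chiSq (chanApply W Rst) (chanApply W PX)))
              / ((deriv (deriv f) 1 / 2 + e) * (s^2 * chiSq Rst PX)) := by
          rw [hχoeq]
          have hrw : ((deriv (deriv f) 1 / 2 - e) * (s^2 * (rs * chiSq Rst PX)))
              / ((deriv (deriv f) 1 / 2 + e) * (s^2 * chiSq Rst PX))
              = rs * (deriv (deriv f) 1 / 2 - e) / (deriv (deriv f) 1 / 2 + e) := by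
            have h1 : (deriv (deriv f) 1 / 2 + e) ≠ 0 := ne_of_gt (by linarith)
            have h2 : chiSq Rst PX ≠ 0 := hχstpos.ne'
            have h3 : s ≠ 0 := hs0.ne'
            field_simp
          rw [hrw, le_div_iff₀ (by linarith : (0:ℝ) < deriv (deriv f) 1 / 2 + e)]
          exact LocApprox.lower_coef hc2 he (by rw [hedef]; ring) hrs01.2 hrsgt hε hη1
        refine le_trans hkey2 ?_
        calc ((deriv (deriv f) 1 / 2 - e) * (s^2 * chiSq (chanApply W Rst) (chanApply W PX)))
              / ((deriv (deriv f) 1 / 2 + e) * (s^2 * chiSq Rst PX))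
            ≤ ((deriv (deriv f) 1 / 2 - e) * (s^2 * chiSq (chanApply W Rst) (chanApply W PX)))
              / (∑ x, PX x * f (Rs x / PX x)) :=
              div_le_div_of_nonneg_left hXnn hBspos hYge
          _ ≤ (∑ y, chanApply W PX y * f (chanApply W Rs y / chanApply W PX y))
              / (∑ x, PX x * f (Rs x / PX x)) :=
              div_le_div_of_nonneg_right hNs_ge hBspos.le
  -- final assembly
  change Tendsto (fun δ : ℝ => sSup (SE δ)) (𝓝[>] (0:ℝ)) (𝓝 ((η : ℝ) : EReal))
  rw [tendsto_order]
  constructor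
  · intro a ha
    obtain ⟨b, hab, hbη⟩ := EReal.exists_between_coe_real ha
    rw [EReal.coe_lt_coe_iff] at hbη
    have hε : 0 < min ((η - b)/2) 1 := lt_min (by linarith) one_pos
    obtain ⟨δ₀, hδ₀, hkey⟩ := key _ hε (min_le_right _ _)
    filter_upwards [Ioc_mem_nhdsGT hδ₀] with δ hδmem
    obtain ⟨q, hqmem, hqge⟩ := (hkey δ hδmem.1 hδmem.2).2
    have h1 : q ≤ sSup (SE δ) := le_sSup hqmem
    have h2 : (b : EReal) < ((η - min ((η - b)/2) 1 : ℝ) : EReal) := by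
      rw [EReal.coe_lt_coe_iff]
      have := min_le_left ((η - b)/2) 1
      linarith
    exact lt_of_lt_of_le (lt_trans hab h2) (le_trans hqge h1)
  · intro a ha
    obtain ⟨b, hηb, hba⟩ := EReal.exists_between_coe_real ha
    rw [EReal.coe_lt_coe_iff] at hηb
    have hε : 0 < min ((b - η)/2) 1 := lt_min (by linarith) one_pos
    obtain ⟨δ₀, hδ₀, hkey⟩ := key _ hε (min_le_right _ _)
    filter_upwards [Ioc_mem_nhdsGT hδ₀] with δ hδmem
    have h1 : sSup (SE δ) ≤ ((η + min ((b - η)/2) 1 : ℝ) : EReal) :=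
      sSup_le (hkey δ hδmem.1 hδmem.2).1
    have h2 : ((η + min ((b - η)/2) 1 : ℝ) : EReal) < (b : EReal) := by
      rw [EReal.coe_lt_coe_iff]
      have := min_le_left ((b - η)/2) 1
      linarith
    exact lt_of_le_of_lt h1 (lt_trans h2 hba)
end

section
/- Let P_X be a pmf on 𝒳 with P_X(x)>0 for all x, and let W be a channel from 𝒳 to 𝒴 such that P_Y = W P_X satisfies P_Y(y)>0 for all y. Then the contraction coefficients for KL divergence and χ²-divergence satisfy the linear bounds η_{χ²}(P_X,W) ≤ η_{KL}(P_X,W) ≤ η_{χ²}(P_X,W) / (min_{x∈𝒳} P_X(x)). -/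
/-- KL divergence `D(R‖P) = ∑ₓ R(x) log(R(x)/P(x))`. -/
noncomputable def klDiv {𝒳 : Type*} [Fintype 𝒳] (R P : 𝒳 → ℝ) : ℝ :=
  ∑ x, R x * Real.log (R x / P x)

/-- Contraction coefficient for KL divergence. -/
noncomputable def etaKL {𝒳 𝒴 : Type*} [Fintype 𝒳] [Fintype 𝒴]
    (P : 𝒳 → ℝ) (W : 𝒴 → 𝒳 → ℝ) : ℝ :=
  sSup {r : ℝ | ∃ R : 𝒳 → ℝ, IsPmf R ∧ 0 < klDiv R P ∧
    r = klDiv (chanApply W R) (chanApply W P) / klDiv R P}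

open Real Set

/-- `1 - u/v ≤ log v - log u` for `0 < u ≤ v`. -/
lemma log_sub_log_ge {u v : ℝ} (hu : 0 < u) (huv : u ≤ v) :
    1 - u / v ≤ Real.log v - Real.log u := by
  have hv : 0 < v := hu.trans_le huv
  have h := Real.log_le_sub_one_of_pos (x := u / v) (by positivity)
  rw [Real.log_div (ne_of_gt hu) (ne_of_gt hv)] at h
  linarith

lemma log_ge_one_sub_inv {t : ℝ} (ht : 0 < t) : 1 - 1 / t ≤ Real.log t := by
  have h := Real.log_le_sub_one_of_pos (x := 1 / t) (by positivity)
  rw [one_div, Real.log_inv] at h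
  rw [one_div]
  linarith

/-- helper: min at `c` on `[a,b]` from derivative sign change. -/
lemma isMin_on_Icc_of_deriv {f f' : ℝ → ℝ} {a b c : ℝ} (hac : a ≤ c) (hcb : c ≤ b)
    (hcont : ContinuousOn f (Set.Icc a b))
    (hderiv : ∀ u ∈ Set.Ioo a b, HasDerivAt f (f' u) u)
    (hneg : ∀ u ∈ Set.Ioo a c, f' u ≤ 0) (hpos : ∀ u ∈ Set.Ioo c b, 0 ≤ f' u)
    {x : ℝ} (hx : x ∈ Set.Icc a b) : f c ≤ f x := by
  have hab : a ≤ b := hac.trans hcb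
  rcases le_or_gt x c with hxc | hxc
  · have hanti : AntitoneOn f (Set.Icc a c) := by
      apply antitoneOn_of_deriv_nonpos (convex_Icc a c)
        (hcont.mono (Set.Icc_subset_Icc le_rfl hcb))
      · intro u hu
        rw [interior_Icc] at hu
        exact ((hderiv u ⟨hu.1, hu.2.trans_le hcb⟩).differentiableAt).differentiableWithinAt
      · intro u hu
        rw [interior_Icc] at hu
        rw [(hderiv u ⟨hu.1, hu.2.trans_le hcb⟩).deriv]
        exact hneg u hu
    exact hanti ⟨hx.1, hxc⟩ ⟨hac, le_rfl⟩ hxc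
  · have hmono : MonotoneOn f (Set.Icc c b) := by
      apply monotoneOn_of_deriv_nonneg (convex_Icc c b)
        (hcont.mono (Set.Icc_subset_Icc hac le_rfl))
      · intro u hu
        rw [interior_Icc] at hu
        exact ((hderiv u ⟨hac.trans_lt hu.1, hu.2⟩).differentiableAt).differentiableWithinAt
      · intro u hu
        rw [interior_Icc] at hu
        rw [(hderiv u ⟨hac.trans_lt hu.1, hu.2⟩).deriv]
        exact hpos u hu
    exact hmono ⟨le_rfl, hcb⟩ ⟨hxc.le, hx.2⟩ hxc.le

/-- Derivative of `ψ_c(u) = u log u - u + 1 - c (u-1)²`. -/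
lemma hasDerivAt_psi (c : ℝ) {u : ℝ} (hu : u ≠ 0) :
    HasDerivAt (fun u : ℝ => u * Real.log u - u + 1 - c * (u - 1) ^ 2)
      (Real.log u - 2 * c * (u - 1)) u := by
  have h1 := Real.hasDerivAt_mul_log hu
  have h2 : HasDerivAt (fun u : ℝ => c * (u - 1) ^ 2) (c * (2 * (u - 1))) u := by
    have : HasDerivAt (fun u : ℝ => (u - 1) ^ 2) (2 * (u - 1) ^ 1 * 1) u :=
      (((hasDerivAt_id u).sub_const 1).pow 2)
    simpa using this.const_mul c
  have := ((h1.sub (hasDerivAt_id u)).add_const 1).sub h2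
  refine this.congr_deriv ?_
  ring

/-- Continuity of `ψ_c` on a positive interval. -/
lemma continuousOn_psi (c : ℝ) {s : Set ℝ} (hs : ∀ u ∈ s, u ≠ 0) :
    ContinuousOn (fun u : ℝ => u * Real.log u - u + 1 - c * (u - 1) ^ 2) s := by
  apply ContinuousOn.sub
  · apply ContinuousOn.add
    · exact (continuousOn_id.mul (Real.continuousOn_log.mono hs)).sub continuousOn_id
    · exact continuousOn_const
  · exact continuousOn_const.mul (((continuousOn_id.sub continuousOn_const).pow 2))

/-- Key lower bound: `c (t-1)² ≤ φ(t)` for `0 ≤ t`, `0 ≤ c`, `2c ≤ 1`, `2ct ≤ 1`. -/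
lemma phi_ge (c t : ℝ) (hc : 0 ≤ c) (ht : 0 ≤ t) (hc1 : 2 * c ≤ 1) (hct : 2 * c * t ≤ 1) :
    c * (t - 1) ^ 2 ≤ t * Real.log t - t + 1 := by
  rcases eq_or_lt_of_le ht with h0 | ht
  · rw [← h0]; simp; nlinarith
  -- t > 0 now
  have key : ∀ x ∈ Set.Icc (min t 1) (max t 1),
      (1:ℝ) * Real.log 1 - 1 + 1 - c * (1 - 1)^2 ≤ x * Real.log x - x + 1 - c * (x - 1) ^ 2 := by
    intro x hx
    have hmin : 0 < min t 1 := lt_min ht one_pos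
    apply isMin_on_Icc_of_deriv (f := fun u : ℝ => u * Real.log u - u + 1 - c * (u - 1) ^ 2)
      (f' := fun u => Real.log u - 2 * c * (u - 1))
      (min_le_right t 1) (le_max_right t 1)
    · apply continuousOn_psi
      intro u hu; exact ne_of_gt (hmin.trans_le hu.1)
    · intro u hu; exact hasDerivAt_psi c (ne_of_gt (hmin.trans hu.1))
    · intro u hu
      have hu0 : 0 < u := hmin.trans hu.1
      have hu1 : u < 1 := hu.2
      have := Real.log_le_sub_one_of_pos hu0
      nlinarith
    · intro u hu
      have hu1 : 1 < u := hu.1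
      have hu0 : 0 < u := one_pos.trans hu1
      have hut : u < max t 1 := hu.2
      have hct' : 2 * c * u ≤ 1 := by
        rcases le_total t 1 with h | h
        · simp [max_eq_right h] at hut; nlinarith
        · simp [max_eq_left h] at hut; nlinarith
      have := log_ge_one_sub_inv hu0
      have hinv : u * (1/u) = 1 := mul_one_div_cancel (ne_of_gt hu0)
      have h1u : 1 - 1/u ≥ 2 * c * (u - 1) := by
        nlinarith [mul_pos hu0 hu0, mul_nonneg (le_of_lt hu0) (sub_nonneg.2 hct')]
      linarith
    · exact hx
  have := key t ⟨min_le_left t 1, le_max_left t 1⟩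
  simp at this
  linarith

/-- `φ(t) ≤ (t-1)²/2` for `t ≥ 1`. -/
lemma phi_le_half {t : ℝ} (ht : 1 ≤ t) : t * Real.log t - t + 1 ≤ (t - 1) ^ 2 / 2 := by
  have key : ∀ x ∈ Set.Icc (1:ℝ) t,
      (1 * Real.log 1 - 1 + 1 - (1/2) * (1-1)^2) * (-1)
        ≤ (x * Real.log x - x + 1 - (1/2) * (x - 1) ^ 2) * (-1) := by
    intro x hx
    apply isMin_on_Icc_of_deriv
      (f := fun u : ℝ => (u * Real.log u - u + 1 - (1/2) * (u - 1) ^ 2) * (-1))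
      (f' := fun u => (Real.log u - 2 * (1/2) * (u - 1)) * (-1))
      (le_refl 1) ht
    · exact (continuousOn_psi (1/2) (fun u hu => ne_of_gt (lt_of_lt_of_le one_pos hu.1))).mul
        continuousOn_const
    · intro u hu; exact (hasDerivAt_psi (1/2) (ne_of_gt (one_pos.trans hu.1))).mul_const (-1)
    · intro u hu; exact absurd hu.2 (not_lt.2 hu.1.le)
    · intro u hu
      have hu1 : 1 < u := hu.1
      have := Real.log_le_sub_one_of_pos (one_pos.trans hu1)
      nlinarith
    · exact hx
  have := key t ⟨ht, le_rfl⟩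
  simp at this
  nlinarith [this]

/-- `φ(t) ≤ (t-1)²/(2t)` for `0 < t ≤ 1`. -/
lemma phi_le_div {t : ℝ} (h0 : 0 < t) (ht : t ≤ 1) :
    t * Real.log t - t + 1 ≤ (t - 1) ^ 2 / (2 * t) := by
  have key : ∀ x ∈ Set.Icc t (1:ℝ),
      (1-1)^2/(2*1) - (1 * Real.log 1 - 1 + 1)
        ≤ (x-1)^2/(2*x) - (x * Real.log x - x + 1) := by
    intro x hx
    apply isMin_on_Icc_of_deriv
      (f := fun u : ℝ => (u-1)^2/(2*u) - (u * Real.log u - u + 1))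
      (f' := fun u => (1/2 - 1/(2*u^2)) - Real.log u)
      ht (le_refl 1)
    · apply ContinuousOn.sub
      · apply ContinuousOn.div
        · exact (continuousOn_id.sub continuousOn_const).pow 2
        · exact continuousOn_const.mul continuousOn_id
        · intro u hu; have : 0 < u := h0.trans_le hu.1; positivity
      · exact ((continuousOn_id.mul (Real.continuousOn_log.mono
          (fun u hu => ne_of_gt (h0.trans_le hu.1)))).sub continuousOn_id).add continuousOn_const
    · intro u hu
      have hu0 : 0 < u := h0.trans hu.1
      have h1 : HasDerivAt (fun u : ℝ => (u-1)^2/(2*u))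
          ((2*(u-1)^1*1 * (2*u) - (u-1)^2 * 2) / (2*u)^2) u := by
        have hden : HasDerivAt (fun u : ℝ => 2*u) 2 u := by
          simpa using (hasDerivAt_id u).const_mul 2
        exact (((hasDerivAt_id u).sub_const 1).pow 2).div hden (by positivity)
      have h2 : HasDerivAt (fun u : ℝ => u * Real.log u - u + 1) (Real.log u) u := by
        have := ((Real.hasDerivAt_mul_log (ne_of_gt hu0)).sub (hasDerivAt_id u)).add_const 1
        simpa using this
      have := h1.sub h2
      refine this.congr_deriv ?_
      field_simp
      ring
    · intro u hu
      have hu0 : 0 < u := h0.trans hu.1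
      have hlog := log_ge_one_sub_inv hu0
      have e1 : u * (1/u) = 1 := mul_one_div_cancel (ne_of_gt hu0)
      have e2 : u^2 * (1/(2*u^2)) = 1/2 := by field_simp
      nlinarith [sq_nonneg (u-1), mul_pos hu0 hu0]
    · intro u hu; exact absurd hu.1 (not_lt.2 hu.2.le)
    · exact hx
  have := key t ⟨le_rfl, ht⟩
  simp at this
  nlinarith [this]

/-- combined upper bound: `φ(t) ≤ (t-1)²/(2a)` for `0 < a ≤ 1`, `a ≤ t`. -/
lemma phi_le_comb {a t : ℝ} (ha : 0 < a) (ha1 : a ≤ 1) (hat : a ≤ t) :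
    t * Real.log t - t + 1 ≤ (t - 1) ^ 2 / (2 * a) := by
  have ht0 : 0 < t := ha.trans_le hat
  rcases le_total t 1 with h | h
  · calc t * Real.log t - t + 1 ≤ (t-1)^2/(2*t) := phi_le_div ht0 h
      _ ≤ (t-1)^2/(2*a) := by
        apply div_le_div_of_nonneg_left (sq_nonneg _) (by positivity) (by linarith)
  · calc t * Real.log t - t + 1 ≤ (t-1)^2/2 := phi_le_half h
      _ ≤ (t-1)^2/(2*a) := by
        apply div_le_div_of_nonneg_left (sq_nonneg _) (by positivity) (by linarith)

/-- `φ(t) ≤ (t-1)²` for `t ≥ 0`. -/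
lemma phi_le_sq {t : ℝ} (ht : 0 ≤ t) : t * Real.log t - t + 1 ≤ (t - 1) ^ 2 := by
  rcases eq_or_lt_of_le ht with h0 | h0
  · rw [← h0]; simp
  · have := Real.log_le_sub_one_of_pos h0
    nlinarith [mul_le_mul_of_nonneg_left this ht]

/-- monotonicity of `dψ_p`. -/
lemma dpsi_mono {p u v : ℝ} (hp : 0 ≤ p) (hu : 0 < u) (huv : u ≤ v) (hv : 2 * p * v ≤ 1) :
    Real.log u - 2 * p * (u - 1) ≤ Real.log v - 2 * p * (v - 1) := by
  have hv0 : 0 < v := hu.trans_le huv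
  have h1 := log_sub_log_ge hu huv
  have e1 : v * (u/v) = u := by field_simp
  nlinarith [mul_nonneg (sub_nonneg.2 huv) (sub_nonneg.2 hv)]

/-- Supporting line for `ψ_p` at `tb` on the convex region `{t : 2pt ≤ 1}`. -/
lemma psi_line {p tb t : ℝ} (hp : 0 ≤ p) (htb : 0 < tb) (htbM : 2*p*tb ≤ 1)
    (ht : 0 ≤ t) (htM : 2*p*t ≤ 1) :
    (tb * Real.log tb - tb + 1 - p*(tb-1)^2) + (Real.log tb - 2*p*(tb-1)) * (t - tb)
      ≤ t * Real.log t - t + 1 - p*(t-1)^2 := by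
  rcases eq_or_lt_of_le ht with h0 | ht0
  · rw [← h0]
    simp [Real.log_zero]
    nlinarith [mul_pos htb htb, htb]
  -- t > 0
  set s := Real.log tb - 2*p*(tb-1) with hs
  have hmin : 0 < min t tb := lt_min ht0 htb
  have hmaxM : 2*p*(max t tb) ≤ 1 := by
    rcases le_total t tb with h | h
    · rwa [max_eq_right h]
    · rwa [max_eq_left h]
  have key : (tb * Real.log tb - tb + 1 - p*(tb-1)^2) - s * tb
      ≤ (t * Real.log t - t + 1 - p*(t-1)^2) - s * t := by
    apply isMin_on_Icc_of_deriv
      (f := fun u : ℝ => (u * Real.log u - u + 1 - p*(u-1)^2) - s * u)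
      (f' := fun u => (Real.log u - 2*p*(u-1)) - s)
      (min_le_right t tb) (le_max_right t tb)
    · apply (continuousOn_psi p (fun u hu => ne_of_gt (hmin.trans_le hu.1))).sub
      exact continuousOn_const.mul continuousOn_id
    · intro u hu
      have hu0 : 0 < u := hmin.trans hu.1
      have hlin : HasDerivAt (fun u : ℝ => s * u) s u := by
        simpa using (hasDerivAt_id u).const_mul s
      exact (hasDerivAt_psi p (ne_of_gt hu0)).sub hlin
    · intro u hu
      have hu0 : 0 < u := hmin.trans hu.1
      have := dpsi_mono hp hu0 hu.2.le htbM
      rw [hs]; linarith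
    · intro u hu
      have humax : u ≤ max t tb := hu.2.le
      have huM : 2*p*u ≤ 1 := by nlinarith [le_max_right t tb, hu.1, htb]
      have := dpsi_mono hp htb hu.1.le huM
      rw [hs]; linarith
    · exact ⟨min_le_left t tb, le_max_left t tb⟩
  nlinarith [key]

section binary
variable {q m : ℝ}

/-- derivative of the binary gap function. -/
lemma hasDerivAt_binU (hq0 : 0 < q) (hq1 : q < 1) (hm : m ≠ 0) {v : ℝ}
    (hv : v ∈ Set.Ioo (0:ℝ) 1) :
    HasDerivAt (fun v : ℝ => v * Real.log v + (1-v) * Real.log (1-v)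
        - v * Real.log q - (1-v) * Real.log (1-q) - (v-q)^2/m)
      (Real.log v - Real.log (1-v) - Real.log q + Real.log (1-q) - 2*(v-q)/m) v := by
  have hv0 : v ≠ 0 := ne_of_gt hv.1
  have hv1 : (1:ℝ) - v ≠ 0 := by have := hv.2; intro h; linarith [h]
  have hneg : HasDerivAt (fun v : ℝ => 1 - v) (-1) v := by
    exact (hasDerivAt_id' v).const_sub 1
  have h1 := Real.hasDerivAt_mul_log hv0
  have h2 : HasDerivAt (fun v : ℝ => (1-v) * Real.log (1-v))
      ((Real.log (1-v) + 1) * (-1)) v :=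
    (Real.hasDerivAt_mul_log hv1).comp v hneg
  have h3 : HasDerivAt (fun v : ℝ => v * Real.log q) (Real.log q) v := by
    simpa using (hasDerivAt_id v).mul_const (Real.log q)
  have h4 : HasDerivAt (fun v : ℝ => (1-v) * Real.log (1-q)) (-Real.log (1-q)) v := by
    simpa using hneg.mul_const (Real.log (1-q))
  have h5 : HasDerivAt (fun v : ℝ => (v-q)^2/m) ((2*(v-q)^1*1)/m) v :=
    (((hasDerivAt_id v).sub_const q).pow 2).div_const m
  have := (((h1.add h2).sub h3).sub h4).sub h5
  refine this.congr_deriv ?_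
  ring

lemma hasDerivAt_binU' (hm : m ≠ 0) {v : ℝ} (hv : v ∈ Set.Ioo (0:ℝ) 1) :
    HasDerivAt (fun v : ℝ => Real.log v - Real.log (1-v) - Real.log q
        + Real.log (1-q) - 2*(v-q)/m)
      (v⁻¹ + (1-v)⁻¹ - 2/m) v := by
  have hv0 : v ≠ 0 := ne_of_gt hv.1
  have hv1 : (1:ℝ) - v ≠ 0 := by have := hv.2; intro h; linarith [h]
  have hneg : HasDerivAt (fun v : ℝ => 1 - v) (-1) v := by
    exact (hasDerivAt_id' v).const_sub 1
  have h1 := Real.hasDerivAt_log hv0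
  have h2 : HasDerivAt (fun v : ℝ => Real.log (1-v)) ((1-v)⁻¹ * (-1)) v :=
    (Real.hasDerivAt_log hv1).comp v hneg
  have h5 : HasDerivAt (fun v : ℝ => 2*(v-q)/m) ((2*1)/m) v := by
    exact (((hasDerivAt_id v).sub_const q).const_mul 2).div_const m
  have := (((h1.sub h2).sub_const (Real.log q)).add_const (Real.log (1-q))).sub h5
  refine this.congr_deriv ?_
  ring

/-- Refined Pinsker: binary KL dominates `(r-q)²/max(q,1-q)`. -/
lemma binary_kl_ge (hq0 : 0 < q) (hq1 : q < 1) {r : ℝ} (hr0 : 0 ≤ r) (hr1 : r ≤ 1) :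
    (r-q)^2 / max q (1-q) ≤ r * Real.log (r/q) + (1-r) * Real.log ((1-r)/(1-q)) := by
  set m := max q (1-q) with hm
  have hmq : q ≤ m := le_max_left _ _
  have hmq' : 1 - q ≤ m := le_max_right _ _
  have hm0 : 0 < m := lt_of_lt_of_le hq0 hmq
  have hm2 : 1 ≤ 2*m := by rcases max_cases q (1-q) with ⟨h,_⟩|⟨h,_⟩ <;> rw [hm, h] <;> linarith
  rcases eq_or_lt_of_le hr0 with h0 | hr0'
  · -- r = 0
    rw [← h0]
    simp only [zero_mul, sub_zero, zero_sub, one_mul, zero_add]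
    rw [Real.log_div one_ne_zero (by linarith : (1:ℝ)-q ≠ 0), Real.log_one]
    have h1 : Real.log (1-q) ≤ -q := by
      have := Real.log_le_sub_one_of_pos (by linarith : (0:ℝ) < 1-q); linarith
    have h2 : (-q)^2/m ≤ q := by
      rw [div_le_iff₀ hm0]; nlinarith
    linarith
  rcases eq_or_lt_of_le hr1 with h1 | hr1'
  · -- r = 1
    rw [h1]
    simp only [sub_self, zero_mul, add_zero, one_mul]
    rw [Real.log_div one_ne_zero (ne_of_gt hq0), Real.log_one]
    have h1' : Real.log q ≤ q - 1 := Real.log_le_sub_one_of_pos hq0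
    have h2 : (1-q)^2/m ≤ 1-q := by
      rw [div_le_iff₀ hm0]; nlinarith
    linarith
  -- interior case 0 < r < 1
  have hIcc : Set.Icc (min r q) (max r q) ⊆ Set.Ioo (0:ℝ) 1 := by
    intro v hv
    constructor
    · exact lt_of_lt_of_le (lt_min hr0' hq0) hv.1
    · exact lt_of_le_of_lt hv.2 (max_lt hr1' hq1)
  set U' := fun v : ℝ => Real.log v - Real.log (1-v) - Real.log q
      + Real.log (1-q) - 2*(v-q)/m with hU'
  have hU'q : U' q = 0 := by rw [hU']; simp
  have hU'mono : MonotoneOn U' (Set.Icc (min r q) (max r q)) := by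
    apply monotoneOn_of_deriv_nonneg (convex_Icc _ _)
    · intro v hv
      exact (hasDerivAt_binU' (q := q) (ne_of_gt hm0) (hIcc hv)).continuousAt.continuousWithinAt
    · intro v hv
      rw [interior_Icc] at hv
      exact (hasDerivAt_binU' (q := q) (ne_of_gt hm0) (hIcc (Set.Ioo_subset_Icc_self hv))).differentiableAt.differentiableWithinAt
    · intro v hv
      rw [interior_Icc] at hv
      have hv' := hIcc (Set.Ioo_subset_Icc_self hv)
      rw [(hasDerivAt_binU' (q := q) (ne_of_gt hm0) hv').deriv]
      have hv0 : 0 < v := hv'.1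
      have hv1 : 0 < 1 - v := by linarith [hv'.2]
      have h4 : v*(1-v) ≤ 1/4 := by nlinarith [sq_nonneg (1-2*v)]
      have hab : v⁻¹ + (1-v)⁻¹ = 1/(v*(1-v)) := by field_simp; ring
      have h5 : 2/m ≤ 4 := by rw [div_le_iff₀ hm0]; linarith
      have h6 : (4:ℝ) ≤ 1/(v*(1-v)) := by
        rw [le_div_iff₀ (mul_pos hv0 hv1)]; linarith
      linarith
  have hUmin : ∀ x ∈ Set.Icc (min r q) (max r q),
      (fun v : ℝ => v * Real.log v + (1-v) * Real.log (1-v)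
        - v * Real.log q - (1-v) * Real.log (1-q) - (v-q)^2/m) q
      ≤ (fun v : ℝ => v * Real.log v + (1-v) * Real.log (1-v)
        - v * Real.log q - (1-v) * Real.log (1-q) - (v-q)^2/m) x := by
    intro x hx
    apply isMin_on_Icc_of_deriv (f := fun v : ℝ => v * Real.log v + (1-v) * Real.log (1-v)
        - v * Real.log q - (1-v) * Real.log (1-q) - (v-q)^2/m)
      (f' := U') (min_le_right r q) (le_max_right r q)
    · intro v hv
      exact (hasDerivAt_binU hq0 hq1 (ne_of_gt hm0) (hIcc hv)).continuousAt.continuousWithinAt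
    · intro v hv
      exact hasDerivAt_binU hq0 hq1 (ne_of_gt hm0) (hIcc (Set.Ioo_subset_Icc_self hv))
    · intro v hv
      have h := hU'mono (a := v) (b := q)
        ⟨hv.1.le, hv.2.le.trans (le_max_right r q)⟩
        ⟨min_le_right r q, le_max_right r q⟩ hv.2.le
      rw [hU'q] at h; exact h
    · intro v hv
      have h := hU'mono (a := q) (b := v)
        ⟨min_le_right r q, le_max_right r q⟩
        ⟨le_trans (min_le_right r q) hv.1.le, hv.2.le⟩ hv.1.le
      rw [hU'q] at h; exact h
    · exact hx
  have hUr := hUmin r ⟨min_le_left r q, le_max_left r q⟩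
  simp only [sub_self, ne_eq] at hUr
  have hUq0 : q * Real.log q + (1-q) * Real.log (1-q)
      - q * Real.log q - (1-q) * Real.log (1-q) - (q-q)^2/m = 0 := by
    ring_nf
  rw [Real.log_div (ne_of_gt hr0') (ne_of_gt hq0),
    Real.log_div (by linarith : (1:ℝ)-r ≠ 0) (by linarith : (1:ℝ)-q ≠ 0)]

  ring_nf at hUr ⊢
  linarith [hUr]

end binary

section sums
variable {𝒳 𝒴 : Type*} [Fintype 𝒳] [Fintype 𝒴]

lemma term_phi {p r : ℝ} (hp : p ≠ 0) :
    p * ((r/p) * Real.log (r/p) - r/p + 1) = r * Real.log (r/p) - r + p := by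
  field_simp

lemma term_sq {p r : ℝ} (hp : p ≠ 0) : p * (r/p - 1)^2 = (r-p)^2/p := by
  field_simp

lemma klDiv_eq (R P : 𝒳 → ℝ) (h1 : ∑ x, R x = ∑ x, P x) :
    klDiv R P = ∑ x, (R x * Real.log (R x / P x) - R x + P x) := by
  unfold klDiv
  rw [Finset.sum_add_distrib, Finset.sum_sub_distrib, h1]
  ring

lemma klDiv_nonneg (R P : 𝒳 → ℝ) (hR : ∀ x, 0 ≤ R x) (hP : ∀ x, 0 < P x)
    (h1 : ∑ x, R x = ∑ x, P x) : 0 ≤ klDiv R P := by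
  rw [klDiv_eq R P h1]
  apply Finset.sum_nonneg
  intro x _
  have hphi := phi_ge 0 (R x / P x) le_rfl (div_nonneg (hR x) (hP x).le) (by norm_num) (by norm_num)
  have := mul_le_mul_of_nonneg_left hphi (le_of_lt (hP x))
  rw [term_phi (ne_of_gt (hP x))] at this
  simpa using this

lemma klDiv_le_chiSq (R P : 𝒳 → ℝ) (hR : ∀ x, 0 ≤ R x) (hP : ∀ x, 0 < P x)
    (h1 : ∑ x, R x = ∑ x, P x) : klDiv R P ≤ chiSq R P := by
  rw [klDiv_eq R P h1]
  unfold chiSq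
  apply Finset.sum_le_sum
  intro x _
  have hphi := phi_le_sq (t := R x / P x) (div_nonneg (hR x) (hP x).le)
  have := mul_le_mul_of_nonneg_left hphi (le_of_lt (hP x))
  rw [term_phi (ne_of_gt (hP x)), term_sq (ne_of_gt (hP x))] at this
  linarith

lemma chiSq_nonneg (R P : 𝒳 → ℝ) (hP : ∀ x, 0 < P x) : 0 ≤ chiSq R P := by
  apply Finset.sum_nonneg
  intro x _
  exact div_nonneg (sq_nonneg _) (hP x).le

lemma sum_chanApply (W : 𝒴 → 𝒳 → ℝ) (A : 𝒳 → ℝ) (hW : IsChannel W) :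
    ∑ y, chanApply W A y = ∑ x, A x := by
  unfold chanApply
  rw [Finset.sum_comm]
  apply Finset.sum_congr rfl
  intro x _
  rw [← Finset.sum_mul, hW.2 x, one_mul]

lemma chanApply_nonneg (W : 𝒴 → 𝒳 → ℝ) (A : 𝒳 → ℝ) (hW : IsChannel W)
    (hA : ∀ x, 0 ≤ A x) (y : 𝒴) : 0 ≤ chanApply W A y :=
  Finset.sum_nonneg fun x _ => mul_nonneg (hW.1 y x) (hA x)

lemma chanApply_le_one (W : 𝒴 → 𝒳 → ℝ) (A : 𝒳 → ℝ) (hW : IsChannel W)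
    (hA : IsPmf A) (y : 𝒴) : chanApply W A y ≤ 1 := by
  have h1 : ∀ x, W y x ≤ 1 := by
    intro x
    have := hW.2 x
    have h2 : ∀ z, 0 ≤ W z x := fun z => hW.1 z x
    calc W y x ≤ ∑ z, W z x := Finset.single_le_sum (fun z _ => h2 z) (Finset.mem_univ y)
      _ = 1 := hW.2 x
  calc chanApply W A y = ∑ x, W y x * A x := rfl
    _ ≤ ∑ x, 1 * A x := Finset.sum_le_sum fun x _ =>
        mul_le_mul_of_nonneg_right (h1 x) (hA.1 x)
    _ = 1 := by simp [hA.2]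

end sums

section dpi
variable {𝒳 𝒴 : Type*} [Fintype 𝒳] [Fintype 𝒴]

lemma chanApply_sub (W : 𝒴 → 𝒳 → ℝ) (A B : 𝒳 → ℝ) (y : 𝒴) :
    ∑ x, W y x * (A x - B x) = chanApply W A y - chanApply W B y := by
  unfold chanApply
  rw [← Finset.sum_sub_distrib]
  apply Finset.sum_congr rfl
  intro x _; ring

lemma chi_dpi (W : 𝒴 → 𝒳 → ℝ) (A B : 𝒳 → ℝ) (hW : IsChannel W)
    (hB : ∀ x, 0 < B x) (hBY : ∀ y, 0 < chanApply W B y) :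
    chiSq (chanApply W A) (chanApply W B) ≤ chiSq A B := by
  have hy : ∀ y, (chanApply W A y - chanApply W B y)^2 / chanApply W B y
      ≤ ∑ x, W y x * ((A x - B x)^2 / B x) := by
    intro y
    set Ay := chanApply W A y
    set By := chanApply W B y
    have hBy : 0 < By := hBY y
    set m := (Ay - By)/By with hm
    have perx : ∀ x, 2*m*(W y x * (A x - B x)) - m^2*(W y x * B x)
        ≤ W y x * ((A x - B x)^2 / B x) := by
      intro x
      have hBx := hB x
      have hkey : W y x * ((A x - B x)^2 / B x) - (2*m*(W y x * (A x - B x)) - m^2*(W y x * B x))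
          = W y x * B x * ((A x - B x)/B x - m)^2 := by
        field_simp
        ring
      nlinarith [mul_nonneg (mul_nonneg (hW.1 y x) hBx.le) (sq_nonneg ((A x - B x)/B x - m))]
    have hsum := Finset.sum_le_sum (s := Finset.univ) (fun x _ => perx x)
    have e1 : ∑ x, (2*m*(W y x * (A x - B x)) - m^2*(W y x * B x))
        = 2*m*(Ay - By) - m^2*By := by
      rw [Finset.sum_sub_distrib, ← Finset.mul_sum, ← Finset.mul_sum,
        chanApply_sub]
      rfl
    rw [e1] at hsum
    have e2 : 2*m*(Ay - By) - m^2*By = (Ay - By)^2/By := by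
      rw [hm]; field_simp; ring
    linarith
  unfold chiSq
  calc ∑ y, (chanApply W A y - chanApply W B y)^2 / chanApply W B y
      ≤ ∑ y, ∑ x, W y x * ((A x - B x)^2 / B x) := Finset.sum_le_sum fun y _ => hy y
    _ = ∑ x, (A x - B x)^2 / B x := by
        rw [Finset.sum_comm]
        apply Finset.sum_congr rfl
        intro x _
        rw [← Finset.sum_mul, hW.2 x, one_mul]

lemma kl_dpi (W : 𝒴 → 𝒳 → ℝ) (A B : 𝒳 → ℝ) (hW : IsChannel W)
    (hA : ∀ x, 0 ≤ A x) (hB : ∀ x, 0 < B x) (hBY : ∀ y, 0 < chanApply W B y) :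
    klDiv (chanApply W A) (chanApply W B) ≤ klDiv A B := by
  have hy : ∀ y, chanApply W A y * Real.log (chanApply W A y / chanApply W B y)
      ≤ ∑ x, W y x * (A x * Real.log (A x / B x)) := by
    intro y
    set Ay := chanApply W A y with hAy
    set By := chanApply W B y with hBy
    have hBy0 : 0 < By := hBY y
    have hAy0 : 0 ≤ Ay := chanApply_nonneg W A hW hA y
    rcases eq_or_lt_of_le hAy0 with h0 | hAypos
    · -- Ay = 0
      have hall : ∀ x, W y x * A x = 0 := by
        intro x
        have := (Finset.sum_eq_zero_iff_of_nonneg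
          (fun x _ => mul_nonneg (hW.1 y x) (hA x))).1 h0.symm
        exact this x (Finset.mem_univ x)
      rw [← h0, zero_mul]
      apply Finset.sum_nonneg
      intro x _
      rw [show W y x * (A x * Real.log (A x / B x)) = (W y x * A x) * Real.log (A x / B x) by ring,
        hall x, zero_mul]
    · set m := Ay/By with hm
      have hm0 : 0 < m := div_pos hAypos hBy0
      have perx : ∀ x, (W y x * A x) * Real.log m + W y x * A x - m * (W y x * B x)
          ≤ W y x * (A x * Real.log (A x / B x)) := by
        intro x
        rcases eq_or_lt_of_le (hW.1 y x) with hw0 | hwpos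
        · rw [← hw0]; simp
        have hBx := hB x
        rcases eq_or_lt_of_le (hA x) with hax0 | haxpos
        · rw [← hax0]
          simp only [mul_zero, zero_mul, zero_add, zero_sub, zero_div, mul_zero]
          have : 0 ≤ m * (W y x * B x) := by positivity
          linarith
        · set t := A x / B x with ht
          have ht0 : 0 < t := div_pos haxpos hBx
          have hphi := phi_ge 0 (t/m) le_rfl (by positivity) (by norm_num) (by norm_num)
          have hmul := mul_le_mul_of_nonneg_left hphi
            (by positivity : (0:ℝ) ≤ W y x * B x * m)
          simp only [zero_mul, mul_zero] at hmul
          have heq : W y x * B x * m * ((t/m) * Real.log (t/m) - t/m + 1)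
              = W y x * (A x * Real.log (A x / B x)) -
                ((W y x * A x) * Real.log m + W y x * A x - m * (W y x * B x)) := by
            rw [Real.log_div (ne_of_gt ht0) (ne_of_gt hm0)]
            have hAxe : A x = B x * t := by rw [ht]; field_simp
            rw [hAxe]
            field_simp
            ring
          linarith [heq ▸ hmul]
      have hsum := Finset.sum_le_sum (s := Finset.univ) (fun x _ => perx x)
      have e1 : ∑ x, ((W y x * A x) * Real.log m + W y x * A x - m * (W y x * B x))
          = Ay * Real.log m + Ay - m * By := by
        rw [Finset.sum_sub_distrib, Finset.sum_add_distrib, ← Finset.sum_mul,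
          ← Finset.mul_sum]
        rfl
      rw [e1] at hsum
      have e2 : m * By = Ay := by rw [hm]; field_simp
      have e3 : Ay * Real.log m + Ay - m * By = Ay * Real.log (Ay/By) := by
        rw [e2, hm]; ring
      linarith
  unfold klDiv
  calc ∑ y, chanApply W A y * Real.log (chanApply W A y / chanApply W B y)
      ≤ ∑ y, ∑ x, W y x * (A x * Real.log (A x / B x)) := Finset.sum_le_sum fun y _ => hy y
    _ = ∑ x, A x * Real.log (A x / B x) := by
        rw [Finset.sum_comm]
        apply Finset.sum_congr rfl
        intro x _
        rw [← Finset.sum_mul, hW.2 x, one_mul]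

end dpi


section key
variable {𝒳 : Type*} [Fintype 𝒳] [Nonempty 𝒳] [DecidableEq 𝒳]

set_option maxHeartbeats 1600000 in
/-- Key lemma: `p · χ²(R‖P) ≤ D(R‖P)` where `p ≤ min P`, `p ≤ 1 - max P`, `2p ≤ 1`. -/
lemma chi_le_kl_div_p (P R : 𝒳 → ℝ) (p : ℝ) (hp : 0 < p) (hpP : ∀ x, p ≤ P x)
    (hPle : ∀ x, P x ≤ 1 - p) (hp2 : 2*p ≤ 1) (hP : IsPmf P) (hR : IsPmf R) :
    p * chiSq R P ≤ klDiv R P := by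
  have hPpos : ∀ x, 0 < P x := fun x => lt_of_lt_of_le hp (hpP x)
  have hRle1 : ∀ x, R x ≤ 1 := by
    intro x
    calc R x ≤ ∑ z, R z := Finset.single_le_sum (fun z _ => hR.1 z) (Finset.mem_univ x)
      _ = 1 := hR.2
  -- at most one "bad" coordinate
  have hex : ∃ x₀ : 𝒳, ∀ x, x ≠ x₀ → 2*p*R x ≤ P x := by
    by_cases h : ∀ x, 2*p*R x ≤ P x
    · exact ⟨Classical.arbitrary 𝒳, fun x _ => h x⟩
    · push_neg at h
      obtain ⟨x₀, hx₀⟩ := h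
      refine ⟨x₀, fun x hx => ?_⟩
      by_contra hcon
      push_neg at hcon
      have hgt : ∀ z, P z < 2*p*R z → 1/2 < R z := by
        intro z hz
        have := hpP z
        nlinarith
      have h1 := hgt x₀ hx₀
      have h2 := hgt x hcon
      have hle : R x + R x₀ ≤ 1 := by
        rw [← hR.2]
        calc R x + R x₀ = ∑ z ∈ ({x, x₀} : Finset 𝒳), R z := by
              rw [Finset.sum_pair hx]
          _ ≤ ∑ z, R z := Finset.sum_le_sum_of_subset_of_nonneg (Finset.subset_univ _)
              (fun z _ _ => hR.1 z)
      linarith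
  obtain ⟨x₀, hx₀⟩ := hex
  have hq0pos : 0 < P x₀ := hPpos x₀
  have hq0lt1 : P x₀ < 1 := lt_of_le_of_lt (hPle x₀) (by linarith)
  have hBpos : 0 < 1 - P x₀ := by linarith
  have hQgep : p ≤ 1 - P x₀ := by linarith [hPle x₀]
  have hr00 : 0 ≤ R x₀ := hR.1 x₀
  have hr01 : R x₀ ≤ 1 := hRle1 x₀
  have hApos : 0 ≤ 1 - R x₀ := by linarith
  have hQ : ∑ x ∈ Finset.univ.erase x₀, P x = 1 - P x₀ := by
    have := Finset.add_sum_erase Finset.univ P (Finset.mem_univ x₀)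
    rw [hP.2] at this
    linarith
  have hRr : ∑ x ∈ Finset.univ.erase x₀, R x = 1 - R x₀ := by
    have := Finset.add_sum_erase Finset.univ R (Finset.mem_univ x₀)
    rw [hR.2] at this
    linarith
  -- reduce to sum of psi terms
  have hmain : klDiv R P - p * chiSq R P = ∑ x, P x *
      ((R x/P x) * Real.log (R x/P x) - R x/P x + 1 - p*(R x/P x - 1)^2) := by
    rw [klDiv_eq R P (by rw [hR.2, hP.2])]
    unfold chiSq
    rw [Finset.mul_sum, ← Finset.sum_sub_distrib]
    apply Finset.sum_congr rfl
    intro x _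
    have hne := (hPpos x).ne'
    field_simp
  -- bound the erase-sum from below
  have h2pRr : 2*p*(1 - R x₀) ≤ 1 - P x₀ := by
    rw [← hQ, ← hRr, Finset.mul_sum]
    apply Finset.sum_le_sum
    intro x hx
    exact hx₀ x (Finset.ne_of_mem_erase hx)
  have herase : (1-R x₀) * Real.log ((1-R x₀)/(1-P x₀)) - (1-R x₀) + (1-P x₀)
        - p*(R x₀-P x₀)^2/(1-P x₀)
      ≤ ∑ x ∈ Finset.univ.erase x₀,
          P x * ((R x/P x) * Real.log (R x/P x) - R x/P x + 1 - p*(R x/P x - 1)^2) := by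
    have hform : (1-R x₀) * Real.log ((1-R x₀)/(1-P x₀)) - (1-R x₀) + (1-P x₀)
          - p*(R x₀-P x₀)^2/(1-P x₀)
        = (1-P x₀) * (((1-R x₀)/(1-P x₀)) * Real.log ((1-R x₀)/(1-P x₀))
            - (1-R x₀)/(1-P x₀) + 1 - p*((1-R x₀)/(1-P x₀) - 1)^2) := by
      field_simp
      ring
    rcases eq_or_lt_of_le hApos with h0 | hRrpos
    · -- R x₀ = 1 : every R x = 0 on the erase set
      have hallz : ∀ x ∈ Finset.univ.erase x₀, R x = 0 := by
        intro x hx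
        exact (Finset.sum_eq_zero_iff_of_nonneg (fun x _ => hR.1 x)).1
          (by rw [hRr]; linarith) x hx
      have hsum0 : ∑ x ∈ Finset.univ.erase x₀,
          P x * ((R x/P x) * Real.log (R x/P x) - R x/P x + 1 - p*(R x/P x - 1)^2)
          = (1 - P x₀) * (1 - p) := by
        rw [← hQ, Finset.sum_mul]
        apply Finset.sum_congr rfl
        intro x hx
        rw [hallz x hx]
        simp [Real.log_zero]
      rw [hsum0, hform, ← h0]
      simp [Real.log_zero]
    · -- 1 - R x₀ > 0 : supporting line at tb = (1-R x₀)/(1-P x₀)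
      have htbpos : 0 < (1-R x₀)/(1-P x₀) := div_pos hRrpos hBpos
      have htbM : 2*p*((1-R x₀)/(1-P x₀)) ≤ 1 := by
        rw [← mul_div_assoc, div_le_one hBpos]
        exact h2pRr
      have hline : ∀ x ∈ Finset.univ.erase x₀,
          P x * ((((1-R x₀)/(1-P x₀)) * Real.log ((1-R x₀)/(1-P x₀))
              - (1-R x₀)/(1-P x₀) + 1 - p*((1-R x₀)/(1-P x₀)-1)^2)
            + (Real.log ((1-R x₀)/(1-P x₀)) - 2*p*((1-R x₀)/(1-P x₀)-1))
              * (R x/P x - (1-R x₀)/(1-P x₀)))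
          ≤ P x * ((R x/P x) * Real.log (R x/P x) - R x/P x + 1 - p*(R x/P x - 1)^2) := by
        intro x hx
        apply mul_le_mul_of_nonneg_left _ (hPpos x).le
        have htx0 : 0 ≤ R x/P x := div_nonneg (hR.1 x) (hPpos x).le
        have htxM : 2*p*(R x/P x) ≤ 1 := by
          rw [← mul_div_assoc, div_le_one (hPpos x)]
          exact hx₀ x (Finset.ne_of_mem_erase hx)
        exact psi_line hp.le htbpos htbM htx0 htxM
      have hPt : ∑ x ∈ Finset.univ.erase x₀, P x * (R x/P x) = 1 - R x₀ := by
        rw [← hRr]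
        apply Finset.sum_congr rfl
        intro x _
        rw [mul_comm]
        exact div_mul_cancel₀ _ (hPpos x).ne'
      have hQtb : ((1-R x₀)/(1-P x₀)) * (1 - P x₀) = 1 - R x₀ :=
        div_mul_cancel₀ _ hBpos.ne'
      have hsumline : (1-P x₀) * (((1-R x₀)/(1-P x₀)) * Real.log ((1-R x₀)/(1-P x₀))
            - (1-R x₀)/(1-P x₀) + 1 - p*((1-R x₀)/(1-P x₀)-1)^2)
          ≤ ∑ x ∈ Finset.univ.erase x₀,
              P x * ((R x/P x) * Real.log (R x/P x) - R x/P x + 1 - p*(R x/P x - 1)^2) := by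
        have step : ∑ x ∈ Finset.univ.erase x₀,
            P x * ((((1-R x₀)/(1-P x₀)) * Real.log ((1-R x₀)/(1-P x₀))
              - (1-R x₀)/(1-P x₀) + 1 - p*((1-R x₀)/(1-P x₀)-1)^2)
            + (Real.log ((1-R x₀)/(1-P x₀)) - 2*p*((1-R x₀)/(1-P x₀)-1))
              * (R x/P x - (1-R x₀)/(1-P x₀)))
            = (1-P x₀) * (((1-R x₀)/(1-P x₀)) * Real.log ((1-R x₀)/(1-P x₀))
              - (1-R x₀)/(1-P x₀) + 1 - p*((1-R x₀)/(1-P x₀)-1)^2)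
            + (Real.log ((1-R x₀)/(1-P x₀)) - 2*p*((1-R x₀)/(1-P x₀)-1))
              * ((1-R x₀) - ((1-R x₀)/(1-P x₀)) * (1-P x₀)) := by
          rw [Finset.sum_congr rfl (fun x _ => by ring :
            ∀ x ∈ Finset.univ.erase x₀,
              P x * ((((1-R x₀)/(1-P x₀)) * Real.log ((1-R x₀)/(1-P x₀))
                - (1-R x₀)/(1-P x₀) + 1 - p*((1-R x₀)/(1-P x₀)-1)^2)
              + (Real.log ((1-R x₀)/(1-P x₀)) - 2*p*((1-R x₀)/(1-P x₀)-1))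
                * (R x/P x - (1-R x₀)/(1-P x₀)))
              = P x * (((1-R x₀)/(1-P x₀)) * Real.log ((1-R x₀)/(1-P x₀))
                - (1-R x₀)/(1-P x₀) + 1 - p*((1-R x₀)/(1-P x₀)-1)^2)
              + (Real.log ((1-R x₀)/(1-P x₀)) - 2*p*((1-R x₀)/(1-P x₀)-1))
                * (P x * (R x/P x))
              - (Real.log ((1-R x₀)/(1-P x₀)) - 2*p*((1-R x₀)/(1-P x₀)-1))
                * (((1-R x₀)/(1-P x₀)) * P x))]
          rw [Finset.sum_sub_distrib, Finset.sum_add_distrib, ← Finset.sum_mul,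
            ← Finset.mul_sum, ← Finset.mul_sum, hQ, hPt, ← Finset.mul_sum, hQ]
          ring
        rw [hQtb, sub_self, mul_zero, add_zero] at step
        calc (1-P x₀) * (((1-R x₀)/(1-P x₀)) * Real.log ((1-R x₀)/(1-P x₀))
              - (1-R x₀)/(1-P x₀) + 1 - p*((1-R x₀)/(1-P x₀)-1)^2)
            = ∑ x ∈ Finset.univ.erase x₀,
              P x * ((((1-R x₀)/(1-P x₀)) * Real.log ((1-R x₀)/(1-P x₀))
                - (1-R x₀)/(1-P x₀) + 1 - p*((1-R x₀)/(1-P x₀)-1)^2)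
              + (Real.log ((1-R x₀)/(1-P x₀)) - 2*p*((1-R x₀)/(1-P x₀)-1))
                * (R x/P x - (1-R x₀)/(1-P x₀))) := step.symm
          _ ≤ _ := Finset.sum_le_sum hline
      rw [hform]
      exact hsumline
  -- x₀ term
  have hx0term : P x₀ * ((R x₀/P x₀) * Real.log (R x₀/P x₀) - R x₀/P x₀ + 1
        - p*(R x₀/P x₀ - 1)^2)
      = R x₀ * Real.log (R x₀/P x₀) - R x₀ + P x₀ - p*(R x₀-P x₀)^2/P x₀ := by
    field_simp
  have hsplit : P x₀ * ((R x₀/P x₀) * Real.log (R x₀/P x₀) - R x₀/P x₀ + 1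
        - p*(R x₀/P x₀ - 1)^2)
      + ∑ x ∈ Finset.univ.erase x₀,
          P x * ((R x/P x) * Real.log (R x/P x) - R x/P x + 1 - p*(R x/P x - 1)^2)
      = ∑ x, P x * ((R x/P x) * Real.log (R x/P x) - R x/P x + 1 - p*(R x/P x - 1)^2) :=
    Finset.add_sum_erase Finset.univ
      (fun x => P x * ((R x/P x) * Real.log (R x/P x) - R x/P x + 1 - p*(R x/P x - 1)^2))
      (Finset.mem_univ x₀)
  have hbin := binary_kl_ge hq0pos hq0lt1 hr00 hr01
  have hmax : p*(R x₀-P x₀)^2/P x₀ + p*(R x₀-P x₀)^2/(1-P x₀)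
      ≤ (R x₀-P x₀)^2 / max (P x₀) (1-P x₀) := by
    have hX : 0 ≤ (R x₀-P x₀)^2 := sq_nonneg _
    rcases max_cases (P x₀) (1-P x₀) with ⟨hmx, hc⟩ | ⟨hmx, hc⟩ <;> rw [hmx] <;>
      rw [div_add_div _ _ hq0pos.ne' hBpos.ne']
    · rw [div_le_div_iff₀ (mul_pos hq0pos hBpos) hq0pos]
      nlinarith [mul_nonneg (mul_nonneg hX hq0pos.le) (sub_nonneg.2 hQgep),
        mul_nonneg (mul_nonneg hX hq0pos.le) hBpos.le]
    · rw [div_le_div_iff₀ (mul_pos hq0pos hBpos) hBpos]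
      nlinarith [mul_nonneg (mul_nonneg hX hBpos.le) (sub_nonneg.2 (hpP x₀)),
        mul_nonneg (mul_nonneg hX hBpos.le) hq0pos.le]
  have hgoal : 0 ≤ klDiv R P - p * chiSq R P := by
    rw [hmain, ← hsplit, hx0term]
    have hfinal : (R x₀-P x₀)^2 / max (P x₀) (1-P x₀)
        - p*(R x₀-P x₀)^2/P x₀ - p*(R x₀-P x₀)^2/(1-P x₀) ≥ 0 := by linarith
    linarith [herase, hbin, hmax]
  linarith

end key

section pert
variable {𝒳 : Type*} [Fintype 𝒳]

lemma kl_pert_upper (A B : 𝒳 → ℝ) (hB : ∀ x, 0 < B x) (hsum : ∑ x, A x = ∑ x, B x)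
    (a : ℝ) (ha : 0 < a) (ha1 : a ≤ 1) (hta : ∀ x, a ≤ A x / B x) :
    klDiv A B ≤ chiSq A B / (2*a) := by
  rw [klDiv_eq A B hsum]
  unfold chiSq
  rw [Finset.sum_div]
  apply Finset.sum_le_sum
  intro x _
  have hphi := phi_le_comb ha ha1 (hta x)
  have := mul_le_mul_of_nonneg_left hphi (hB x).le
  rw [term_phi (hB x).ne'] at this
  calc A x * Real.log (A x / B x) - A x + B x
      ≤ B x * ((A x/B x - 1)^2/(2*a)) := this
    _ = (A x - B x)^2 / B x / (2*a) := by
        have hBne := (hB x).ne'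
        have hane := ha.ne'
        field_simp
  
lemma kl_pert_lower (A B : 𝒳 → ℝ) (hA : ∀ x, 0 ≤ A x) (hB : ∀ x, 0 < B x)
    (hsum : ∑ x, A x = ∑ x, B x) (c : ℝ) (hc : 0 ≤ c) (h2c : 2*c ≤ 1)
    (hct : ∀ x, 2*c*(A x / B x) ≤ 1) :
    c * chiSq A B ≤ klDiv A B := by
  rw [klDiv_eq A B hsum]
  unfold chiSq
  rw [Finset.mul_sum]
  apply Finset.sum_le_sum
  intro x _
  have hphi := phi_ge c (A x / B x) hc (div_nonneg (hA x) (hB x).le) h2c (hct x)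
  have := mul_le_mul_of_nonneg_left hphi (hB x).le
  rw [term_phi (hB x).ne'] at this
  calc c * ((A x - B x)^2 / B x) = B x * (c * (A x/B x - 1)^2) := by
        have hBne := (hB x).ne'
        field_simp
    _ ≤ A x * Real.log (A x / B x) - A x + B x := by linarith [this]

lemma chiSq_pert (R P : 𝒳 → ℝ) (hP : ∀ x, 0 < P x) (ε : ℝ) :
    chiSq (fun x => P x + ε*(R x - P x)) P = ε^2 * chiSq R P := by
  unfold chiSq
  rw [Finset.mul_sum]
  apply Finset.sum_congr rfl
  intro x _
  field_simp
  ring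

lemma chanApply_pert {𝒴 : Type*} [Fintype 𝒴] (W : 𝒴 → 𝒳 → ℝ) (R P : 𝒳 → ℝ) (ε : ℝ) (y : 𝒴) :
    chanApply W (fun x => P x + ε*(R x - P x)) y
      = chanApply W P y + ε*(chanApply W R y - chanApply W P y) := by
  unfold chanApply
  rw [Finset.sum_congr rfl (fun x _ => by ring :
      ∀ x ∈ Finset.univ, W y x * (P x + ε*(R x - P x))
        = W y x * P x + (ε * (W y x * R x) - ε * (W y x * P x))),
    Finset.sum_add_distrib, Finset.sum_sub_distrib, ← Finset.mul_sum, ← Finset.mul_sum]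
  ring

end pert

set_option maxHeartbeats 1600000 in
/-- **Theorem 2 (Contraction Coefficient Bound).**
`η_{χ²}(P_X,W) ≤ η_{KL}(P_X,W) ≤ η_{χ²}(P_X,W) / min_x P_X(x)`. -/
theorem contraction_coefficient_bound
    {𝒳 𝒴 : Type*} [Fintype 𝒳] [Fintype 𝒴] [Nonempty 𝒳]
    (hcardX : 2 ≤ Fintype.card 𝒳) (hcardY : 2 ≤ Fintype.card 𝒴)
    (PX : 𝒳 → ℝ) (W : 𝒴 → 𝒳 → ℝ)
    (hPX : IsPmf PX) (hPXpos : ∀ x, 0 < PX x)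
    (hW : IsChannel W) (hPY : ∀ y, 0 < chanApply W PX y) :
    etaChi PX W ≤ etaKL PX W ∧
      etaKL PX W ≤ etaChi PX W / Finset.univ.inf' Finset.univ_nonempty PX := by
  classical
  haveI hYne : Nonempty 𝒴 := Fintype.card_pos_iff.mp (by omega)
  set pm := Finset.univ.inf' Finset.univ_nonempty PX with hpmdef
  have hpmle : ∀ x, pm ≤ PX x := fun x => Finset.inf'_le PX (Finset.mem_univ x)
  have hpm0 : 0 < pm := (Finset.lt_inf'_iff _).mpr (fun x _ => hPXpos x)
  have hpairsum : ∀ u v : 𝒳, u ≠ v → PX u + PX v ≤ 1 := by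
    intro u v huv
    rw [← hPX.2]
    calc PX u + PX v = ∑ z ∈ ({u, v} : Finset 𝒳), PX z := by rw [Finset.sum_pair huv]
      _ ≤ ∑ z, PX z := Finset.sum_le_sum_of_subset_of_nonneg (Finset.subset_univ _)
          (fun z _ _ => hPX.1 z)
  have hPXle1' : ∀ x, PX x ≤ 1 - pm := by
    intro x
    obtain ⟨z, hz⟩ := Fintype.exists_ne_of_one_lt_card (by omega : 1 < Fintype.card 𝒳) x
    have := hpairsum x z (Ne.symm hz)
    linarith [hpmle z]
  have h2pm : 2*pm ≤ 1 := by
    obtain ⟨a, b, hab⟩ := Fintype.exists_pair_of_one_lt_card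
      (by omega : 1 < Fintype.card 𝒳)
    have := hpairsum a b hab
    linarith [hpmle a, hpmle b]
  have hWRsum : ∀ R : 𝒳 → ℝ, IsPmf R → ∑ y, chanApply W R y = 1 := by
    intro R hR
    rw [sum_chanApply W R hW, hR.2]
  -- bddAbove of both sets
  have hbddKL : BddAbove {r : ℝ | ∃ R : 𝒳 → ℝ, IsPmf R ∧ 0 < klDiv R PX ∧
      r = klDiv (chanApply W R) (chanApply W PX) / klDiv R PX} := by
    refine ⟨1, ?_⟩
    rintro r ⟨R, hR, hD, rfl⟩
    rw [div_le_one hD]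
    exact kl_dpi W R PX hW hR.1 hPXpos hPY
  have hbddChi : BddAbove {r : ℝ | ∃ R : 𝒳 → ℝ, IsPmf R ∧ 0 < chiSq R PX ∧
      r = chiSq (chanApply W R) (chanApply W PX) / chiSq R PX} := by
    refine ⟨1, ?_⟩
    rintro r ⟨R, hR, hC, rfl⟩
    rw [div_le_one hC]
    exact chi_dpi W R PX hW hPXpos hPY
  -- nonemptiness via a point mass
  obtain ⟨a, b, hab⟩ := Fintype.exists_pair_of_one_lt_card (by omega : 1 < Fintype.card 𝒳)
  have hPXa1 : PX a < 1 := by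
    have := hpairsum a b hab
    linarith [hPXpos b]
  have hR0 : IsPmf (fun x : 𝒳 => if x = a then (1:ℝ) else 0) := by
    constructor
    · intro x; by_cases h : x = a <;> simp [h]
    · simp
  have hDR0pos : 0 < klDiv (fun x : 𝒳 => if x = a then (1:ℝ) else 0) PX := by
    have heq : klDiv (fun x : 𝒳 => if x = a then (1:ℝ) else 0) PX = - Real.log (PX a) := by
      unfold klDiv
      rw [Finset.sum_eq_single a]
      · show (if a = a then (1:ℝ) else 0) * Real.log ((if a = a then (1:ℝ) else 0) / PX a)
            = - Real.log (PX a)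
        rw [if_pos rfl, one_mul, one_div, Real.log_inv]
      · intro x _ hxa; simp [hxa]
      · intro h; exact absurd (Finset.mem_univ a) h
    rw [heq]
    have := Real.log_neg (hPXpos a) hPXa1
    linarith
  have hCR0pos : 0 < chiSq (fun x : 𝒳 => if x = a then (1:ℝ) else 0) PX := by
    have h2 := klDiv_le_chiSq (fun x : 𝒳 => if x = a then (1:ℝ) else 0) PX hR0.1 hPXpos
      (by rw [hR0.2, hPX.2])
    linarith
  have hKLne : Set.Nonempty {r : ℝ | ∃ R : 𝒳 → ℝ, IsPmf R ∧ 0 < klDiv R PX ∧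
      r = klDiv (chanApply W R) (chanApply W PX) / klDiv R PX} :=
    ⟨_, ⟨_, hR0, hDR0pos, rfl⟩⟩
  have hChine : Set.Nonempty {r : ℝ | ∃ R : 𝒳 → ℝ, IsPmf R ∧ 0 < chiSq R PX ∧
      r = chiSq (chanApply W R) (chanApply W PX) / chiSq R PX} :=
    ⟨_, ⟨_, hR0, hCR0pos, rfl⟩⟩
  have hChi0 : 0 ≤ etaChi PX W := by
    have hmem : chiSq (chanApply W (fun x : 𝒳 => if x = a then (1:ℝ) else 0)) (chanApply W PX)
        / chiSq (fun x : 𝒳 => if x = a then (1:ℝ) else 0) PX ∈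
        {r : ℝ | ∃ R : 𝒳 → ℝ, IsPmf R ∧ 0 < chiSq R PX ∧
          r = chiSq (chanApply W R) (chanApply W PX) / chiSq R PX} := ⟨_, hR0, hCR0pos, rfl⟩
    have hle : chiSq (chanApply W (fun x : 𝒳 => if x = a then (1:ℝ) else 0)) (chanApply W PX)
        / chiSq (fun x : 𝒳 => if x = a then (1:ℝ) else 0) PX ≤ etaChi PX W :=
      le_csSup hbddChi hmem
    have hnn : 0 ≤ chiSq (chanApply W (fun x : 𝒳 => if x = a then (1:ℝ) else 0)) (chanApply W PX)
        / chiSq (fun x : 𝒳 => if x = a then (1:ℝ) else 0) PX :=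
      div_nonneg (chiSq_nonneg _ _ hPY) hCR0pos.le
    linarith
  -- min of output distribution
  set pY := Finset.univ.inf' Finset.univ_nonempty (chanApply W PX) with hpYdef
  have hpYle : ∀ y, pY ≤ chanApply W PX y :=
    fun y => Finset.inf'_le (chanApply W PX) (Finset.mem_univ y)
  have hpY0 : 0 < pY := (Finset.lt_inf'_iff _).mpr (fun y _ => hPY y)
  set K := 1/pm + 1/pY with hKdef
  have hK0 : 0 ≤ K := by rw [hKdef]; positivity
  constructor
  · -- part 1 : etaChi ≤ etaKL
    apply csSup_le hChine
    rintro r ⟨R, hRpmf, hCpos, rfl⟩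
    have hRle1 : ∀ x, R x ≤ 1 := by
      intro x
      calc R x ≤ ∑ z, R z := Finset.single_le_sum (fun z _ => hRpmf.1 z) (Finset.mem_univ x)
        _ = 1 := hRpmf.2
    have hr0 : 0 ≤ chiSq (chanApply W R) (chanApply W PX) / chiSq R PX :=
      div_nonneg (chiSq_nonneg _ _ hPY) hCpos.le
    have hstep : ∀ ε : ℝ, 0 < ε → ε ≤ 1/2 →
        chiSq (chanApply W R) (chanApply W PX) / chiSq R PX * ((1-ε)/(1+ε*K))
          ≤ etaKL PX W := by
      intro ε hε hε2
      have hd : 0 < 1 + ε*K := by nlinarith [mul_nonneg hε.le hK0]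
      have hRεnn : ∀ x, 0 ≤ PX x + ε*(R x - PX x) := by
        intro x
        nlinarith [hPXpos x, hRpmf.1 x]
      have hRεsum : ∑ x, (PX x + ε*(R x - PX x)) = ∑ x, PX x := by
        rw [Finset.sum_add_distrib, ← Finset.mul_sum, Finset.sum_sub_distrib,
          hPX.2, hRpmf.2]
        ring
      have hRεpmf : IsPmf (fun x => PX x + ε*(R x - PX x)) :=
        ⟨hRεnn, by rw [hRεsum, hPX.2]⟩
      have hta : ∀ x, 1-ε ≤ (PX x + ε*(R x - PX x)) / PX x := by
        intro x
        rw [le_div_iff₀ (hPXpos x)]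
        nlinarith [hRpmf.1 x, hPXpos x]
      have hKPX : ∀ x, (1:ℝ) ≤ K * PX x := by
        intro x
        rw [hKdef]
        have h1 : 1 ≤ PX x / pm := (one_le_div hpm0).mpr (hpmle x)
        have h2 : 0 ≤ PX x / pY := div_nonneg (hPXpos x).le hpY0.le
        have e1 : PX x / pm = 1/pm * PX x := by ring
        have e2 : PX x / pY = 1/pY * PX x := by ring
        nlinarith
      have htb : ∀ x, 2*(1/(2*(1+ε*K)))*((PX x + ε*(R x - PX x)) / PX x) ≤ 1 := by
        intro x
        have htx : (PX x + ε*(R x - PX x)) / PX x ≤ 1 + ε*K := by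
          rw [div_le_iff₀ (hPXpos x)]
          nlinarith [hKPX x, hRle1 x, hPXpos x]
        have e : 2*(1/(2*(1+ε*K))) = 1/(1+ε*K) := by field_simp
        rw [e, div_mul_eq_mul_div, div_le_one hd, one_mul]
        exact htx
      have hc0 : (0:ℝ) ≤ 1/(2*(1+ε*K)) := by positivity
      have hc1 : 2*(1/(2*(1+ε*K))) ≤ 1 := by
        have e : 2*(1/(2*(1+ε*K))) = 1/(1+ε*K) := by field_simp
        rw [e, div_le_one hd]
        nlinarith
      -- denominator bounds
      have hDub : klDiv (fun x => PX x + ε*(R x - PX x)) PX ≤ (ε^2 * chiSq R PX)/(2*(1-ε)) := by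
        have := kl_pert_upper (fun x => PX x + ε*(R x - PX x)) PX hPXpos hRεsum
          (1-ε) (by linarith) (by linarith) hta
        rwa [chiSq_pert R PX hPXpos ε] at this
      have hDlb : (1/(2*(1+ε*K))) * (ε^2 * chiSq R PX)
          ≤ klDiv (fun x => PX x + ε*(R x - PX x)) PX := by
        have := kl_pert_lower (fun x => PX x + ε*(R x - PX x)) PX hRεnn hPXpos hRεsum
          (1/(2*(1+ε*K))) hc0 hc1 htb
        rwa [chiSq_pert R PX hPXpos ε] at this
      have hDpos : 0 < klDiv (fun x => PX x + ε*(R x - PX x)) PX := by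
        have hpos : 0 < (1/(2*(1+ε*K))) * (ε^2 * chiSq R PX) := by positivity
        linarith
      -- numerator bound
      have hAfun : chanApply W (fun x => PX x + ε*(R x - PX x))
          = fun y => chanApply W PX y + ε*(chanApply W R y - chanApply W PX y) :=
        funext (chanApply_pert W R PX ε)
      have hNlb : (1/(2*(1+ε*K))) * (ε^2 * chiSq (chanApply W R) (chanApply W PX))
          ≤ klDiv (chanApply W (fun x => PX x + ε*(R x - PX x))) (chanApply W PX) := by
        rw [hAfun]
        have hWRnn : ∀ y, 0 ≤ chanApply W R y := chanApply_nonneg W R hW hRpmf.1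
        have hWRle1 : ∀ y, chanApply W R y ≤ 1 := chanApply_le_one W R hW hRpmf
        have hsumY : ∑ y, (chanApply W PX y + ε*(chanApply W R y - chanApply W PX y))
            = ∑ y, chanApply W PX y := by
          rw [Finset.sum_add_distrib, ← Finset.mul_sum, Finset.sum_sub_distrib,
            hWRsum R hRpmf, hWRsum PX hPX]
          ring
        have hKPY : ∀ y, (1:ℝ) ≤ K * chanApply W PX y := by
          intro y
          rw [hKdef]
          have h1 : 1 ≤ chanApply W PX y / pY := (one_le_div hpY0).mpr (hpYle y)
          have h2 : 0 ≤ chanApply W PX y / pm := div_nonneg (hPY y).le hpm0.le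
          have e1 : chanApply W PX y / pY = 1/pY * chanApply W PX y := by ring
          have e2 : chanApply W PX y / pm = 1/pm * chanApply W PX y := by ring
          nlinarith
        have htbY : ∀ y, 2*(1/(2*(1+ε*K)))
            *((chanApply W PX y + ε*(chanApply W R y - chanApply W PX y)) / chanApply W PX y)
            ≤ 1 := by
          intro y
          have htx : (chanApply W PX y + ε*(chanApply W R y - chanApply W PX y))
              / chanApply W PX y ≤ 1 + ε*K := by
            rw [div_le_iff₀ (hPY y)]
            nlinarith [hKPY y, hWRle1 y, hPY y]
          have e : 2*(1/(2*(1+ε*K))) = 1/(1+ε*K) := by field_simp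
          rw [e, div_mul_eq_mul_div, div_le_one hd, one_mul]
          exact htx
        have hAnnY : ∀ y, 0 ≤ chanApply W PX y + ε*(chanApply W R y - chanApply W PX y) := by
          intro y
          nlinarith [hPY y, hWRnn y]
        have := kl_pert_lower
          (fun y => chanApply W PX y + ε*(chanApply W R y - chanApply W PX y))
          (chanApply W PX) hAnnY hPY hsumY (1/(2*(1+ε*K))) hc0 hc1 htbY
        rwa [chiSq_pert (chanApply W R) (chanApply W PX) hPY ε] at this
      -- membership and ratio comparison
      have hmem : klDiv (chanApply W (fun x => PX x + ε*(R x - PX x))) (chanApply W PX)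
            / klDiv (fun x => PX x + ε*(R x - PX x)) PX ∈
          {r : ℝ | ∃ R : 𝒳 → ℝ, IsPmf R ∧ 0 < klDiv R PX ∧
            r = klDiv (chanApply W R) (chanApply W PX) / klDiv R PX} :=
        ⟨_, hRεpmf, hDpos, rfl⟩
      have hle : klDiv (chanApply W (fun x => PX x + ε*(R x - PX x))) (chanApply W PX)
            / klDiv (fun x => PX x + ε*(R x - PX x)) PX ≤ etaKL PX W :=
        le_csSup hbddKL hmem
      have hratio : chiSq (chanApply W R) (chanApply W PX) / chiSq R PX * ((1-ε)/(1+ε*K))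
          ≤ klDiv (chanApply W (fun x => PX x + ε*(R x - PX x))) (chanApply W PX)
            / klDiv (fun x => PX x + ε*(R x - PX x)) PX := by
        rw [le_div_iff₀ hDpos]
        have hlhs0 : 0 ≤ chiSq (chanApply W R) (chanApply W PX) / chiSq R PX * ((1-ε)/(1+ε*K)) := by
          exact mul_nonneg hr0 (div_nonneg (by linarith) hd.le)
        calc chiSq (chanApply W R) (chanApply W PX) / chiSq R PX * ((1-ε)/(1+ε*K))
              * klDiv (fun x => PX x + ε*(R x - PX x)) PX
            ≤ chiSq (chanApply W R) (chanApply W PX) / chiSq R PX * ((1-ε)/(1+ε*K))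
              * ((ε^2 * chiSq R PX)/(2*(1-ε))) := by
              exact mul_le_mul_of_nonneg_left hDub hlhs0
          _ = (1/(2*(1+ε*K))) * (ε^2 * chiSq (chanApply W R) (chanApply W PX)) := by
              have h1 : chiSq R PX ≠ 0 := hCpos.ne'
              have h2 : (1:ℝ)-ε ≠ 0 := by linarith
              have h3 : (1:ℝ)+ε*K ≠ 0 := hd.ne'
              field_simp
          _ ≤ klDiv (chanApply W (fun x => PX x + ε*(R x - PX x))) (chanApply W PX) := hNlb
      linarith
    -- take ε → 0
    apply le_of_forall_pos_le_add
    intro δ hδ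
    have ha1 : 0 < chiSq (chanApply W R) (chanApply W PX) / chiSq R PX * (1+K) + 1 := by
      nlinarith [mul_nonneg hr0 (by linarith : (0:ℝ) ≤ 1+K)]
    have hεpos : 0 < min (1/2) (δ/(chiSq (chanApply W R) (chanApply W PX) / chiSq R PX * (1+K) + 1)) := by
      exact lt_min (by norm_num) (div_pos hδ ha1)
    set ε := min (1/2) (δ/(chiSq (chanApply W R) (chanApply W PX) / chiSq R PX * (1+K) + 1)) with hεdef
    have hεhalf : ε ≤ 1/2 := min_le_left _ _
    have h := hstep ε hεpos hεhalf
    have hd : 0 < 1 + ε*K := by nlinarith [mul_nonneg hεpos.le hK0]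
    have hb : chiSq (chanApply W R) (chanApply W PX) / chiSq R PX
        - chiSq (chanApply W R) (chanApply W PX) / chiSq R PX * ε * (1+K)
        ≤ chiSq (chanApply W R) (chanApply W PX) / chiSq R PX * ((1-ε)/(1+ε*K)) := by
      rw [mul_div_assoc'] at *
      rw [le_div_iff₀ hd]
      nlinarith [mul_nonneg (mul_nonneg (mul_nonneg hr0 (mul_pos hεpos hεpos).le) hK0)
        (by linarith : (0:ℝ) ≤ 1+K)]
    have hεle : ε ≤ δ/(chiSq (chanApply W R) (chanApply W PX) / chiSq R PX * (1+K) + 1) :=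
      min_le_right _ _
    rw [le_div_iff₀ ha1] at hεle
    have hc : chiSq (chanApply W R) (chanApply W PX) / chiSq R PX * ε * (1+K) ≤ δ := by
      nlinarith [hεpos.le]
    linarith
  · -- part 2 : etaKL ≤ etaChi / pm
    apply csSup_le hKLne
    rintro r ⟨R, hRpmf, hDpos, rfl⟩
    have hsums : ∑ x, R x = ∑ x, PX x := by rw [hRpmf.2, hPX.2]
    have hXle : klDiv R PX ≤ chiSq R PX := klDiv_le_chiSq R PX hRpmf.1 hPXpos hsums
    have hχXpos : 0 < chiSq R PX := lt_of_lt_of_le hDpos hXle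
    have hN : klDiv (chanApply W R) (chanApply W PX) ≤ chiSq (chanApply W R) (chanApply W PX) :=
      klDiv_le_chiSq (chanApply W R) (chanApply W PX) (chanApply_nonneg W R hW hRpmf.1) hPY
        (by rw [hWRsum R hRpmf, hWRsum PX hPX])
    have hmemChi : chiSq (chanApply W R) (chanApply W PX) / chiSq R PX ∈
        {r : ℝ | ∃ R : 𝒳 → ℝ, IsPmf R ∧ 0 < chiSq R PX ∧
          r = chiSq (chanApply W R) (chanApply W PX) / chiSq R PX} :=
      ⟨R, hRpmf, hχXpos, rfl⟩
    have hratio : chiSq (chanApply W R) (chanApply W PX) / chiSq R PX ≤ etaChi PX W :=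
      le_csSup hbddChi hmemChi
    have hChiY : chiSq (chanApply W R) (chanApply W PX) ≤ etaChi PX W * chiSq R PX :=
      (div_le_iff₀ hχXpos).mp hratio
    have hkey := chi_le_kl_div_p PX R pm hpm0 hpmle hPXle1' h2pm hPX hRpmf
    rw [div_le_div_iff₀ hDpos hpm0]
    nlinarith [mul_le_mul_of_nonneg_left hkey hChi0, hN, hChiY, hχXpos, hpm0]
end

section
/- Let f:(0,∞)→ℝ be a convex function with f(1)=0 that is strictly convex at 1, thrice differentiable at 1 with f''(1)>0, satisfies (f(t) − f'(1)(t−1))·(1 − (f'''(1)/(3f''(1)))(t−1)) ≥ (f''(1)/2)(t−1)² for every t∈(0,∞), and is such that the difference quotient g:(0,∞)→ℝ, g(x)=(f(x)−f(0))/x, is concave (where f(0)=lim_{t→0⁺}f(t) is assumed finite). Let P_X be a pmf on 𝒳 with P_X(x)>0 for all x, and let W be a channel from 𝒳 to 𝒴 such that P_Y = W P_X satisfies P_Y(y)>0 for all y. Then η_{χ²}(P_X,W) ≤ η_f(P_X,W) ≤ (f'(1)+f(0)) / ( f''(1) · min_{x∈𝒳} P_X(x) ) · η_{χ²}(P_X,W).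 -/
/-- f-divergence `D_f(R‖P) = ∑ₓ P(x) f(R(x)/P(x))` (used here with `P > 0` and with
`f(0) = lim_{t→0⁺} f(t)` finite, so it is real-valued). -/
noncomputable def fDiv {𝒳 : Type*} [Fintype 𝒳] (f : ℝ → ℝ) (R P : 𝒳 → ℝ) : ℝ :=
  ∑ x, P x * f (R x / P x)

/-- Contraction coefficient for the f-divergence. -/
noncomputable def etaF {𝒳 𝒴 : Type*} [Fintype 𝒳] [Fintype 𝒴]
    (f : ℝ → ℝ) (P : 𝒳 → ℝ) (W : 𝒴 → 𝒳 → ℝ) : ℝ :=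
  sSup {r : ℝ | ∃ R : 𝒳 → ℝ, IsPmf R ∧ 0 < fDiv f R P ∧
    r = fDiv f (chanApply W R) (chanApply W P) / fDiv f R P}

namespace CCB
open Filter Set Topology Finset

lemma poly_ineq (p B σ : ℝ) (hp : 0 < p) (hp2 : 2*p ≤ 1) (hpB : p ≤ B) (hB1 : B < 1)
    (hσ0 : 0 ≤ σ) (hσ : σ ≤ 1 - B) :
    0 ≤ 2*p*B*σ^2 + ((1-2*p)*B*(1-B) + 2*p*(2*B-1))*σ + (1-2*p)*B*(1-B) := by
  set K1 := (1-2*p)*B*(1-B) + 2*p*(2*B-1) with hK1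
  have hB : 0 < B := lt_of_lt_of_le hp hpB
  have hK0 : 0 ≤ (1-2*p)*B*(1-B) :=
    mul_nonneg (mul_nonneg (by linarith) hB.le) (by linarith)
  rcases le_or_gt 0 K1 with h1 | h1
  · nlinarith [mul_nonneg h1 hσ0, mul_nonneg (mul_nonneg hp.le hB.le) (sq_nonneg σ)]
  · rcases le_or_gt K1 (-(4*p*B*(1-B))) with h2 | h2
    · have hqL : 0 ≤ 2*p*B*(1-B)^2 + K1*(1-B) + (1-2*p)*B*(1-B) := by
        nlinarith [mul_pos hp hB, mul_pos (mul_pos hp hB) (sub_pos.2 hB1)]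
      nlinarith [mul_nonneg (sub_nonneg.2 hσ) (sub_nonneg.2 hσ),
        mul_nonneg (mul_nonneg hp.le hB.le) (mul_nonneg (sub_nonneg.2 hσ) (sub_nonneg.2 hσ))]
    · have hdisc : K1^2 ≤ 8*p*B*((1-2*p)*B*(1-B)) := by
        nlinarith [sq_nonneg (B-p), sq_nonneg (1-2*p), mul_pos hp hB, sq_nonneg K1,
          mul_nonneg hp.le (sub_nonneg.2 hp2)]
      nlinarith [sq_nonneg (4*p*B*σ + K1), mul_pos hp hB]

lemma frac_ineq (p B β s : ℝ) (hp : 0 < p) (hp2 : 2*p ≤ 1) (hpB : p ≤ B)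
    (hβ : 0 < β) (hβB : β ≤ 1 - B) (hs0 : 0 ≤ s) (hs1 : s < 1) :
    2*p*β^2/B ≤ (1-2*p)*β^2/(1-B) + 2*p*s*β^3/(1-B)^2 + β^2/(B+s*β) := by
  have hB : 0 < B := lt_of_lt_of_le hp hpB
  have h1B : 0 < 1 - B := lt_of_lt_of_le hβ hβB
  have hBσ : 0 < B + s*β := by positivity
  have hsβ : s*β ≤ 1 - B := by nlinarith [mul_nonneg (sub_nonneg.2 hs1.le) hβ.le]
  have hq := poly_ineq p B (s*β) hp hp2 hpB (by linarith) (by positivity) hsβ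
  rw [← sub_nonneg]
  have hexpand : (1-2*p)*β^2/(1-B) + 2*p*s*β^3/(1-B)^2 + β^2/(B+s*β) - 2*p*β^2/B
      = ((2*p*B*(s*β)^2 + ((1-2*p)*B*(1-B) + 2*p*(2*B-1))*(s*β) + (1-2*p)*B*(1-B)) * β^2)
        / (B*(1-B)^2*(B+s*β)) := by
    field_simp
    ring
  rw [hexpand]
  exact div_nonneg (mul_nonneg hq (sq_nonneg β)) (by positivity)

lemma pt_core (P R p s : ℝ) (hD : 0 < P - R) (hs0 : 0 ≤ s)
    (h2pM : 2*p*(P - s*(P-R)) ≤ P) :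
    ((R-P)^2*P + 2*p*s*(P-R)^3)*(P-s*(P-R)) ≤ (R-P)^2*P^2 := by
  have hcert : 0 ≤ s*(P-R)^3*(P - 2*p*(P - s*(P-R))) :=
    mul_nonneg (mul_nonneg hs0 (pow_pos hD 3).le) (by linarith)
  nlinarith [hcert]

set_option maxHeartbeats 2000000 in
/-- The key combinatorial inequality: `∑ d²/M ≥ 2p·χ²` for `M = (1-s)P + sR`. -/
lemma key_sum {𝒳 : Type*} [Fintype 𝒳] (P R M : 𝒳 → ℝ)
    (hR0 : ∀ x, 0 ≤ R x) (hR1 : ∑ x, R x = 1) (hPpos : ∀ x, 0 < P x)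
    (hP1 : ∑ x, P x = 1)
    {p s : ℝ} (hple : ∀ x, p ≤ P x) (hppos : 0 < p) (hp2 : 2*p ≤ 1)
    (hs0 : 0 ≤ s) (hs1 : s < 1) (hMeq : ∀ x, M x = (1-s)*P x + s*R x) :
    2*p*(∑ x, (R x - P x)^2 / P x) ≤ ∑ x, (R x - P x)^2 / M x := by
  classical
  have hMpos : ∀ x, 0 < M x := fun x => by
    rw [hMeq x]; have h1 := hPpos x; have h2 := hR0 x; nlinarith
  have hgoodpt : ∀ x, 2*p*(M x) ≤ P x →
      2*p*((R x - P x)^2/P x) ≤ (R x - P x)^2/M x := by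
    intro x hx
    rw [← mul_div_assoc, div_le_div_iff₀ (hPpos x) (hMpos x)]
    nlinarith [sq_nonneg (R x - P x), hMpos x]
  rw [mul_sum]
  by_cases hgood : ∀ x, 2*p*(M x) ≤ P x
  · exact sum_le_sum (fun x _ => hgoodpt x (hgood x))
  push_neg at hgood
  obtain ⟨b, hb⟩ := hgood
  -- basic facts about the bad point
  have hRbP : P b < R b := by
    by_contra h; push_neg at h
    have hMb : M b ≤ P b := by rw [hMeq b]; nlinarith
    nlinarith [hPpos b, hMpos b]
  have hβpos : 0 < R b - P b := by linarith
  have hMbR : M b ≤ R b := by rw [hMeq b]; nlinarith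
  have hRbhalf : 1/2 < R b := by
    have h1 : p < 2*p*(M b) := lt_of_le_of_lt (hple b) hb
    nlinarith
  have hgoodother : ∀ x, x ≠ b → 2*p*(M x) ≤ P x := by
    intro x hxb
    by_contra h; push_neg at h
    have hRxP : P x < R x := by
      by_contra h2; push_neg at h2
      have hMx : M x ≤ P x := by rw [hMeq x]; nlinarith
      nlinarith [hPpos x, hMpos x]
    have hMxR : M x ≤ R x := by rw [hMeq x]; nlinarith
    have hRx : 1/2 < R x := by
      have h1 : p < 2*p*(M x) := lt_of_le_of_lt (hple x) h
      nlinarith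
    have hsum : R b + R x ≤ 1 := by
      rw [← hR1, ← Finset.sum_pair (Ne.symm hxb)]
      exact Finset.sum_le_sum_of_subset_of_nonneg (Finset.subset_univ _)
        (fun i _ _ => hR0 i)
    linarith
  set S : Finset 𝒳 := Finset.univ.filter (fun x => R x < P x) with hS
  have hbS : b ∉ S := by simp [hS, not_lt.2 hRbP.le]
  have hDpos : ∀ x ∈ S, 0 < P x - R x := by
    intro x hx
    have : R x < P x := by simpa [hS] using hx
    linarith
  set m : ℝ := ∑ x ∈ S, (P x - R x) with hm
  set Q : ℝ := ∑ x ∈ S, P x with hq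
  have hsum0 : ∑ x, (R x - P x) = 0 := by
    rw [Finset.sum_sub_distrib, hR1, hP1]; ring
  have hmS : ∑ x ∈ S, (R x - P x) = -m := by
    have h0 : ∑ x ∈ S, ((P x - R x) + (R x - P x)) = 0 := by
      simp
    rw [Finset.sum_add_distrib] at h0
    rw [hm]; linarith
  have hmb : R b - P b ≤ m := by
    have hsplit : ∑ x ∈ S, (R x - P x) + ∑ x ∈ Sᶜ, (R x - P x) = 0 := by
      rw [Finset.sum_add_sum_compl]; exact hsum0
    have hcompl : ∑ x ∈ Sᶜ, (R x - P x) = m := by rw [hmS] at hsplit; linarith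
    have hb' : b ∈ Sᶜ := Finset.mem_compl.2 hbS
    have : R b - P b ≤ ∑ x ∈ Sᶜ, (R x - P x) := by
      refine Finset.single_le_sum (f := fun x => R x - P x) (fun i hi => ?_) hb'
      have h3 : ¬ (R i < P i) := by
        have := Finset.mem_compl.1 hi
        simpa [hS] using this
      linarith [not_lt.1 h3]
    linarith
  have hmpos : 0 < m := lt_of_lt_of_le hβpos hmb
  have hmQ : m ≤ Q := Finset.sum_le_sum (fun x hx => by linarith [hR0 x])
  have hQpos : 0 < Q := lt_of_lt_of_le hmpos hmQ
  have hQ1B : Q ≤ 1 - P b := by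
    have hsub : S ⊆ Finset.univ.erase b := fun x hx =>
      Finset.mem_erase.2 ⟨fun h => hbS (h ▸ hx), Finset.mem_univ x⟩
    calc Q ≤ ∑ x ∈ Finset.univ.erase b, P x :=
          Finset.sum_le_sum_of_subset_of_nonneg hsub (fun i _ _ => (hPpos i).le)
    _ = 1 - P b := by rw [Finset.sum_erase_eq_sub (Finset.mem_univ b), hP1]
  -- Engel form bounds
  have hE1 : m^2/Q ≤ ∑ x ∈ S, (P x - R x)^2/P x := by
    simpa [hm, hq] using
      Finset.sq_sum_div_le_sum_sq_div S (fun x => P x - R x) (fun i _ => hPpos i)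
  have hApos : 0 ≤ ∑ x ∈ S, (P x - R x)^2/P x :=
    Finset.sum_nonneg fun i _ => div_nonneg (sq_nonneg _) (hPpos i).le
  have hE2 : m^3/Q^2 ≤ ∑ x ∈ S, (P x - R x)^3/P x^2 := by
    have hE : (∑ x ∈ S, (P x - R x)^2/P x)^2 / m ≤ ∑ x ∈ S, (P x - R x)^3/P x^2 := by
      have h := Finset.sq_sum_div_le_sum_sq_div S (fun x => (P x - R x)^2/P x)
        (g := fun x => P x - R x) hDpos
      have hrw : ∀ x ∈ S, ((P x - R x)^2/P x)^2/(P x - R x) = (P x - R x)^3/P x^2 := by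
        intro x hx
        have h1 := (hPpos x).ne'
        have h2 := (hDpos x hx).ne'
        field_simp
      rw [Finset.sum_congr rfl hrw] at h
      simpa [hm] using h
    refine le_trans ?_ hE
    rw [div_le_div_iff₀ (pow_pos hQpos 2) hmpos]
    have h1 : m^2 ≤ (∑ x ∈ S, (P x - R x)^2/P x) * Q := by
      rw [div_le_iff₀ hQpos] at hE1; linarith
    nlinarith [mul_le_mul h1 h1 (sq_nonneg m) (mul_nonneg hApos hQpos.le)]
  -- pointwise bound on S
  have hSpt : ∀ x ∈ S, (R x - P x)^2/P x + 2*p*s*((P x - R x)^3/P x^2)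
      ≤ (R x - P x)^2/M x := by
    intro x hx
    have hPx := hPpos x
    have hMx := hMpos x
    have hD := hDpos x hx
    have h2pM : 2*p*(M x) ≤ P x := hgoodother x (fun h => hbS (h ▸ hx))
    have hcomb : (R x - P x)^2/P x + 2*p*s*((P x - R x)^3/P x^2)
        = ((R x - P x)^2*(P x) + 2*p*s*(P x - R x)^3)/(P x)^2 := by
      field_simp
    have hMval : M x = P x - s*(P x - R x) := by rw [hMeq x]; ring
    rw [hcomb, div_le_div_iff₀ (pow_pos hPx 2) hMx, hMval]
    rw [hMval] at h2pM
    exact pt_core (P x) (R x) p s hD hs0 h2pM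
  -- sum over S
  have hsumS : (1-2*p)*(m^2/Q) + 2*p*s*(m^3/Q^2)
      ≤ ∑ x ∈ S, ((R x - P x)^2/M x - 2*p*((R x - P x)^2/P x)) := by
    have pt : ∀ x ∈ S, (1-2*p)*((P x - R x)^2/P x) + 2*p*s*((P x - R x)^3/P x^2)
        ≤ (R x - P x)^2/M x - 2*p*((R x - P x)^2/P x) := by
      intro x hx
      have h := hSpt x hx
      have heq : (R x - P x)^2 = (P x - R x)^2 := by ring
      rw [heq] at h ⊢
      linarith
    calc (1-2*p)*(m^2/Q) + 2*p*s*(m^3/Q^2)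
        ≤ (1-2*p)*(∑ x ∈ S, (P x - R x)^2/P x)
          + 2*p*s*(∑ x ∈ S, (P x - R x)^3/P x^2) := by
          have t1 := mul_le_mul_of_nonneg_left hE1 (by linarith : (0:ℝ) ≤ 1-2*p)
          have t2 := mul_le_mul_of_nonneg_left hE2 (by positivity : (0:ℝ) ≤ 2*p*s)
          linarith
    _ = ∑ x ∈ S, ((1-2*p)*((P x - R x)^2/P x) + 2*p*s*((P x - R x)^3/P x^2)) := by
          rw [Finset.sum_add_distrib, Finset.mul_sum, Finset.mul_sum]
    _ ≤ _ := Finset.sum_le_sum pt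
  -- the bad point against the rest
  have hβ1B : R b - P b ≤ 1 - P b := by
    have : R b ≤ 1 := by
      rw [← hR1]
      exact Finset.single_le_sum (fun i _ => hR0 i) (Finset.mem_univ b)
    linarith
  have hfb : 2*p*((R b - P b)^2/P b) - (R b - P b)^2/M b
      ≤ (1-2*p)*(m^2/Q) + 2*p*s*(m^3/Q^2) := by
    set β := R b - P b with hβ
    set B := P b with hB
    have hBpos : 0 < B := hPpos b
    have h1B : 0 < 1 - B := lt_of_lt_of_le hβpos hβ1B
    have hMb : M b = B + s*β := by rw [hMeq b]; ring
    have hfrac := frac_ineq p B β s hppos hp2 (hple b) hβpos hβ1B hs0 hs1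
    have hst2 : (1-2*p)*β^2/(1-B) ≤ (1-2*p)*(m^2/Q) := by
      rw [mul_div_assoc]
      apply mul_le_mul_of_nonneg_left ?_ (by linarith : (0:ℝ) ≤ 1-2*p)
      exact div_le_div₀ (sq_nonneg m) (pow_le_pow_left₀ hβpos.le hmb 2) hQpos hQ1B
    have hst3 : 2*p*s*β^3/(1-B)^2 ≤ 2*p*s*(m^3/Q^2) := by
      rw [mul_div_assoc]
      apply mul_le_mul_of_nonneg_left ?_ (mul_nonneg (by linarith : (0:ℝ) ≤ 2*p) hs0)
      exact div_le_div₀ (pow_pos hmpos 3).le (pow_le_pow_left₀ hβpos.le hmb 3)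
        (pow_pos hQpos 2) (pow_le_pow_left₀ hQpos.le hQ1B 2)
    rw [hMb]
    have expand1 : 2*p*((R b - P b)^2/P b) = 2*p*β^2/B := by
      rw [hβ, hB]; ring
    rw [expand1]
    have expand2 : (R b - P b)^2 = β^2 := by rw [hβ]
    rw [expand2]
    linarith
  -- assemble
  have hFnonneg : ∀ x ∈ Finset.univ.erase b, x ∉ S →
      0 ≤ (R x - P x)^2/M x - 2*p*((R x - P x)^2/P x) := by
    intro x hx _
    have := hgoodpt x (hgoodother x (Finset.ne_of_mem_erase hx))
    linarith
  have hsub : S ⊆ Finset.univ.erase b := fun x hx =>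
    Finset.mem_erase.2 ⟨fun h => hbS (h ▸ hx), Finset.mem_univ x⟩
  have h2 : ∑ x ∈ S, ((R x - P x)^2/M x - 2*p*((R x - P x)^2/P x))
      ≤ ∑ x ∈ Finset.univ.erase b, ((R x - P x)^2/M x - 2*p*((R x - P x)^2/P x)) :=
    Finset.sum_le_sum_of_subset_of_nonneg hsub hFnonneg
  have htot : 0 ≤ ∑ x, ((R x - P x)^2/M x - 2*p*((R x - P x)^2/P x)) := by
    rw [← Finset.add_sum_erase _ _ (Finset.mem_univ b)]
    have := le_trans hsumS h2
    linarith [hfb]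
  rw [Finset.sum_sub_distrib] at htot
  have : ∑ x, 2*p*((R x - P x)^2/P x) = 2 * p * ∑ x, (R x - P x)^2/P x := by
    rw [Finset.mul_sum]
  linarith [htot, this.symm.le]

end CCB
namespace CCB2
open Filter Set Topology Finset CCB

variable {𝒳 : Type*} [Fintype 𝒳]

lemma sum_sub_zero {P R : 𝒳 → ℝ} (hP1 : ∑ x, P x = 1) (hR1 : ∑ x, R x = 1) :
    ∑ x, (R x - P x) = 0 := by
  rw [Finset.sum_sub_distrib, hR1, hP1]; ring

/-- `fDiv` in terms of the centered function `g(t) = f(t) - a(t-1)`. -/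
lemma fdiv_eq_g (f : ℝ → ℝ) (a : ℝ) {P R : 𝒳 → ℝ} (hPpos : ∀ x, 0 < P x)
    (hP1 : ∑ x, P x = 1) (hR1 : ∑ x, R x = 1) :
    fDiv f R P = ∑ x, P x * (f (R x / P x) - a * (R x / P x - 1)) := by
  unfold fDiv
  have h : ∀ x ∈ Finset.univ, P x * (f (R x / P x) - a * (R x / P x - 1))
      = P x * f (R x / P x) - a * (R x - P x) := by
    intro x _
    have hx := (hPpos x).ne'
    field_simp
  rw [Finset.sum_congr rfl h, Finset.sum_sub_distrib, ← Finset.mul_sum,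
    sum_sub_zero hP1 hR1, mul_zero, sub_zero]

lemma chiSq_nonneg {P R : 𝒳 → ℝ} (hPpos : ∀ x, 0 < P x) : 0 ≤ chiSq R P :=
  Finset.sum_nonneg fun x _ => div_nonneg (sq_nonneg _) (hPpos x).le

lemma chiSq_pos {P R : 𝒳 → ℝ} (hPpos : ∀ x, 0 < P x) (h : R ≠ P) : 0 < chiSq R P := by
  obtain ⟨x0, hx0⟩ : ∃ x, R x ≠ P x := by
    by_contra h2; push_neg at h2; exact h (funext h2)
  apply Finset.sum_pos' (fun x _ => div_nonneg (sq_nonneg _) (hPpos x).le)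
  refine ⟨x0, Finset.mem_univ x0, div_pos ?_ (hPpos x0)⟩
  exact lt_of_le_of_ne (sq_nonneg _) (Ne.symm (pow_ne_zero 2 (sub_ne_zero.2 hx0)))

lemma chiSq_sum_eq {P R : 𝒳 → ℝ} (hPpos : ∀ x, 0 < P x)
    (hP1 : ∑ x, P x = 1) (hR1 : ∑ x, R x = 1) :
    ∑ x, P x * (R x / P x * (R x / P x - 1)) = chiSq R P := by
  unfold chiSq
  have key : ∀ x ∈ Finset.univ, P x * (R x / P x * (R x / P x - 1))
      = (R x - P x)^2/P x + (R x - P x) := by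
    intro x _
    have hx := (hPpos x).ne'
    field_simp
    ring
  rw [Finset.sum_congr rfl key, Finset.sum_add_distrib, sum_sub_zero hP1 hR1, add_zero]

/-- Upper bound: `D_f(R‖P) ≤ (a + f 0) χ²(R‖P)` from the pointwise bound. -/
lemma fdiv_ub (f : ℝ → ℝ) (a : ℝ)
    (hub : ∀ t : ℝ, 0 ≤ t → f t ≤ f 0 * (1 - t) + (a + f 0) * (t * (t - 1)))
    {P R : 𝒳 → ℝ} (hPpos : ∀ x, 0 < P x) (hR0 : ∀ x, 0 ≤ R x)
    (hP1 : ∑ x, P x = 1) (hR1 : ∑ x, R x = 1) :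
    fDiv f R P ≤ (a + f 0) * chiSq R P := by
  unfold fDiv
  have step : ∀ x ∈ Finset.univ, P x * f (R x / P x)
      ≤ f 0 * (P x - R x) + (a + f 0) * (P x * (R x / P x * (R x / P x - 1))) := by
    intro x _
    have hPx := hPpos x
    have ht : (0:ℝ) ≤ R x / P x := div_nonneg (hR0 x) hPx.le
    have := mul_le_mul_of_nonneg_left (hub _ ht) hPx.le
    calc P x * f (R x / P x) ≤ P x * (f 0 * (1 - R x / P x) + (a + f 0) * (R x / P x * (R x / P x - 1))) := this
    _ = f 0 * (P x - R x) + (a + f 0) * (P x * (R x / P x * (R x / P x - 1))) := by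
        have hx := hPx.ne'
        field_simp
  calc ∑ x, P x * f (R x / P x)
      ≤ ∑ x, (f 0 * (P x - R x) + (a + f 0) * (P x * (R x / P x * (R x / P x - 1)))) :=
        Finset.sum_le_sum step
  _ = (a + f 0) * chiSq R P := by
      rw [Finset.sum_add_distrib, ← Finset.mul_sum, ← Finset.mul_sum]
      have h1 : ∑ x, (P x - R x) = 0 := by rw [Finset.sum_sub_distrib, hR1, hP1]; ring
      rw [h1, mul_zero, zero_add, chiSq_sum_eq hPpos hP1 hR1]

/-- Lower bound via `key_sum`. -/
lemma fdiv_lb (f : ℝ → ℝ) (a q c : ℝ) (hq : 0 < q)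
    (hcond : ∀ t : ℝ, 0 ≤ t → q * (t-1)^2 ≤ (f t - a * (t-1)) * (1 - c*(t-1)))
    (hc0 : c ≤ 0) (hc1 : -1 < c)
    {P R : 𝒳 → ℝ} (hPpos : ∀ x, 0 < P x) (hR0 : ∀ x, 0 ≤ R x)
    (hP1 : ∑ x, P x = 1) (hR1 : ∑ x, R x = 1)
    {p : ℝ} (hple : ∀ x, p ≤ P x) (hppos : 0 < p) (hp2 : 2*p ≤ 1) :
    2 * q * p * chiSq R P ≤ fDiv f R P := by
  set s : ℝ := -c with hs
  have hs0 : 0 ≤ s := by rw [hs]; linarith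
  have hs1 : s < 1 := by rw [hs]; linarith
  rw [fdiv_eq_g f a hPpos hP1 hR1]
  set M : 𝒳 → ℝ := fun x => (1-s)*P x + s*R x with hM
  have hMeq : ∀ x, M x = (1-s)*P x + s*R x := fun x => rfl
  have hMpos : ∀ x, 0 < M x := fun x => by
    rw [hMeq x]; have h1 := hPpos x; have h2 := hR0 x; nlinarith
  have hpt : ∀ x, q * ((R x - P x)^2 / M x) ≤ P x * (f (R x / P x) - a * (R x / P x - 1)) := by
    intro x
    have hPx := hPpos x
    have hMx := hMpos x
    have ht : (0:ℝ) ≤ R x / P x := div_nonneg (hR0 x) hPx.le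
    have hc := hcond _ ht
    -- 1 - c(t-1) = 1 + s(t-1) = M/P
    have hfrac : 1 - c * (R x / P x - 1) = M x / P x := by
      rw [hMeq x, hs]
      field_simp
      ring
    rw [hfrac] at hc
    rw [← mul_div_assoc, div_le_iff₀ hMx]
    calc q * (R x - P x)^2 = P x * (q * (R x/P x - 1)^2) * P x := by
          have hx := hPx.ne'
          field_simp
    _ ≤ P x * ((f (R x/P x) - a * (R x/P x - 1)) * (M x / P x)) * P x := by
          apply mul_le_mul_of_nonneg_right ?_ hPx.le
          exact mul_le_mul_of_nonneg_left hc hPx.le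
    _ = M x * P x * (f (R x/P x) - a * (R x/P x - 1)) := by
          have hx := hPx.ne'
          field_simp
    _ = P x * (f (R x/P x) - a * (R x/P x - 1)) * M x := by ring
  have hks := key_sum P R M hR0 hR1 hPpos hP1 hple hppos hp2 hs0 hs1 hMeq
  calc 2 * q * p * chiSq R P = q * (2 * p * chiSq R P) := by ring
  _ ≤ q * ∑ x, (R x - P x)^2 / M x := by
      apply mul_le_mul_of_nonneg_left ?_ hq.le
      exact hks
  _ = ∑ x, q * ((R x - P x)^2 / M x) := by rw [Finset.mul_sum]
  _ ≤ ∑ x, P x * (f (R x / P x) - a * (R x / P x - 1)) := Finset.sum_le_sum fun x _ => hpt x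

/-- Nonnegativity of `fDiv` given the tangent bound. -/
lemma fdiv_nonneg (f : ℝ → ℝ) (a : ℝ)
    (htan : ∀ t : ℝ, 0 ≤ t → a * (t - 1) ≤ f t)
    {P R : 𝒳 → ℝ} (hPpos : ∀ x, 0 < P x) (hR0 : ∀ x, 0 ≤ R x)
    (hP1 : ∑ x, P x = 1) (hR1 : ∑ x, R x = 1) :
    0 ≤ fDiv f R P := by
  rw [fdiv_eq_g f a hPpos hP1 hR1]
  apply Finset.sum_nonneg
  intro x _
  have ht : (0:ℝ) ≤ R x / P x := div_nonneg (hR0 x) (hPpos x).le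
  have := htan _ ht
  have := (hPpos x).le
  nlinarith

/-- Positivity of `fDiv` for `R ≠ P` (uses the strict lower bound from `hcond`). -/
lemma fdiv_pos (f : ℝ → ℝ) (a q c : ℝ) (hq : 0 < q)
    (hcond : ∀ t : ℝ, 0 ≤ t → q * (t-1)^2 ≤ (f t - a * (t-1)) * (1 - c*(t-1)))
    (hc0 : c ≤ 0) (hc1 : -1 < c)
    (htan : ∀ t : ℝ, 0 ≤ t → a * (t - 1) ≤ f t)
    {P R : 𝒳 → ℝ} (hPpos : ∀ x, 0 < P x) (hR0 : ∀ x, 0 ≤ R x)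
    (hP1 : ∑ x, P x = 1) (hR1 : ∑ x, R x = 1) (hne : R ≠ P) :
    0 < fDiv f R P := by
  obtain ⟨x1, hx1⟩ : ∃ x, P x < R x := by
    by_contra h; push_neg at h
    obtain ⟨x0, hx0⟩ : ∃ x, R x ≠ P x := by
      by_contra h2; push_neg at h2; exact hne (funext h2)
    have hlt : R x0 < P x0 := lt_of_le_of_ne (h x0) hx0
    have : ∑ x, R x < ∑ x, P x := by
      apply Finset.sum_lt_sum (fun i _ => h i) ⟨x0, Finset.mem_univ x0, hlt⟩
    rw [hP1, hR1] at this; exact lt_irrefl _ this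
  rw [fdiv_eq_g f a hPpos hP1 hR1]
  apply Finset.sum_pos'
  · intro x _
    have ht : (0:ℝ) ≤ R x / P x := div_nonneg (hR0 x) (hPpos x).le
    have := htan _ ht
    have := (hPpos x).le
    nlinarith
  · refine ⟨x1, Finset.mem_univ x1, ?_⟩
    have hPx := hPpos x1
    have ht : (1:ℝ) < R x1 / P x1 := (one_lt_div hPx).2 hx1
    have hc := hcond (R x1 / P x1) (by linarith)
    have hu : 0 < R x1 / P x1 - 1 := by linarith
    have hden : 0 < 1 - c * (R x1 / P x1 - 1) := by nlinarith
    have hnum : 0 < q * (R x1 / P x1 - 1)^2 := by positivity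
    have hg : 0 < f (R x1 / P x1) - a * (R x1 / P x1 - 1) := by
      by_contra h2; push_neg at h2
      nlinarith
    positivity
end CCB2
namespace CCB3
open Filter Set Topology Finset CCB CCB2

/-- Tangent line at 1 lies below a convex function. -/
lemma tangent (f : ℝ → ℝ) (a : ℝ) (hconv : ConvexOn ℝ (Set.Ioi (0:ℝ)) f)
    (hf1 : f 1 = 0) (hd : HasDerivAt f a 1) :
    ∀ t : ℝ, 0 < t → a * (t - 1) ≤ f t := by
  intro t ht
  rcases lt_trichotomy t 1 with h | h | h
  · have hs := hconv.slope_le_of_hasDerivAt (Set.mem_Ioi.2 ht)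
      (Set.mem_Ioi.2 one_pos) h hd
    rw [slope_def_field, hf1] at hs
    have h1t : 0 < 1 - t := by linarith
    rw [div_le_iff₀ h1t] at hs
    linarith
  · subst h; simp [hf1]
  · have hs := hconv.le_slope_of_hasDerivAt (Set.mem_Ioi.2 one_pos)
      (Set.mem_Ioi.2 (by linarith : (0:ℝ) < t)) h hd
    rw [slope_def_field, hf1] at hs
    have h1t : 0 < t - 1 := by linarith
    rw [le_div_iff₀ h1t] at hs
    linarith

lemma tangent_all (f : ℝ → ℝ) (a : ℝ) (hconv : ConvexOn ℝ (Set.Ioi (0:ℝ)) f)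
    (hf1 : f 1 = 0) (hd : HasDerivAt f a 1)
    (hf0 : Filter.Tendsto f (nhdsWithin 0 (Set.Ioi (0:ℝ))) (nhds (f 0))) :
    ∀ t : ℝ, 0 ≤ t → a * (t - 1) ≤ f t := by
  have htan := tangent f a hconv hf1 hd
  intro t ht
  rcases ht.eq_or_lt with h0 | h0
  · rw [← h0]
    have h1 : Tendsto (fun t : ℝ => a * (t - 1)) (𝓝[>] (0:ℝ)) (𝓝 (a * (0 - 1))) :=
      ((continuous_const.mul (continuous_id.sub continuous_const)).tendsto 0).mono_left
        nhdsWithin_le_nhds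
    exact le_of_tendsto_of_tendsto h1 hf0
      (eventually_mem_nhdsWithin.mono fun u hu => htan u hu)
  · exact htan t h0

/-- Pointwise upper bound from concavity of `(f x - f 0)/x`. -/
lemma ub_pt (f : ℝ → ℝ) (a : ℝ)
    (hconc : ConcaveOn ℝ (Set.Ioi (0:ℝ)) (fun x => (f x - f 0) / x))
    (hf1 : f 1 = 0) (hd : HasDerivAt f a 1) :
    ∀ t : ℝ, 0 ≤ t → f t ≤ f 0 * (1 - t) + (a + f 0) * (t * (t - 1)) := by
  intro t ht0
  rcases ht0.eq_or_lt with h0 | ht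
  · rw [← h0]; norm_num
  have hder : HasDerivAt (fun x : ℝ => (f x - f 0) / x) (a + f 0) 1 := by
    have h1 : HasDerivAt (fun x : ℝ => f x - f 0) a 1 := hd.sub_const _
    have h2 : HasDerivAt (fun x : ℝ => x) 1 1 := hasDerivAt_id 1
    have h3 := h1.div h2 one_ne_zero
    exact h3.congr_deriv (by rw [hf1]; ring)
  have hh1 : (f 1 - f 0) / 1 = -f 0 := by rw [hf1]; ring
  have key : (f t - f 0) / t ≤ -f 0 + (a + f 0) * (t - 1) := by
    rcases lt_trichotomy t 1 with hlt | heq | hgt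
    · have hs := hconc.le_slope_of_hasDerivAt (Set.mem_Ioi.2 ht)
        (Set.mem_Ioi.2 one_pos) hlt hder
      rw [slope_def_field, hh1] at hs
      have h1t : 0 < 1 - t := by linarith
      rw [le_div_iff₀ h1t] at hs
      linarith
    · subst heq; rw [hh1]; norm_num
    · have hs := hconc.slope_le_of_hasDerivAt (Set.mem_Ioi.2 one_pos)
        (Set.mem_Ioi.2 (by linarith : (0:ℝ) < t)) hgt hder
      rw [slope_def_field, hh1] at hs
      have h1t : 0 < t - 1 := by linarith
      rw [div_le_iff₀ h1t] at hs
      linarith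
  have hft : f t = f 0 + t * ((f t - f 0) / t) := by field_simp; ring
  rw [hft]
  have h2 := mul_le_mul_of_nonneg_left key ht.le
  calc f 0 + t * ((f t - f 0) / t) ≤ f 0 + t * (-f 0 + (a + f 0) * (t - 1)) := by linarith
  _ = f 0 * (1 - t) + (a + f 0) * (t * (t - 1)) := by ring

/-- `hcond` extends to `t = 0` by continuity. -/
lemma cond_zero (f : ℝ → ℝ) (a q c : ℝ)
    (hcond : ∀ t : ℝ, 0 < t → q * (t-1)^2 ≤ (f t - a*(t-1)) * (1 - c*(t-1)))
    (hf0 : Filter.Tendsto f (nhdsWithin 0 (Set.Ioi (0:ℝ))) (nhds (f 0))) :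
    ∀ t : ℝ, 0 ≤ t → q * (t-1)^2 ≤ (f t - a*(t-1)) * (1 - c*(t-1)) := by
  intro t ht
  rcases ht.eq_or_lt with h0 | h0
  · rw [← h0]
    have hL : Tendsto (fun t : ℝ => q*(t-1)^2) (𝓝[>] (0:ℝ)) (𝓝 (q*((0:ℝ)-1)^2)) :=
      (Continuous.tendsto (by continuity) 0).mono_left nhdsWithin_le_nhds
    have hR : Tendsto (fun t : ℝ => (f t - a*(t-1)) * (1 - c*(t-1))) (𝓝[>] (0:ℝ))
        (𝓝 ((f 0 - a*((0:ℝ)-1)) * (1 - c*((0:ℝ)-1)))) := by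
      apply Tendsto.mul
      · exact hf0.sub (((continuous_const.mul (continuous_id.sub continuous_const)).tendsto
          0).mono_left nhdsWithin_le_nhds)
      · exact ((continuous_const.sub (continuous_const.mul
          (continuous_id.sub continuous_const))).tendsto 0).mono_left nhdsWithin_le_nhds
    exact le_of_tendsto_of_tendsto hL hR
      (eventually_mem_nhdsWithin.mono fun u hu => hcond u hu)
  · exact hcond t h0

lemma c_bounds (f : ℝ → ℝ) (a q c : ℝ) (hq : 0 < q)
    (hcond : ∀ t : ℝ, 0 ≤ t → q*(t-1)^2 ≤ (f t - a*(t-1))*(1 - c*(t-1)))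
    (htan : ∀ t : ℝ, 0 ≤ t → a*(t-1) ≤ f t) :
    0 < f 0 + a ∧ c ≤ 0 ∧ -1 < c := by
  have h0 : q ≤ (f 0 + a) * (1 + c) := by
    calc q = q * ((0:ℝ)-1)^2 := by ring
    _ ≤ (f 0 - a*((0:ℝ)-1)) * (1 - c*((0:ℝ)-1)) := hcond 0 le_rfl
    _ = (f 0 + a) * (1 + c) := by ring
  have hg0 : 0 ≤ f 0 + a := by have := htan 0 le_rfl; nlinarith
  have hfa : 0 < f 0 + a := by
    rcases hg0.eq_or_lt with h | h
    · exfalso; rw [← h] at h0; linarith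
    · exact h
  have hc1 : -1 < c := by
    by_contra hcon; push_neg at hcon
    have h2 : (f 0 + a) * (1 + c) ≤ 0 :=
      mul_nonpos_of_nonneg_of_nonpos hfa.le (by linarith)
    linarith
  have hc0 : c ≤ 0 := by
    by_contra hc; push_neg at hc
    have hu : 0 < 2/c := div_pos two_pos hc
    have ht := hcond (1 + 2/c) (by linarith)
    have hg := htan (1 + 2/c) (by linarith)
    have hcc : c * (1 + 2/c - 1) = 2 := by field_simp; ring
    have hsq : 0 < (1 + 2/c - 1)^2 := by
      have h5 : (1 + 2/c - 1) = 2/c := by ring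
      rw [h5]; exact pow_pos hu 2
    nlinarith [mul_pos hq hsq]
  exact ⟨hfa, hc0, hc1⟩

/-- Extend convexity from `Ioi 0` to `Ici 0` given right-continuity at `0`. -/
lemma convexOn_Ici (f : ℝ → ℝ) (hconv : ConvexOn ℝ (Set.Ioi (0:ℝ)) f)
    (hf0 : Filter.Tendsto f (nhdsWithin 0 (Set.Ioi (0:ℝ))) (nhds (f 0))) :
    ConvexOn ℝ (Set.Ici (0:ℝ)) f := by
  have hcont : ∀ z : ℝ, 0 < z → ContinuousAt f z := fun z hz =>
    (hconv.continuousOn isOpen_Ioi).continuousAt (Ioi_mem_nhds hz)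
  have haux : ∀ (α β y : ℝ), 0 < α → 0 < β → α + β = 1 → 0 < y →
      f (β * y) ≤ α * f 0 + β * f y := by
    intro α β y hα hβ hαβ hy
    have hc : ContinuousAt f (β * y) := hcont _ (by positivity)
    have hlim1 : Tendsto (fun t : ℝ => f (α*t + β*y)) (𝓝[>] (0:ℝ)) (𝓝 (f (β*y))) := by
      have htt : Tendsto (fun t : ℝ => α*t + β*y) (𝓝[>] (0:ℝ)) (𝓝 (β*y)) := by
        have h1 : Tendsto (fun t : ℝ => α*t + β*y) (𝓝 (0:ℝ)) (𝓝 (α*0 + β*y)) :=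
          ((continuous_const.mul continuous_id).add continuous_const).tendsto 0
        rw [mul_zero, zero_add] at h1
        exact h1.mono_left nhdsWithin_le_nhds
      exact hc.tendsto.comp htt
    have hlim2 : Tendsto (fun t : ℝ => α * f t + β * f y) (𝓝[>] (0:ℝ))
        (𝓝 (α * f 0 + β * f y)) := (hf0.const_mul α).add tendsto_const_nhds
    apply le_of_tendsto_of_tendsto hlim1 hlim2
    filter_upwards [eventually_mem_nhdsWithin] with t ht
    have := hconv.2 (Set.mem_Ioi.2 ht) (Set.mem_Ioi.2 hy) hα.le hβ.le hαβ
    simpa using this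
  constructor
  · exact convex_Ici 0
  intro x hx y hy α β hα hβ hαβ
  simp only [smul_eq_mul]
  rcases hα.eq_or_lt with hα0 | hα0
  · have hβ1 : β = 1 := by linarith
    rw [← hα0, hβ1]; norm_num
  rcases hβ.eq_or_lt with hβ0 | hβ0
  · have hα1 : α = 1 := by linarith
    rw [← hβ0, hα1]; norm_num
  rcases (Set.mem_Ici.1 hx).eq_or_lt with hx0 | hx0
  · rcases (Set.mem_Ici.1 hy).eq_or_lt with hy0 | hy0
    · rw [← hx0, ← hy0]
      have heq : α * f 0 + β * f 0 = f 0 := by rw [← add_mul, hαβ, one_mul]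
      simp only [mul_zero, add_zero]
      linarith
    · rw [← hx0]
      have := haux α β y hα0 hβ0 hαβ hy0
      simpa using this
  · rcases (Set.mem_Ici.1 hy).eq_or_lt with hy0 | hy0
    · rw [← hy0]
      have := haux β α x hβ0 hα0 (by linarith) hx0
      calc f (α * x + β * 0) = f (α * x) := by norm_num
      _ ≤ β * f 0 + α * f x := this
      _ = α * f x + β * f 0 := by ring
    · have := hconv.2 (Set.mem_Ioi.2 hx0) (Set.mem_Ioi.2 hy0) hα hβ hαβ
      simpa using this

/-- Data processing inequality. -/
lemma dpi {𝒳 𝒴 : Type*} [Fintype 𝒳] [Fintype 𝒴] (φ : ℝ → ℝ)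
    (hφ : ConvexOn ℝ (Set.Ici (0:ℝ)) φ)
    (P R : 𝒳 → ℝ) (W : 𝒴 → 𝒳 → ℝ) (hPpos : ∀ x, 0 < P x)
    (hR0 : ∀ x, 0 ≤ R x) (hW0 : ∀ y x, 0 ≤ W y x) (hW1 : ∀ x, ∑ y, W y x = 1)
    (hWP : ∀ y, 0 < chanApply W P y) :
    fDiv φ (chanApply W R) (chanApply W P) ≤ fDiv φ R P := by
  unfold fDiv
  have key : ∀ y, chanApply W P y * φ (chanApply W R y / chanApply W P y)
      ≤ ∑ x, W y x * P x * φ (R x / P x) := by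
    intro y
    have hWPy := hWP y
    have hw1 : ∑ x, W y x * P x / chanApply W P y = 1 := by
      rw [← Finset.sum_div]
      exact div_self hWPy.ne'
    have harg : ∑ x, (W y x * P x / chanApply W P y) • (R x / P x)
        = chanApply W R y / chanApply W P y := by
      have hpt : ∀ x ∈ Finset.univ, (W y x * P x / chanApply W P y) • (R x / P x)
          = W y x * R x / chanApply W P y := by
        intro x _
        rw [smul_eq_mul]
        have h1 := (hPpos x).ne'
        have h2 := hWPy.ne'
        field_simp
      rw [Finset.sum_congr rfl hpt, ← Finset.sum_div]
      rfl
    have hJ := hφ.map_sum_le (t := Finset.univ)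
      (w := fun x => W y x * P x / chanApply W P y) (p := fun x => R x / P x)
      (fun x _ => div_nonneg (mul_nonneg (hW0 y x) (hPpos x).le) hWPy.le) hw1
      (fun x _ => Set.mem_Ici.2 (div_nonneg (hR0 x) (hPpos x).le))
    rw [harg] at hJ
    have h3 := mul_le_mul_of_nonneg_left hJ hWPy.le
    refine le_trans h3 (le_of_eq ?_)
    rw [Finset.mul_sum]
    apply Finset.sum_congr rfl
    intro x _
    have h2 := hWPy.ne'
    rw [smul_eq_mul]; field_simp
  calc ∑ y, chanApply W P y * φ (chanApply W R y / chanApply W P y)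
      ≤ ∑ y, ∑ x, W y x * P x * φ (R x / P x) := Finset.sum_le_sum fun y _ => key y
  _ = ∑ x, P x * φ (R x / P x) := by
      rw [Finset.sum_comm]
      apply Finset.sum_congr rfl
      intro x _
      have hpt : ∀ y ∈ Finset.univ, W y x * P x * φ (R x / P x)
          = W y x * (P x * φ (R x / P x)) := fun y _ => by ring
      rw [Finset.sum_congr rfl hpt, ← Finset.sum_mul, hW1 x, one_mul]

end CCB3
namespace CCB4
open Filter Set Topology Finset

/-- `f` is differentiable on a punctured neighbourhood of 1. -/
lemma diff_near (f : ℝ → ℝ) (hd2 : DifferentiableAt ℝ (deriv f) 1)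
    (hf2pos : 0 < deriv (deriv f) 1) :
    ∀ᶠ x in 𝓝[≠] (1:ℝ), DifferentiableAt ℝ f x := by
  have hslope : Tendsto (slope (deriv f) 1) (𝓝[≠] (1:ℝ)) (𝓝 (deriv (deriv f) 1)) :=
    hasDerivAt_iff_tendsto_slope.mp hd2.hasDerivAt
  rcases eq_or_ne (deriv f 1) 0 with h0 | h0
  · have h1 : ∀ᶠ x in 𝓝[≠] (1:ℝ), deriv (deriv f) 1 / 2 < slope (deriv f) 1 x :=
      hslope.eventually (eventually_gt_nhds (by linarith))
    filter_upwards [h1, eventually_mem_nhdsWithin] with x hx hx1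
    by_contra hnd
    rw [slope_def_field, deriv_zero_of_not_differentiableAt hnd, h0] at hx
    norm_num at hx
    linarith
  · have h1 : ∀ᶠ x in 𝓝 (1:ℝ), deriv f x ≠ 0 := hd2.continuousAt.eventually_ne h0
    filter_upwards [eventually_nhdsWithin_of_eventually_nhds h1] with x hx
    by_contra hnd
    exact hx (deriv_zero_of_not_differentiableAt hnd)

/-- Second-order Taylor (Peano form) at 1, via L'Hôpital. -/
lemma peano (f : ℝ → ℝ) (hf1 : f 1 = 0) (hd1 : DifferentiableAt ℝ f 1)
    (hd2 : DifferentiableAt ℝ (deriv f) 1) (hf2pos : 0 < deriv (deriv f) 1) :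
    Tendsto (fun h : ℝ => (f (1+h) - deriv f 1 * h)/h^2) (𝓝[≠] (0:ℝ))
      (𝓝 (deriv (deriv f) 1 / 2)) := by
  have hdn := diff_near f hd2 hf2pos
  -- translate differentiability to a neighbourhood of 0 for h ↦ f (1+h) - f'1*h
  have hshift : Tendsto (fun h : ℝ => 1 + h) (𝓝[≠] (0:ℝ)) (𝓝[≠] (1:ℝ)) := by
    rw [tendsto_nhdsWithin_iff]
    constructor
    · have h1 : Tendsto (fun h : ℝ => 1 + h) (𝓝 (0:ℝ)) (𝓝 (1 + 0)) :=
        tendsto_const_nhds.add tendsto_id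
      norm_num at h1
      exact h1.mono_left nhdsWithin_le_nhds
    · filter_upwards [eventually_mem_nhdsWithin] with h hh
      simpa using hh
  have hdf : ∀ᶠ h in 𝓝[≠] (0:ℝ), DifferentiableAt ℝ (fun u : ℝ => f (1+u) - deriv f 1 * u) h := by
    filter_upwards [hshift.eventually hdn] with h hh
    exact ((hh.comp h ((differentiableAt_const _).add differentiableAt_id)).sub
      ((differentiableAt_const _).mul differentiableAt_id))
  apply deriv.lhopital_zero_nhdsNE hdf
  · -- deriv of h^2 is 2h ≠ 0
    filter_upwards [eventually_mem_nhdsWithin] with h (hh : h ≠ 0)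
    have : deriv (fun u : ℝ => u^2) h = 2*h := by
      simp [deriv_pow]
    rw [this]
    simpa using hh
  · -- numerator tends to 0
    have h1 : Tendsto (fun u : ℝ => 1 + u) (𝓝 (0:ℝ)) (𝓝 1) := by
      have hc : Continuous (fun u : ℝ => 1 + u) := continuous_const.add continuous_id; simpa using hc.tendsto (0:ℝ)
    have h2 : Tendsto (fun u : ℝ => f (1+u)) (𝓝 (0:ℝ)) (𝓝 0) := by
      have h3 := hd1.continuousAt.tendsto.comp h1
      rw [hf1] at h3
      exact h3
    have h3 : Tendsto (fun u : ℝ => deriv f 1 * u) (𝓝 (0:ℝ)) (𝓝 0) := by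
      have hc : Continuous (fun u : ℝ => deriv f 1 * u) := continuous_const.mul continuous_id; simpa using hc.tendsto (0:ℝ)
    have h4 := h2.sub h3
    norm_num at h4
    exact h4.mono_left nhdsWithin_le_nhds
  · have : Tendsto (fun h : ℝ => h^2) (𝓝 (0:ℝ)) (𝓝 ((0:ℝ)^2)) :=
      (continuous_pow 2).tendsto 0
    norm_num at this
    exact this.mono_left nhdsWithin_le_nhds
  · -- ratio of derivatives
    have hsl : Tendsto (slope (deriv f) 1) (𝓝[≠] (1:ℝ)) (𝓝 (deriv (deriv f) 1)) :=
      hasDerivAt_iff_tendsto_slope.mp hd2.hasDerivAt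
    have hcomp : Tendsto (fun h : ℝ => slope (deriv f) 1 (1+h)) (𝓝[≠] (0:ℝ))
        (𝓝 (deriv (deriv f) 1)) := hsl.comp hshift
    have hmain : Tendsto (fun h : ℝ => slope (deriv f) 1 (1+h) / 2) (𝓝[≠] (0:ℝ))
        (𝓝 (deriv (deriv f) 1 / 2)) := hcomp.div_const 2
    apply hmain.congr'
    filter_upwards [hshift.eventually hdn, eventually_mem_nhdsWithin] with h hh (hne : h ≠ 0)
    have hder : deriv (fun u : ℝ => f (1+u) - deriv f 1 * u) h
        = deriv f (1+h) - deriv f 1 := by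
      rw [deriv_fun_sub, deriv_comp_const_add, deriv_const_mul, deriv_id'']
      · ring
      · exact differentiableAt_id
      · exact hh.comp h ((differentiableAt_const _).add differentiableAt_id)
      · exact (differentiableAt_const _).mul differentiableAt_id
    have hg : deriv (fun u : ℝ => u^2) h = 2*h := by simp [deriv_pow]
    rw [hder, hg, slope_def_field]
    have h1 : (1:ℝ) + h - 1 = h := by ring
    rw [h1]
    rw [div_div]
    ring_nf
end CCB4
namespace CCB5
open Filter Set Topology Finset CCB CCB2 CCB3 CCB4

variable {𝒳 : Type*} [Fintype 𝒳]

lemma fdiv_self (f : ℝ → ℝ) (hf1 : f 1 = 0) (P : 𝒳 → ℝ) (hP : ∀ x, 0 < P x) :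
    fDiv f P P = 0 := by
  unfold fDiv
  apply Finset.sum_eq_zero
  intro x _
  rw [div_self (hP x).ne', hf1, mul_zero]

lemma chan_pmf {𝒳 𝒴 : Type*} [Fintype 𝒳] [Fintype 𝒴] {W : 𝒴 → 𝒳 → ℝ} {R : 𝒳 → ℝ}
    (hW : IsChannel W) (hR : IsPmf R) : IsPmf (chanApply W R) := by
  constructor
  · intro y; exact Finset.sum_nonneg fun x _ => mul_nonneg (hW.1 y x) (hR.1 x)
  · calc ∑ y, chanApply W R y = ∑ x, ∑ y, W y x * R x := Finset.sum_comm
    _ = ∑ x, R x := by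
        apply Finset.sum_congr rfl
        intro x _
        rw [← Finset.sum_mul, hW.2 x, one_mul]
    _ = 1 := hR.2

lemma chan_mix {𝒳 𝒴 : Type*} [Fintype 𝒳] [Fintype 𝒴] (W : 𝒴 → 𝒳 → ℝ) (P R : 𝒳 → ℝ) (ε : ℝ) :
    chanApply W (fun x => P x + ε*(R x - P x))
      = fun y => chanApply W P y + ε*(chanApply W R y - chanApply W P y) := by
  funext y
  unfold chanApply
  have h : ∀ x ∈ Finset.univ, W y x * (P x + ε*(R x - P x))
      = W y x * P x + ε * (W y x * R x - W y x * P x) := fun x _ => by ring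
  rw [Finset.sum_congr rfl h, Finset.sum_add_distrib, ← Finset.mul_sum,
    Finset.sum_sub_distrib]

lemma chi_eq_fdiv {α : Type*} [Fintype α] (Rr Pp : α → ℝ) (hPp : ∀ z, 0 < Pp z) :
    fDiv (fun t : ℝ => (t-1)^2) Rr Pp = chiSq Rr Pp := by
  unfold fDiv chiSq
  apply Finset.sum_congr rfl
  intro z _
  have hz := (hPp z).ne'
  field_simp

lemma fdivlim (f : ℝ → ℝ) (hf1 : f 1 = 0) (hd1 : DifferentiableAt ℝ f 1)
    (hd2 : DifferentiableAt ℝ (deriv f) 1) (hf2pos : 0 < deriv (deriv f) 1)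
    (P R : 𝒳 → ℝ) (hPpos : ∀ x, 0 < P x) (hP1 : ∑ x, P x = 1) (hR1 : ∑ x, R x = 1) :
    Tendsto (fun ε : ℝ => fDiv f (fun x => P x + ε*(R x - P x)) P / ε^2) (𝓝[>] (0:ℝ))
      (𝓝 (deriv (deriv f) 1 / 2 * chiSq R P)) := by
  have hpe := peano f hf1 hd1 hd2 hf2pos
  have hrw : ∀ ε : ℝ, fDiv f (fun x => P x + ε*(R x - P x)) P
      = ∑ x, (f (1 + ε*((R x - P x)/P x)) - deriv f 1 * (ε*((R x - P x)/P x))) * P x := by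
    intro ε
    unfold fDiv
    have hpt : ∀ x ∈ Finset.univ, P x * f ((P x + ε*(R x - P x)) / P x)
        = (f (1 + ε*((R x - P x)/P x)) - deriv f 1 * (ε*((R x - P x)/P x))) * P x
          + (deriv f 1 * ε) * (R x - P x) := by
      intro x _
      have hx := (hPpos x).ne'
      have harg : (P x + ε*(R x - P x)) / P x = 1 + ε*((R x - P x)/P x) := by
        field_simp
      rw [harg]
      field_simp
      ring
    rw [Finset.sum_congr rfl hpt, Finset.sum_add_distrib, ← Finset.mul_sum,
      sum_sub_zero hP1 hR1, mul_zero, add_zero]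
  have hmain : Tendsto (fun ε : ℝ => ∑ x,
      ((f (1 + ε*((R x - P x)/P x)) - deriv f 1 * (ε*((R x - P x)/P x)))/ε^2) * P x)
      (𝓝[>] (0:ℝ)) (𝓝 (∑ x, (deriv (deriv f) 1 / 2 * ((R x - P x)/P x)^2) * P x)) := by
    apply tendsto_finset_sum
    intro x _
    rcases eq_or_ne ((R x - P x)/P x) 0 with hu | hu
    · rw [hu]
      have hfn : (fun ε : ℝ => ((f (1 + ε*0) - deriv f 1 * (ε*0))/ε^2) * P x)
          = (fun ε : ℝ => 0) := by
        funext ε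
        simp [hf1]
      rw [hfn]
      norm_num
    · have hcomp : Tendsto (fun ε : ℝ => ε*((R x - P x)/P x)) (𝓝[>] (0:ℝ)) (𝓝[≠] (0:ℝ)) := by
        rw [tendsto_nhdsWithin_iff]
        constructor
        · have h1 : Tendsto (fun ε : ℝ => ε*((R x - P x)/P x)) (𝓝 (0:ℝ))
              (𝓝 (0*((R x - P x)/P x))) := tendsto_id.mul_const _
          rw [zero_mul] at h1
          exact h1.mono_left nhdsWithin_le_nhds
        · filter_upwards [eventually_mem_nhdsWithin] with ε (hε : (0:ℝ) < ε)
          exact mul_ne_zero hε.ne' hu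
      have h2 := (hpe.comp hcomp).mul_const (((R x - P x)/P x)^2 * P x)
      have h3 : deriv (deriv f) 1 / 2 * (((R x - P x)/P x)^2 * P x)
          = deriv (deriv f) 1 / 2 * ((R x - P x)/P x)^2 * P x := by ring
      rw [h3] at h2
      apply h2.congr'
      filter_upwards [eventually_mem_nhdsWithin] with ε (hε : (0:ℝ) < ε)
      have hε0 : ε ≠ 0 := hε.ne'
      rw [Function.comp_apply]
      rw [div_mul_eq_mul_div, div_mul_eq_mul_div,
        div_eq_div_iff (pow_ne_zero 2 (mul_ne_zero hε0 hu)) (pow_ne_zero 2 hε0)]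
      ring
  have hval : ∑ x, (deriv (deriv f) 1 / 2 * ((R x - P x)/P x)^2) * P x
      = deriv (deriv f) 1 / 2 * chiSq R P := by
    unfold chiSq
    rw [Finset.mul_sum]
    apply Finset.sum_congr rfl
    intro x _
    have hx := (hPpos x).ne'
    field_simp
  rw [← hval]
  refine Tendsto.congr (fun ε => ?_) hmain
  rw [hrw ε, Finset.sum_div]
  exact Finset.sum_congr rfl (fun x _ => (mul_div_right_comm _ _ _).symm)

end CCB5

open Filter Set Topology Finset CCB CCB2 CCB3 CCB4 CCB5

/-- **Theorem 4 (General Contraction Coefficient Bound).**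
`η_{χ²} ≤ η_f ≤ (f'(1) + f(0)) / (f''(1) · minₓ P_X(x)) · η_{χ²}`. -/
theorem general_contraction_coefficient_bound
    {𝒳 𝒴 : Type*} [Fintype 𝒳] [Fintype 𝒴] [Nonempty 𝒳]
    (hcardX : 2 ≤ Fintype.card 𝒳) (hcardY : 2 ≤ Fintype.card 𝒴)
    (f : ℝ → ℝ)
    (hconv : ConvexOn ℝ (Set.Ioi (0 : ℝ)) f)
    (hstrict : StrictlyConvexAtOne f)
    (hf1 : f 1 = 0)
    (hd1 : DifferentiableAt ℝ f 1)
    (hd2 : DifferentiableAt ℝ (deriv f) 1)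
    (hd3 : DifferentiableAt ℝ (deriv (deriv f)) 1)
    (hf2pos : 0 < deriv (deriv f) 1)
    (hcond : ∀ t : ℝ, 0 < t →
      deriv (deriv f) 1 / 2 * (t - 1) ^ 2 ≤
        (f t - deriv f 1 * (t - 1)) *
          (1 - deriv (deriv (deriv f)) 1 / (3 * deriv (deriv f) 1) * (t - 1)))
    (hf0 : Filter.Tendsto f (nhdsWithin 0 (Set.Ioi (0 : ℝ))) (nhds (f 0)))
    (hconc : ConcaveOn ℝ (Set.Ioi (0 : ℝ)) (fun x => (f x - f 0) / x))
    (PX : 𝒳 → ℝ) (W : 𝒴 → 𝒳 → ℝ)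
    (hPX : IsPmf PX) (hPXpos : ∀ x, 0 < PX x)
    (hW : IsChannel W) (hPY : ∀ y, 0 < chanApply W PX y) :
    etaChi PX W ≤ etaF f PX W ∧
      etaF f PX W ≤ (deriv f 1 + f 0) /
        (deriv (deriv f) 1 * Finset.univ.inf' Finset.univ_nonempty PX) *
        etaChi PX W := by
  classical
  obtain ⟨hPX0, hPX1⟩ := hPX
  obtain ⟨hW0, hW1⟩ := hW
  -- abbreviations (not using `set` to keep goals syntactically stable)
  have hq : 0 < deriv (deriv f) 1 / 2 := by linarith
  have htan1 : ∀ t : ℝ, 0 ≤ t → deriv f 1 * (t - 1) ≤ f t :=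
    tangent_all f (deriv f 1) hconv hf1 hd1.hasDerivAt hf0
  have hub : ∀ t : ℝ, 0 ≤ t → f t ≤ f 0 * (1 - t) + (deriv f 1 + f 0) * (t * (t - 1)) :=
    ub_pt f (deriv f 1) hconc hf1 hd1.hasDerivAt
  have hcond' : ∀ t : ℝ, 0 ≤ t → deriv (deriv f) 1 / 2 * (t-1)^2 ≤
      (f t - deriv f 1 * (t-1)) *
        (1 - (deriv (deriv (deriv f)) 1 / (3 * deriv (deriv f) 1))*(t-1)) :=
    cond_zero f (deriv f 1) (deriv (deriv f) 1 / 2)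
      (deriv (deriv (deriv f)) 1 / (3 * deriv (deriv f) 1)) (fun t ht => hcond t ht) hf0
  obtain ⟨hfa, hc0, hc1⟩ := c_bounds f (deriv f 1) (deriv (deriv f) 1 / 2)
    (deriv (deriv (deriv f)) 1 / (3 * deriv (deriv f) 1)) hq hcond' htan1
  -- facts about p
  have hple : ∀ x, Finset.univ.inf' Finset.univ_nonempty PX ≤ PX x :=
    fun x => Finset.inf'_le _ (Finset.mem_univ x)
  have hppos : 0 < Finset.univ.inf' Finset.univ_nonempty PX := by
    obtain ⟨x0, _, hx0⟩ := Finset.exists_mem_eq_inf' Finset.univ_nonempty PX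
    rw [hx0]; exact hPXpos x0
  have hp2 : 2 * Finset.univ.inf' Finset.univ_nonempty PX ≤ 1 := by
    have hnt : Nontrivial 𝒳 := Fintype.one_lt_card_iff_nontrivial.mp (by omega)
    obtain ⟨a, b, hab⟩ := exists_pair_ne 𝒳
    have h1 : PX a + PX b ≤ 1 := by
      rw [← hPX1, ← Finset.sum_pair hab]
      exact Finset.sum_le_sum_of_subset_of_nonneg (Finset.subset_univ _)
        (fun i _ _ => hPX0 i)
    linarith [hple a, hple b]
  -- convexity on Ici
  have hconvI : ConvexOn ℝ (Set.Ici (0:ℝ)) f := convexOn_Ici f hconv hf0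
  have hWPXpmf : IsPmf (chanApply W PX) := chan_pmf ⟨hW0, hW1⟩ ⟨hPX0, hPX1⟩
  -- quadratic
  have hsqconv : ConvexOn ℝ (Set.Ici (0:ℝ)) (fun t : ℝ => (t-1)^2) := by
    refine ⟨convex_Ici 0, ?_⟩
    intro x _ y _ a b ha hb hab
    simp only [smul_eq_mul]
    have hb' : b = 1 - a := by linarith
    subst hb'
    nlinarith [sq_nonneg (x - y), mul_nonneg ha hb, mul_nonneg (mul_nonneg ha hb) (sq_nonneg (x - y))]
  -- bounded sets
  have hbddF : BddAbove {r : ℝ | ∃ R : 𝒳 → ℝ, IsPmf R ∧ 0 < fDiv f R PX ∧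
      r = fDiv f (chanApply W R) (chanApply W PX) / fDiv f R PX} := by
    refine ⟨1, fun r hr => ?_⟩
    obtain ⟨R, hR, hpos, rfl⟩ := hr
    rw [div_le_one hpos]
    exact dpi f hconvI PX R W hPXpos hR.1 hW0 hW1 hPY
  have hbddChi : BddAbove {r : ℝ | ∃ R : 𝒳 → ℝ, IsPmf R ∧ 0 < chiSq R PX ∧
      r = chiSq (chanApply W R) (chanApply W PX) / chiSq R PX} := by
    refine ⟨1, fun r hr => ?_⟩
    obtain ⟨R, hR, hpos, rfl⟩ := hr
    rw [div_le_one hpos]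
    rw [← chi_eq_fdiv (chanApply W R) (chanApply W PX) hPY, ← chi_eq_fdiv R PX hPXpos]
    exact dpi _ hsqconv PX R W hPXpos hR.1 hW0 hW1 hPY
  have hetaFnn : 0 ≤ etaF f PX W := by
    apply Real.sSup_nonneg
    rintro r ⟨R, hR, hpos, rfl⟩
    have hWR := chan_pmf (W := W) ⟨hW0, hW1⟩ hR
    exact div_nonneg (fdiv_nonneg f (deriv f 1) htan1 hPY hWR.1 hWPXpmf.2 hWR.2) hpos.le
  have hetaChinn : 0 ≤ etaChi PX W := by
    apply Real.sSup_nonneg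
    rintro r ⟨R, hR, hpos, rfl⟩
    exact div_nonneg (chiSq_nonneg hPY) hpos.le
  constructor
  · -- first inequality
    apply Real.sSup_le ?_ hetaFnn
    rintro r ⟨R, hR, hchipos, rfl⟩
    have hne : R ≠ PX := by
      rintro rfl
      have : chiSq R R = 0 := by
        unfold chiSq; apply Finset.sum_eq_zero; intro x _; simp
      rw [this] at hchipos; exact lt_irrefl _ hchipos
    have hWR := chan_pmf (W := W) ⟨hW0, hW1⟩ hR
    have hlim1 := fdivlim f hf1 hd1 hd2 hf2pos PX R hPXpos hPX1 hR.2
    have hlim2 := fdivlim f hf1 hd1 hd2 hf2pos (chanApply W PX) (chanApply W R)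
      hPY hWPXpmf.2 hWR.2
    have hdenne : deriv (deriv f) 1 / 2 * chiSq R PX ≠ 0 :=
      (mul_pos hq hchipos).ne'
    have hdiv := hlim2.div hlim1 hdenne
    have hval : deriv (deriv f) 1 / 2 * chiSq (chanApply W R) (chanApply W PX) /
        (deriv (deriv f) 1 / 2 * chiSq R PX)
        = chiSq (chanApply W R) (chanApply W PX) / chiSq R PX :=
      mul_div_mul_left _ _ (by linarith : deriv (deriv f) 1 / 2 ≠ 0)
    rw [hval] at hdiv
    apply le_of_tendsto hdiv
    filter_upwards [Ioo_mem_nhdsGT one_pos] with ε hε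
    obtain ⟨hε0, hε1⟩ := hε
    have hRεpmf : IsPmf (fun x => PX x + ε*(R x - PX x)) := by
      constructor
      · intro x
        have h1 := hPX0 x; have h2 := hR.1 x
        show (0:ℝ) ≤ PX x + ε * (R x - PX x)
        nlinarith [mul_nonneg hε0.le h2, mul_nonneg (by linarith : (0:ℝ) ≤ 1 - ε) h1]
      · have h : ∀ x ∈ Finset.univ, PX x + ε*(R x - PX x)
            = PX x + ε * (R x - PX x) := fun x _ => rfl
        rw [Finset.sum_add_distrib, ← Finset.mul_sum, sum_sub_zero hPX1 hR.2,
          mul_zero, add_zero, hPX1]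
    have hRεne : (fun x => PX x + ε*(R x - PX x)) ≠ PX := by
      intro hcontra
      obtain ⟨x0, hx0⟩ : ∃ x, R x ≠ PX x := by
        by_contra h2; push_neg at h2; exact hne (funext h2)
      have := congrFun hcontra x0
      have : ε * (R x0 - PX x0) = 0 := by linarith
      rcases mul_eq_zero.1 this with h | h
      · exact hε0.ne' h
      · exact hx0 (by linarith)
    have hpos : 0 < fDiv f (fun x => PX x + ε*(R x - PX x)) PX :=
      fdiv_pos f (deriv f 1) (deriv (deriv f) 1 / 2)
        (deriv (deriv (deriv f)) 1 / (3 * deriv (deriv f) 1)) hq hcond' hc0 hc1 htan1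
        hPXpos hRεpmf.1 hPX1 hRεpmf.2 hRεne
    have hmem : fDiv f (chanApply W (fun x => PX x + ε*(R x - PX x))) (chanApply W PX)
        / fDiv f (fun x => PX x + ε*(R x - PX x)) PX ∈
        {r : ℝ | ∃ R : 𝒳 → ℝ, IsPmf R ∧ 0 < fDiv f R PX ∧
          r = fDiv f (chanApply W R) (chanApply W PX) / fDiv f R PX} :=
      ⟨_, hRεpmf, hpos, rfl⟩
    have hle := le_csSup hbddF hmem
    have heq : fDiv f (fun y => chanApply W PX y
          + ε*(chanApply W R y - chanApply W PX y)) (chanApply W PX) / ε^2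
        / (fDiv f (fun x => PX x + ε*(R x - PX x)) PX / ε^2)
        = fDiv f (chanApply W (fun x => PX x + ε*(R x - PX x))) (chanApply W PX)
          / fDiv f (fun x => PX x + ε*(R x - PX x)) PX := by
      rw [chan_mix W PX R ε, div_div_div_comm, div_self (pow_ne_zero 2 hε0.ne'), div_one]
    simp only [Pi.div_apply]
    rw [heq]
    exact hle
  · -- second inequality
    have hC : (0:ℝ) ≤ (deriv f 1 + f 0) /
        (deriv (deriv f) 1 * Finset.univ.inf' Finset.univ_nonempty PX) := by
      apply div_nonneg (by linarith)
      exact (mul_pos hf2pos hppos).le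
    apply Real.sSup_le ?_ (mul_nonneg hC hetaChinn)
    rintro r ⟨R, hR, hpos, rfl⟩
    have hne : R ≠ PX := by
      rintro rfl
      rw [fdiv_self f hf1 R hPXpos] at hpos
      exact lt_irrefl _ hpos
    have hchipos : 0 < chiSq R PX := chiSq_pos hPXpos hne
    have hWR := chan_pmf (W := W) ⟨hW0, hW1⟩ hR
    have hnum : fDiv f (chanApply W R) (chanApply W PX)
        ≤ (deriv f 1 + f 0) * chiSq (chanApply W R) (chanApply W PX) :=
      fdiv_ub f (deriv f 1) hub hPY hWR.1 hWPXpmf.2 hWR.2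
    have hden := fdiv_lb f (deriv f 1) (deriv (deriv f) 1 / 2)
      (deriv (deriv (deriv f)) 1 / (3 * deriv (deriv f) 1)) hq hcond' hc0 hc1
      hPXpos hR.1 hPX1 hR.2 hple hppos hp2
    have hden' : deriv (deriv f) 1 * Finset.univ.inf' Finset.univ_nonempty PX * chiSq R PX
        ≤ fDiv f R PX := by
      have heq2 : 2 * (deriv (deriv f) 1 / 2) * Finset.univ.inf' Finset.univ_nonempty PX
          * chiSq R PX = deriv (deriv f) 1 * Finset.univ.inf' Finset.univ_nonempty PX
          * chiSq R PX := by ring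
      linarith [hden, heq2.le, heq2.ge]
    have hdenpos : 0 < deriv (deriv f) 1 * Finset.univ.inf' Finset.univ_nonempty PX
        * chiSq R PX := by
      apply mul_pos (mul_pos hf2pos hppos) hchipos
    have hr1 : fDiv f (chanApply W R) (chanApply W PX) / fDiv f R PX
        ≤ ((deriv f 1 + f 0) * chiSq (chanApply W R) (chanApply W PX)) /
          (deriv (deriv f) 1 * Finset.univ.inf' Finset.univ_nonempty PX * chiSq R PX) :=
      div_le_div₀ (mul_nonneg (by linarith) (chiSq_nonneg hPY)) hnum hdenpos hden'
    have hr2 : ((deriv f 1 + f 0) * chiSq (chanApply W R) (chanApply W PX)) /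
          (deriv (deriv f) 1 * Finset.univ.inf' Finset.univ_nonempty PX * chiSq R PX)
        = (deriv f 1 + f 0) /
          (deriv (deriv f) 1 * Finset.univ.inf' Finset.univ_nonempty PX) *
          (chiSq (chanApply W R) (chanApply W PX) / chiSq R PX) := by
      rw [div_mul_div_comm]
    have hr3 : chiSq (chanApply W R) (chanApply W PX) / chiSq R PX ≤ etaChi PX W :=
      le_csSup hbddChi ⟨R, hR, hchipos, rfl⟩
    calc fDiv f (chanApply W R) (chanApply W PX) / fDiv f R PX
        ≤ _ := hr1
    _ = _ := hr2
    _ ≤ _ := mul_le_mul_of_nonneg_left hr3 hC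
end

section
/- (KL divergence lower bound.) Let P be a pmf on 𝒳 with P(x)>0 for all x, and let R be a pmf on 𝒳 with R ≠ P. Let J(x)=R(x)−P(x). Then D(R||P) ≥ χ²(R||P) · ‖J‖₁ / ( 2 · max_{x∈𝒳} |J(x)/P(x)| ), where ‖J‖₁ = Σ_x |J(x)|. -/
open Real

private noncomputable def Ffun (t : ℝ) : ℝ :=
  t * Real.log t - t + 1 - 3*(t-1)^2/(2*(t+2))

private noncomputable def Gfun (t : ℝ) : ℝ :=
  Real.log t - 3*(t-1)*(t+5)/(2*(t+2)^2)

private lemma hasDerivAt_Ffun {t : ℝ} (ht : 0 < t) : HasDerivAt Ffun (Gfun t) t := by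
  have h2 : (2*(t+2)) ≠ 0 := by positivity
  have h1 : HasDerivAt (fun t : ℝ => t * Real.log t) (Real.log t + 1) t :=
    Real.hasDerivAt_mul_log ht.ne'
  have hnum : HasDerivAt (fun t : ℝ => 3*(t-1)^2) (3*(2*(t-1)^1*1)) t :=
    (((hasDerivAt_id t).sub_const 1).pow 2).const_mul 3
  have hden : HasDerivAt (fun t : ℝ => 2*(t+2)) (2*1) t :=
    ((hasDerivAt_id t).add_const 2).const_mul 2
  have h3 := hnum.div hden h2
  have h := ((h1.sub (hasDerivAt_id t)).add_const 1).sub h3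
  refine h.congr_deriv ?_
  unfold Gfun
  field_simp
  ring

private lemma hasDerivAt_Gfun {t : ℝ} (ht : 0 < t) :
    HasDerivAt Gfun (t⁻¹ - 27/(t+2)^3) t := by
  have h2 : (2*(t+2)^2) ≠ 0 := by positivity
  have h1 : HasDerivAt Real.log t⁻¹ t := Real.hasDerivAt_log ht.ne'
  have hnum : HasDerivAt (fun t : ℝ => 3*(t-1)*(t+5))
      (3*1*(t+5) + 3*(t-1)*1) t :=
    (((hasDerivAt_id t).sub_const 1).const_mul 3).mul ((hasDerivAt_id t).add_const 5)
  have hden : HasDerivAt (fun t : ℝ => 2*(t+2)^2) (2*(2*(t+2)^1*1)) t :=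
    (((hasDerivAt_id t).add_const 2).pow 2).const_mul 2
  have h3 := hnum.div hden h2
  have h := h1.sub h3
  refine h.congr_deriv ?_
  have h4 : t + 2 ≠ 0 := by positivity
  field_simp
  ring

private lemma Gfun_mono : MonotoneOn Gfun (Set.Ioi 0) := by
  apply monotoneOn_of_deriv_nonneg (convex_Ioi 0)
  · exact fun t ht => ((hasDerivAt_Gfun ht).differentiableAt.continuousAt).continuousWithinAt
  · intro t ht
    rw [interior_Ioi] at ht
    exact (hasDerivAt_Gfun ht).differentiableAt.differentiableWithinAt
  · intro t ht
    rw [interior_Ioi] at ht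
    have ht' : (0:ℝ) < t := ht
    have hne1 : t ≠ 0 := ht'.ne'
    have hne2 : t + 2 ≠ 0 := by positivity
    rw [(hasDerivAt_Gfun ht').deriv]
    have key : t⁻¹ - 27/(t+2)^3 = ((t+2)^3 - 27*t)/(t*(t+2)^3) := by
      field_simp
    rw [key]
    apply div_nonneg
    · nlinarith [mul_nonneg (sq_nonneg (t-1)) (by linarith : (0:ℝ) ≤ t + 8), ht'.le]
    · positivity

private lemma Gfun_one : Gfun 1 = 0 := by
  unfold Gfun; simp

private lemma Ffun_one : Ffun 1 = 0 := by
  unfold Ffun; norm_num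

private lemma Ffun_nonneg {t : ℝ} (ht : 0 < t) : 0 ≤ Ffun t := by
  rcases le_total t 1 with h | h
  · have hmono : AntitoneOn Ffun (Set.Ioc 0 1) := by
      apply antitoneOn_of_deriv_nonpos (convex_Ioc 0 1)
      · exact fun s hs =>
          ((hasDerivAt_Ffun hs.1).differentiableAt.continuousAt).continuousWithinAt
      · intro s hs
        rw [interior_Ioc] at hs
        exact (hasDerivAt_Ffun hs.1).differentiableAt.differentiableWithinAt
      · intro s hs
        rw [interior_Ioc] at hs
        rw [(hasDerivAt_Ffun hs.1).deriv]
        have := Gfun_mono (Set.mem_Ioi.mpr hs.1) (Set.mem_Ioi.mpr one_pos) hs.2.le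
        rw [Gfun_one] at this
        exact this
    have := hmono (Set.mem_Ioc.mpr ⟨ht, h⟩) (Set.mem_Ioc.mpr ⟨one_pos, le_refl 1⟩) h
    rwa [Ffun_one] at this
  · have hmono : MonotoneOn Ffun (Set.Ici 1) := by
      apply monotoneOn_of_deriv_nonneg (convex_Ici 1)
      · exact fun s hs =>
          ((hasDerivAt_Ffun (lt_of_lt_of_le one_pos hs)).differentiableAt.continuousAt).continuousWithinAt
      · intro s hs
        rw [interior_Ici] at hs
        exact (hasDerivAt_Ffun (lt_trans one_pos hs)).differentiableAt.differentiableWithinAt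
      · intro s hs
        rw [interior_Ici] at hs
        rw [(hasDerivAt_Ffun (lt_trans one_pos hs)).deriv]
        have := Gfun_mono (Set.mem_Ioi.mpr one_pos) (Set.mem_Ioi.mpr (lt_trans one_pos hs)) hs.le
        rw [Gfun_one] at this
        exact this
    have := hmono (Set.mem_Ici.mpr (le_refl 1)) (Set.mem_Ici.mpr h) h
    rwa [Ffun_one] at this

private lemma pointwise_bound {a b : ℝ} (ha : 0 ≤ a) (hb : 0 < b) :
    3*(a-b)^2/(2*(a+2*b)) ≤ a * Real.log (a/b) - (a - b) := by
  rcases eq_or_lt_of_le ha with h | h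
  · have he : 3*(a-b)^2/(2*(a+2*b)) = 3*b/4 := by
      rw [← h]; field_simp; ring
    rw [he, ← h]
    simp
    linarith
  · have ht : 0 < a / b := div_pos h hb
    have key := Ffun_nonneg ht
    unfold Ffun at key
    have hab : 0 < a + 2*b := by linarith
    have hid : b * ((a/b) * Real.log (a/b) - (a/b) + 1 - 3*((a/b)-1)^2/(2*((a/b)+2)))
        = a * Real.log (a/b) - (a - b) - 3*(a-b)^2/(2*(a+2*b)) := by
      field_simp
      ring
    nlinarith [mul_nonneg hb.le key]
/-- **Lemma 1 (KL Divergence Lower Bound).**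
For distinct pmfs `P > 0` and `R`, with `J = R − P`,
`D(R‖P) ≥ χ²(R‖P) ⬝ ‖J‖₁ / (2 maxₓ |J(x)/P(x)|)`. -/
theorem kl_divergence_lower_bound
    {𝒳 : Type*} [Fintype 𝒳] [Nonempty 𝒳] (hcard : 2 ≤ Fintype.card 𝒳)
    (P R : 𝒳 → ℝ) (hP : IsPmf P) (hPpos : ∀ x, 0 < P x)
    (hR : IsPmf R) (hne : R ≠ P) :
    chiSq R P * (∑ x, |R x - P x|) /
        (2 * Finset.univ.sup' Finset.univ_nonempty (fun x => |(R x - P x) / P x|))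
      ≤ klDiv R P := by
  set M : ℝ := Finset.univ.sup' Finset.univ_nonempty (fun x => |(R x - P x) / P x|) with hM
  set L : ℝ := ∑ x, |R x - P x| with hL
  -- M > 0
  have hM0 : 0 < M := by
    obtain ⟨x, hx⟩ := Function.ne_iff.mp hne
    have h1 : 0 < |(R x - P x) / P x| := by
      apply abs_pos.mpr
      exact div_ne_zero (sub_ne_zero.mpr hx) (hPpos x).ne'
    exact lt_of_lt_of_le h1 (Finset.le_sup' (fun x => |(R x - P x) / P x|) (Finset.mem_univ x))
  have hL0 : 0 ≤ L := Finset.sum_nonneg fun x _ => abs_nonneg _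
  -- χ² ≤ M * L
  have hchi : chiSq R P ≤ M * L := by
    unfold chiSq
    rw [hL, Finset.mul_sum]
    apply Finset.sum_le_sum
    intro x _
    have h1 : (R x - P x)^2 / P x = |(R x - P x) / P x| * |R x - P x| := by
      rw [abs_div, abs_of_pos (hPpos x), div_mul_eq_mul_div, ← sq, sq_abs]
    rw [h1]
    exact mul_le_mul_of_nonneg_right (Finset.le_sup' (fun x => |(R x - P x) / P x|) (Finset.mem_univ x)) (abs_nonneg _)
  -- Pinsker: L^2/2 ≤ klDiv
  have hsumJ : ∑ x, (R x - P x) = (0:ℝ) := by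
    rw [Finset.sum_sub_distrib, hR.2, hP.2]; ring
  have hpinsker : L^2 / 2 ≤ klDiv R P := by
    have hg : ∀ x ∈ Finset.univ, (0:ℝ) < (2/3) * (R x + 2 * P x) := by
      intro x _
      have := hR.1 x; have := hPpos x
      positivity
    have hcs := Finset.sq_sum_div_le_sum_sq_div Finset.univ
      (fun x => |R x - P x|) hg
    have hsg : ∑ x, (2/3 : ℝ) * (R x + 2 * P x) = 2 := by
      rw [← Finset.mul_sum, Finset.sum_add_distrib, hR.2, ← Finset.mul_sum, hP.2]
      norm_num
    rw [hsg] at hcs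
    have he : ∑ x, |R x - P x|^2 / ((2/3 : ℝ) * (R x + 2 * P x))
        = ∑ x, 3 * (R x - P x)^2 / (2 * (R x + 2 * P x)) := by
      apply Finset.sum_congr rfl
      intro x _
      have h0 : R x + 2 * P x ≠ 0 := by
        have := hR.1 x; have := hPpos x; positivity
      rw [sq_abs]
      field_simp
    rw [he] at hcs
    have hpt : ∑ x, 3 * (R x - P x)^2 / (2 * (R x + 2 * P x))
        ≤ ∑ x, (R x * Real.log (R x / P x) - (R x - P x)) :=
      Finset.sum_le_sum fun x _ => pointwise_bound (hR.1 x) (hPpos x)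
    have hkl : ∑ x, (R x * Real.log (R x / P x) - (R x - P x)) = klDiv R P := by
      rw [Finset.sum_sub_distrib, hsumJ, klDiv]; ring
    calc L^2 / 2 ≤ ∑ x, 3 * (R x - P x)^2 / (2 * (R x + 2 * P x)) := hcs
      _ ≤ ∑ x, (R x * Real.log (R x / P x) - (R x - P x)) := hpt
      _ = klDiv R P := hkl
  -- combine
  have hfinal : chiSq R P * L / (2 * M) ≤ L^2 / 2 := by
    rw [div_le_div_iff₀ (by positivity) (by norm_num : (0:ℝ) < 2)]
    have h1 : chiSq R P * L ≤ M * L * L :=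
      mul_le_mul_of_nonneg_right hchi hL0
    nlinarith
  exact hfinal.trans hpinsker
end
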